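/- arXiv:1805.03185 — 9 statements merged into one kernel-verified Lean document; each statement's English description precedes it below -/
import Mathlib

section
/- Let X and Y be Polish spaces, μ a Borel probability measure on X, ν a Borel probability measure on Y, and P, P_n couplings of (μ, ν) (i.e., Borel probability measures on X × Y with marginals μ and ν) such that P_n converges weakly to P. Then for any bounded measurable functions f : X → ℝ and g : Y → ℝ, ∫ f(x)g(y) dP_n(x,y) → ∫ f(x)g(y) dP(x,y). -/
open MeasureTheory Filter Topology

/-- Bounded measurable functions are integrable w.r.t. a probability measure. -/
lemma integrable_of_abs_le {α : Type*} [MeasurableSpace α] (Q : Measure α)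
    [IsProbabilityMeasure Q] {h : α → ℝ} {C : ℝ} (hm : Measurable h)
    (hb : ∀ a, |h a| ≤ C) : Integrable h Q :=
  (integrable_const C).mono' hm.aestronglyMeasurable
    (Filter.Eventually.of_forall fun a => by simpa [Real.norm_eq_abs] using hb a)

/-- Key estimate: for a coupling `Q` of `(μ, ν)`, the integrals of `f(x)g(y)` and
`f'(x)g'(y)` differ by at most `Cg ∫|f-f'| dμ + Cf ∫|g-g'| dν`. -/
lemma coupling_product_estimate {X Y : Type*} [MeasurableSpace X] [MeasurableSpace Y]
    (Q : Measure (X × Y)) [IsProbabilityMeasure Q]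
    (μ : Measure X) (ν : Measure Y)
    (h1 : Q.map Prod.fst = μ) (h2 : Q.map Prod.snd = ν)
    (f f' : X → ℝ) (g g' : Y → ℝ)
    (hf : Measurable f) (hf' : Measurable f') (hg : Measurable g) (hg' : Measurable g')
    (Cf Cg : ℝ) (hCf0 : 0 ≤ Cf) (hCg0 : 0 ≤ Cg)
    (hbf : ∀ x, |f x| ≤ Cf) (hbf' : ∀ x, |f' x| ≤ Cf)
    (hbg : ∀ y, |g y| ≤ Cg) (hbg' : ∀ y, |g' y| ≤ Cg) :
    |∫ z, f z.1 * g z.2 ∂Q - ∫ z, f' z.1 * g' z.2 ∂Q|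
      ≤ Cg * ∫ x, |f x - f' x| ∂μ + Cf * ∫ y, |g y - g' y| ∂ν := by
  have prodbound : ∀ (u u' : X → ℝ) (v v' : Y → ℝ), (∀ x, |u' x| ≤ Cf) → (∀ y, |v y| ≤ Cg) →
      ∀ z : X × Y, |u z.1 * v z.2 - u' z.1 * v' z.2|
        ≤ Cg * |u z.1 - u' z.1| + Cf * |v z.2 - v' z.2| := by
    intro u u' v v' hu' hv z
    have : u z.1 * v z.2 - u' z.1 * v' z.2
        = (u z.1 - u' z.1) * v z.2 + u' z.1 * (v z.2 - v' z.2) := by ring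
    rw [this]
    calc |(u z.1 - u' z.1) * v z.2 + u' z.1 * (v z.2 - v' z.2)|
        ≤ |(u z.1 - u' z.1) * v z.2| + |u' z.1 * (v z.2 - v' z.2)| := abs_add_le _ _
      _ ≤ Cg * |u z.1 - u' z.1| + Cf * |v z.2 - v' z.2| := by
          rw [abs_mul, abs_mul]
          refine add_le_add ?_ (mul_le_mul_of_nonneg_right (hu' _) (abs_nonneg _))
          rw [mul_comm]
          exact mul_le_mul_of_nonneg_right (hv _) (abs_nonneg _)
  have mfg : Measurable fun z : X × Y => f z.1 * g z.2 :=
    (hf.comp measurable_fst).mul (hg.comp measurable_snd)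
  have mfg' : Measurable fun z : X × Y => f' z.1 * g' z.2 :=
    (hf'.comp measurable_fst).mul (hg'.comp measurable_snd)
  have ifg : Integrable (fun z : X × Y => f z.1 * g z.2) Q :=
    integrable_of_abs_le Q mfg fun z => by
      rw [abs_mul]; exact mul_le_mul (hbf _) (hbg _) (abs_nonneg _) hCf0
  have ifg' : Integrable (fun z : X × Y => f' z.1 * g' z.2) Q :=
    integrable_of_abs_le Q mfg' fun z => by
      rw [abs_mul]; exact mul_le_mul (hbf' _) (hbg' _) (abs_nonneg _) hCf0
  have iF : Integrable (fun z : X × Y => |f z.1 - f' z.1|) Q :=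
    integrable_of_abs_le Q ((hf.comp measurable_fst).sub (hf'.comp measurable_fst)).abs
      fun z => by
        rw [abs_abs]
        calc |f z.1 - f' z.1| ≤ |f z.1| + |f' z.1| := abs_sub _ _
          _ ≤ Cf + Cf := add_le_add (hbf _) (hbf' _)
  have iG : Integrable (fun z : X × Y => |g z.2 - g' z.2|) Q :=
    integrable_of_abs_le Q ((hg.comp measurable_snd).sub (hg'.comp measurable_snd)).abs
      fun z => by
        rw [abs_abs]
        calc |g z.2 - g' z.2| ≤ |g z.2| + |g' z.2| := abs_sub _ _
          _ ≤ Cg + Cg := add_le_add (hbg _) (hbg' _)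
  rw [← integral_sub ifg ifg']
  calc |∫ z, (f z.1 * g z.2 - f' z.1 * g' z.2) ∂Q|
      ≤ ∫ z, |f z.1 * g z.2 - f' z.1 * g' z.2| ∂Q := by
        simpa [Real.norm_eq_abs] using
          norm_integral_le_integral_norm (fun z : X × Y => f z.1 * g z.2 - f' z.1 * g' z.2) (μ := Q)
    _ ≤ ∫ z, (Cg * |f z.1 - f' z.1| + Cf * |g z.2 - g' z.2|) ∂Q := by
        apply integral_mono (ifg.sub ifg').abs ((iF.const_mul Cg).add (iG.const_mul Cf))
        intro z
        exact prodbound f f' g g' hbf' hbg z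
    _ = Cg * ∫ z, |f z.1 - f' z.1| ∂Q + Cf * ∫ z, |g z.2 - g' z.2| ∂Q := by
        rw [integral_add (iF.const_mul Cg) (iG.const_mul Cf), integral_const_mul, integral_const_mul]
    _ = Cg * ∫ x, |f x - f' x| ∂μ + Cf * ∫ y, |g y - g' y| ∂ν := by
        rw [← h1, ← h2,
          integral_map measurable_fst.aemeasurable (f := fun x => |f x - f' x|) (hf.sub hf').abs.aestronglyMeasurable,
          integral_map measurable_snd.aemeasurable (f := fun y => |g y - g' y|) (hg.sub hg').abs.aestronglyMeasurable]

/-- Clamping to `[-C, C]` is 1-Lipschitz. -/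
lemma abs_clamp_sub_clamp_le (C a b : ℝ) :
    |max (-C) (min C a) - max (-C) (min C b)| ≤ |a - b| := by
  calc |max (-C) (min C a) - max (-C) (min C b)|
      = |max (min C a) (-C) - max (min C b) (-C)| := by rw [max_comm, max_comm (-C)]
    _ ≤ |min C a - min C b| := abs_max_sub_max_le_abs _ _ _
    _ ≤ max |C - C| |a - b| := abs_min_sub_min_le_max _ _ _ _
    _ = |a - b| := by simp

/-- Lemma 2.5: for couplings of `(μ, ν)` converging weakly, integrals of products
`f(x) g(y)` of bounded measurable functions converge. -/
theorem stmt1 {X Y : Type*}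
    [TopologicalSpace X] [PolishSpace X] [MeasurableSpace X] [BorelSpace X]
    [TopologicalSpace Y] [PolishSpace Y] [MeasurableSpace Y] [BorelSpace Y]
    (μ : ProbabilityMeasure X) (ν : ProbabilityMeasure Y)
    (P : ProbabilityMeasure (X × Y)) (Pn : ℕ → ProbabilityMeasure (X × Y))
    (hP1 : (P : Measure (X × Y)).map Prod.fst = (μ : Measure X))
    (hP2 : (P : Measure (X × Y)).map Prod.snd = (ν : Measure Y))
    (hPn1 : ∀ n, ((Pn n : Measure (X × Y))).map Prod.fst = (μ : Measure X))
    (hPn2 : ∀ n, ((Pn n : Measure (X × Y))).map Prod.snd = (ν : Measure Y))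
    (hconv : Tendsto Pn atTop (𝓝 P))
    (f : X → ℝ) (g : Y → ℝ)
    (hf : Measurable f) (hfb : ∃ C, ∀ x, |f x| ≤ C)
    (hg : Measurable g) (hgb : ∃ C, ∀ y, |g y| ≤ C) :
    Tendsto (fun n => ∫ z, f z.1 * g z.2 ∂(Pn n : Measure (X × Y))) atTop
      (𝓝 (∫ z, f z.1 * g z.2 ∂(P : Measure (X × Y)))) := by
  obtain ⟨Cf₀, hCf₀⟩ := hfb
  obtain ⟨Cg₀, hCg₀⟩ := hgb
  set Cf : ℝ := max Cf₀ 0 with hCfdef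
  set Cg : ℝ := max Cg₀ 0 with hCgdef
  have hCf0 : 0 ≤ Cf := le_max_right _ _
  have hCg0 : 0 ≤ Cg := le_max_right _ _
  have hbf : ∀ x, |f x| ≤ Cf := fun x => (hCf₀ x).trans (le_max_left _ _)
  have hbg : ∀ y, |g y| ≤ Cg := fun y => (hCg₀ y).trans (le_max_left _ _)
  rw [Metric.tendsto_atTop]
  intro ε hε
  -- approximate f and g in L¹ by bounded continuous functions
  have hμint : Integrable f (μ : Measure X) := integrable_of_abs_le _ hf hbf
  have hνint : Integrable g (ν : Measure Y) := integrable_of_abs_le _ hg hbg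
  set δf : ℝ := ε / (8 * (Cg + 1)) with hδf
  set δg : ℝ := ε / (8 * (Cf + 1)) with hδg
  have hδfpos : 0 < δf := by positivity
  have hδgpos : 0 < δg := by positivity
  haveI : NormalSpace X := by letI := TopologicalSpace.upgradeIsCompletelyMetrizable X; infer_instance
  haveI : NormalSpace Y := by letI := TopologicalSpace.upgradeIsCompletelyMetrizable Y; infer_instance
  obtain ⟨f', hf'cl, -⟩ := hμint.exists_boundedContinuous_integral_sub_le hδfpos
  obtain ⟨g', hg'cl, -⟩ := hνint.exists_boundedContinuous_integral_sub_le hδgpos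
  -- clamp the approximations
  set F : X → ℝ := fun x => max (-Cf) (min Cf (f' x)) with hFdef
  set G : Y → ℝ := fun y => max (-Cg) (min Cg (g' y)) with hGdef
  have hFcont : Continuous F := continuous_const.max (continuous_const.min f'.continuous)
  have hGcont : Continuous G := continuous_const.max (continuous_const.min g'.continuous)
  have hbF : ∀ x, |F x| ≤ Cf := by
    intro x
    rw [abs_le]
    constructor
    · exact le_max_left _ _
    · exact max_le (neg_le_self hCf0) (min_le_left _ _)
  have hbG : ∀ y, |G y| ≤ Cg := by
    intro y
    rw [abs_le]
    constructor
    · exact le_max_left _ _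
    · exact max_le (neg_le_self hCg0) (min_le_left _ _)
  have hFclose : ∀ x, |f x - F x| ≤ |f x - f' x| := by
    intro x
    have hx := abs_le.mp (hbf x)
    have hfx : max (-Cf) (min Cf (f x)) = f x := by
      rw [min_eq_right hx.2, max_eq_right hx.1]
    calc |f x - F x| = |max (-Cf) (min Cf (f x)) - max (-Cf) (min Cf (f' x))| := by rw [hfx]
      _ ≤ |f x - f' x| := abs_clamp_sub_clamp_le _ _ _
  have hGclose : ∀ y, |g y - G y| ≤ |g y - g' y| := by
    intro y
    have hy := abs_le.mp (hbg y)
    have hgy : max (-Cg) (min Cg (g y)) = g y := by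
      rw [min_eq_right hy.2, max_eq_right hy.1]
    calc |g y - G y| = |max (-Cg) (min Cg (g y)) - max (-Cg) (min Cg (g' y))| := by rw [hgy]
      _ ≤ |g y - g' y| := abs_clamp_sub_clamp_le _ _ _
  -- L¹ distances
  have hFint : Integrable (fun x => |f x - F x|) (μ : Measure X) :=
    integrable_of_abs_le _ (hf.sub hFcont.measurable).abs fun x => by
      rw [abs_abs]
      calc |f x - F x| ≤ |f x| + |F x| := abs_sub _ _
        _ ≤ Cf + Cf := add_le_add (hbf x) (hbF x)
  have hGint : Integrable (fun y => |g y - G y|) (ν : Measure Y) :=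
    integrable_of_abs_le _ (hg.sub hGcont.measurable).abs fun y => by
      rw [abs_abs]
      calc |g y - G y| ≤ |g y| + |G y| := abs_sub _ _
        _ ≤ Cg + Cg := add_le_add (hbg y) (hbG y)
  have hf'int : Integrable (fun x => |f x - f' x|) (μ : Measure X) :=
    integrable_of_abs_le _ (hf.sub f'.continuous.measurable).abs fun x => by
      rw [abs_abs]
      calc |f x - f' x| ≤ |f x| + |f' x| := abs_sub _ _
        _ ≤ Cf + ‖f'‖ := add_le_add (hbf x) (by simpa using f'.norm_coe_le_norm x)
  have hg'int : Integrable (fun y => |g y - g' y|) (ν : Measure Y) :=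
    integrable_of_abs_le _ (hg.sub g'.continuous.measurable).abs fun y => by
      rw [abs_abs]
      calc |g y - g' y| ≤ |g y| + |g' y| := abs_sub _ _
        _ ≤ Cg + ‖g'‖ := add_le_add (hbg y) (by simpa using g'.norm_coe_le_norm y)
  have hFμ : ∫ x, |f x - F x| ∂(μ : Measure X) ≤ δf :=
    le_trans (integral_mono hFint hf'int fun x => hFclose x)
      (by simpa [Real.norm_eq_abs] using hf'cl)
  have hGν : ∫ y, |g y - G y| ∂(ν : Measure Y) ≤ δg :=
    le_trans (integral_mono hGint hg'int fun y => hGclose y)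
      (by simpa [Real.norm_eq_abs] using hg'cl)
  -- the estimating quantity
  have hest : Cg * ∫ x, |f x - F x| ∂(μ : Measure X)
      + Cf * ∫ y, |g y - G y| ∂(ν : Measure Y) ≤ ε / 4 := by
    have h1 : Cg * ∫ x, |f x - F x| ∂(μ : Measure X) ≤ Cg * δf := mul_le_mul_of_nonneg_left hFμ hCg0
    have h2 : Cf * ∫ y, |g y - G y| ∂(ν : Measure Y) ≤ Cf * δg := mul_le_mul_of_nonneg_left hGν hCf0
    have h3 : Cg * δf ≤ ε / 8 := by
      rw [hδf, mul_comm]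
      rw [div_mul_eq_mul_div, div_le_div_iff₀ (by positivity) (by norm_num)]
      nlinarith
    have h4 : Cf * δg ≤ ε / 8 := by
      rw [hδg, mul_comm]
      rw [div_mul_eq_mul_div, div_le_div_iff₀ (by positivity) (by norm_num)]
      nlinarith
    linarith
  -- bounded continuous product function
  set h : BoundedContinuousFunction (X × Y) ℝ :=
    BoundedContinuousFunction.ofNormedAddCommGroup (fun z => F z.1 * G z.2)
      ((hFcont.comp continuous_fst).mul (hGcont.comp continuous_snd)) (Cf * Cg)
      (fun z => by
        rw [Real.norm_eq_abs, abs_mul]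
        exact mul_le_mul (hbF _) (hbG _) (abs_nonneg _) hCf0) with hhdef
  have hconv' := MeasureTheory.ProbabilityMeasure.tendsto_iff_forall_integral_tendsto.mp hconv h
  rw [Metric.tendsto_atTop] at hconv'
  obtain ⟨N, hN⟩ := hconv' (ε / 4) (by positivity)
  refine ⟨N, fun n hn => ?_⟩
  have keyP := coupling_product_estimate (P : Measure (X × Y)) μ ν hP1 hP2
    f F g G hf hFcont.measurable hg hGcont.measurable Cf Cg hCf0 hCg0 hbf hbF hbg hbG
  have keyPn := coupling_product_estimate ((Pn n : Measure (X × Y))) μ ν (hPn1 n) (hPn2 n)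
    f F g G hf hFcont.measurable hg hGcont.measurable Cf Cg hCf0 hCg0 hbf hbF hbg hbG
  have hmid : |∫ z, F z.1 * G z.2 ∂(Pn n : Measure (X × Y))
      - ∫ z, F z.1 * G z.2 ∂(P : Measure (X × Y))| < ε / 4 := by
    have := hN n hn
    rw [Real.dist_eq] at this
    simpa [hhdef, BoundedContinuousFunction.coe_ofNormedAddCommGroup] using this
  rw [Real.dist_eq]
  calc |∫ z, f z.1 * g z.2 ∂(Pn n : Measure (X × Y))
        - ∫ z, f z.1 * g z.2 ∂(P : Measure (X × Y))|
      ≤ |∫ z, f z.1 * g z.2 ∂(Pn n : Measure (X × Y))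
          - ∫ z, F z.1 * G z.2 ∂(Pn n : Measure (X × Y))|
        + |∫ z, F z.1 * G z.2 ∂(Pn n : Measure (X × Y))
          - ∫ z, F z.1 * G z.2 ∂(P : Measure (X × Y))|
        + |∫ z, F z.1 * G z.2 ∂(P : Measure (X × Y))
          - ∫ z, f z.1 * g z.2 ∂(P : Measure (X × Y))| := by
        have t1 := abs_sub_le (∫ z, f z.1 * g z.2 ∂(Pn n : Measure (X × Y)))
          (∫ z, F z.1 * G z.2 ∂(Pn n : Measure (X × Y)))
          (∫ z, f z.1 * g z.2 ∂(P : Measure (X × Y)))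
        have t2 := abs_sub_le (∫ z, F z.1 * G z.2 ∂(Pn n : Measure (X × Y)))
          (∫ z, F z.1 * G z.2 ∂(P : Measure (X × Y)))
          (∫ z, f z.1 * g z.2 ∂(P : Measure (X × Y)))
        linarith
    _ < ε := by
        have hP' : |∫ z, F z.1 * G z.2 ∂(P : Measure (X × Y))
            - ∫ z, f z.1 * g z.2 ∂(P : Measure (X × Y))| ≤ ε / 4 := by
          rw [abs_sub_comm]
          exact keyP.trans hest
        have hPn' : |∫ z, f z.1 * g z.2 ∂(Pn n : Measure (X × Y))
            - ∫ z, F z.1 * G z.2 ∂(Pn n : Measure (X × Y))| ≤ ε / 4 :=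
          keyPn.trans hest
        linarith
end

section
/- Let X and Y be Polish spaces, μ a nonatomic Borel probability measure on X, and ν a Borel probability measure on Y. Then the set Π₀(μ,ν) of Monge couplings — measures of the form μ(dx) δ_{φ(x)}(dy) with φ : X → Y Borel measurable and μ ∘ φ⁻¹ = ν — is dense in the set Π(μ,ν) of all couplings of (μ,ν) with respect to the topology of weak convergence. -/
open MeasureTheory Filter Topology

section Stmt3AuxSection
open Set ProbabilityTheory

namespace Stmt3Aux

noncomputable def quant (ν : Measure ℝ) (t : ℝ) : ℝ :=
  if 0 < t ∧ t < 1 then sInf {x | t ≤ cdf ν x} else 0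

variable {ν : Measure ℝ} [IsProbabilityMeasure ν]

lemma quant_S_nonempty {t : ℝ} (ht1 : t < 1) : {x | t ≤ cdf ν x}.Nonempty := by
  have h := (tendsto_cdf_atTop ν).eventually (eventually_ge_nhds ht1)
  exact h.exists

lemma quant_S_bddBelow {t : ℝ} (ht : 0 < t) : BddBelow {x | t ≤ cdf ν x} := by
  obtain ⟨z, hz⟩ := ((tendsto_cdf_atBot ν).eventually (eventually_lt_nhds ht)).exists
  refine ⟨z, fun x hx => ?_⟩
  by_contra h
  push_neg at h
  exact absurd ((monotone_cdf ν (le_of_lt h)).trans_lt hz) (not_lt.mpr hx)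

lemma quant_le_iff {t x : ℝ} (ht : 0 < t) (ht1 : t < 1) :
    quant ν t ≤ x ↔ t ≤ cdf ν x := by
  rw [quant, if_pos ⟨ht, ht1⟩]
  constructor
  · intro h
    have hrc : Filter.Tendsto (cdf ν) (𝓝[>] x) (𝓝 (cdf ν x)) :=
      ((cdf ν).right_continuous x).mono Ioi_subset_Ici_self
    refine ge_of_tendsto hrc ?_
    filter_upwards [self_mem_nhdsWithin] with u hu
    obtain ⟨s, hs, hsu⟩ := exists_lt_of_csInf_lt (quant_S_nonempty ht1) (lt_of_le_of_lt h hu)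
    exact hs.trans (monotone_cdf ν hsu.le)
  · intro h
    exact csInf_le (quant_S_bddBelow ht) h

end Stmt3Aux

namespace Stmt3Aux

lemma measurable_quant (ν : Measure ℝ) [IsProbabilityMeasure ν] : Measurable (quant ν) := by
  apply measurable_of_Iic
  intro x
  have : quant ν ⁻¹' Iic x =
      (Ioo (0:ℝ) 1 ∩ {t | t ≤ cdf ν x}) ∪ ((Ioo (0:ℝ) 1)ᶜ ∩ {t : ℝ | (0:ℝ) ≤ x}) := by
    ext t
    by_cases h : 0 < t ∧ t < 1
    · simp only [mem_preimage, mem_Iic, mem_union, mem_inter_iff, mem_Ioo, mem_compl_iff,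
        mem_setOf_eq]
      rw [show (quant ν t ≤ x) ↔ (t ≤ cdf ν x) from quant_le_iff h.1 h.2]
      tauto
    · simp only [mem_preimage, mem_Iic, quant, if_neg h, mem_union, mem_inter_iff, mem_Ioo,
        mem_compl_iff, mem_setOf_eq]
      tauto
  rw [this]
  refine MeasurableSet.union (measurableSet_Ioo.inter ?_) (measurableSet_Ioo.compl.inter ?_)
  · exact measurableSet_Iic
  · by_cases h : (0:ℝ) ≤ x <;> simp [h]

lemma measurable_cdf (μ : Measure ℝ) : Measurable (cdf μ) := (cdf μ).mono.measurable

/-- Level-set lemma: for a nonatomic probability measure on ℝ, the cdf pushes it to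
the uniform distribution. -/
lemma measure_cdf_le (μ : Measure ℝ) [IsProbabilityMeasure μ] (hμ : ∀ x : ℝ, μ {x} = 0)
    {a : ℝ} (ha : 0 ≤ a) (ha1 : a < 1) :
    μ {z | cdf μ z ≤ a} = ENNReal.ofReal a := by
  set S := {z | cdf μ z ≤ a} with hS
  by_cases hne : S.Nonempty
  · have hbdd : BddAbove S := by
      obtain ⟨z, hz⟩ := ((tendsto_cdf_atTop μ).eventually (eventually_gt_nhds ha1)).exists
      refine ⟨z, fun x hx => ?_⟩
      by_contra hcon
      push_neg at hcon
      have h1 : cdf μ z ≤ cdf μ x := monotone_cdf μ hcon.le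
      have h2 : cdf μ x ≤ a := hx
      linarith
    set s := sSup S with hs
    have hIio : Iio s ⊆ S := by
      intro z hz
      obtain ⟨u, hu, hzu⟩ := exists_lt_of_lt_csSup hne hz
      exact le_trans (monotone_cdf μ hzu.le) hu
    have hIic : S ⊆ Iic s := fun x hx => le_csSup hbdd hx
    have hio_ic : μ (Iio s) = μ (Iic s) := by
      apply le_antisymm (measure_mono Iio_subset_Iic_self)
      calc μ (Iic s) = μ (Iio s ∪ {s}) := by rw [Iio_union_right]
        _ ≤ μ (Iio s) + μ {s} := measure_union_le _ _
        _ = μ (Iio s) := by rw [hμ s, add_zero]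
    have hundershoot : μ (Iio s) ≤ ENNReal.ofReal a := by
      have hUnion : Iio s = ⋃ n : ℕ, Iic (s - 1/(n+1)) := by
        ext z
        simp only [mem_Iio, mem_iUnion, mem_Iic]
        constructor
        · intro hz
          obtain ⟨n, hn⟩ := exists_nat_one_div_lt (sub_pos.mpr hz)
          exact ⟨n, by linarith⟩
        · rintro ⟨n, hn⟩
          have : (0:ℝ) < 1/(n+1) := by positivity
          linarith
      rw [hUnion]
      rw [Directed.measure_iUnion (by
        apply Monotone.directed_le
        intro m n hmn
        apply Iic_subset_Iic.mpr
        have : (1:ℝ)/(n+1) ≤ 1/(m+1) := by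
          apply one_div_le_one_div_of_le (by positivity)
          exact_mod_cast by omega
        linarith)]
      refine iSup_le fun n => ?_
      have hmem : s - 1/(n+1) ∈ S := hIio (by simp only [mem_Iio]; nlinarith [show (0:ℝ) < 1/((n:ℝ)+1) by positivity])
      rw [← ofReal_cdf μ]
      exact ENNReal.ofReal_le_ofReal hmem
    have hovershoot : ENNReal.ofReal a ≤ μ (Iic s) := by
      rw [← ofReal_cdf μ]
      apply ENNReal.ofReal_le_ofReal
      have hrc : Filter.Tendsto (cdf μ) (𝓝[>] s) (𝓝 (cdf μ s)) :=
        ((cdf μ).right_continuous s).mono Ioi_subset_Ici_self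
      refine ge_of_tendsto hrc ?_
      filter_upwards [self_mem_nhdsWithin] with u hu
      by_contra h
      push_neg at h
      exact absurd (hIic h.le) (by simpa using hu)
    apply le_antisymm
    · exact le_trans (measure_mono hIic) (le_trans hio_ic.symm.le hundershoot)
    · exact le_trans hovershoot (le_trans hio_ic.symm.le (measure_mono hIio))
  · rw [not_nonempty_iff_eq_empty] at hne
    rw [hne]
    have : a ≤ 0 := by
      by_contra h
      push_neg at h
      obtain ⟨z, hz⟩ := ((tendsto_cdf_atBot μ).eventually (eventually_lt_nhds h)).exists
      have hzS : z ∈ S := by simpa [hS] using hz.le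
      rw [hne] at hzS
      exact hzS
    simp [ENNReal.ofReal_eq_zero.mpr this]

end Stmt3Aux

namespace Stmt3Aux

lemma measure_one_le_cdf (μ : Measure ℝ) [IsProbabilityMeasure μ] (hμ : ∀ x : ℝ, μ {x} = 0) :
    μ {z | 1 ≤ cdf μ z} = 0 := by
  have key : ∀ n : ℕ, μ {z | 1 ≤ cdf μ z} ≤ ENNReal.ofReal (1/(n+1)) := by
    intro n
    have h1 : (0:ℝ) < 1/(n+1) := by positivity
    have hlt : (0:ℝ) ≤ 1 - 1/(n+1) := by
      have : (1:ℝ)/(n+1) ≤ 1 := by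
        rw [div_le_one (by positivity)]
        simp
      linarith
    have hlt1 : (1:ℝ) - 1/(n+1) < 1 := by linarith
    have hmeas : MeasurableSet {z | cdf μ z ≤ 1 - 1/(n+1)} :=
      measurableSet_le (measurable_cdf μ) measurable_const
    have hsub : {z | 1 ≤ cdf μ z} ⊆ {z | cdf μ z ≤ 1 - 1/(n+1)}ᶜ := by
      intro z hz
      simp only [mem_compl_iff, mem_setOf_eq, not_le]
      have : (1:ℝ) ≤ cdf μ z := hz
      linarith
    calc μ {z | 1 ≤ cdf μ z} ≤ μ {z | cdf μ z ≤ 1 - 1/(n+1)}ᶜ := measure_mono hsub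
      _ = 1 - μ {z | cdf μ z ≤ 1 - 1/(n+1)} := by
          rw [measure_compl hmeas (measure_ne_top _ _), measure_univ]
      _ = 1 - ENNReal.ofReal (1 - 1/(n+1)) := by rw [measure_cdf_le μ hμ hlt hlt1]
      _ ≤ ENNReal.ofReal (1/(n+1)) := by
          rw [tsub_le_iff_right, ← ENNReal.ofReal_add h1.le hlt,
            show (1:ℝ)/(n+1) + (1 - 1/(n+1)) = 1 by ring, ENNReal.ofReal_one]
  have htend : Filter.Tendsto (fun n : ℕ => ENNReal.ofReal (1/(n+1 : ℝ))) atTop (𝓝 0) := by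
    rw [← ENNReal.ofReal_zero]
    apply ENNReal.tendsto_ofReal
    exact tendsto_one_div_add_atTop_nhds_zero_nat
  exact le_antisymm (ge_of_tendsto htend (Filter.Eventually.of_forall key)) (zero_le)

/-- Transport theorem on ℝ: quantile of cdf pushes a nonatomic probability measure to any
probability measure. -/
lemma map_quant_cdf (μ ν : Measure ℝ) [IsProbabilityMeasure μ] [IsProbabilityMeasure ν]
    (hμ : ∀ x : ℝ, μ {x} = 0) :
    μ.map (fun z => quant ν (cdf μ z)) = ν := by
  have hmeas : Measurable (fun z => quant ν (cdf μ z)) :=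
    (measurable_quant ν).comp (measurable_cdf μ)
  haveI : IsProbabilityMeasure (μ.map (fun z => quant ν (cdf μ z))) :=
    Measure.isProbabilityMeasure_map hmeas.aemeasurable
  refine Measure.ext_of_Iic _ _ (fun x => ?_)
  rw [Measure.map_apply hmeas measurableSet_Iic]
  set a := cdf ν x with ha
  set A := {z | 0 < cdf μ z ∧ cdf μ z < 1} with hA
  have hAc : μ Aᶜ = 0 := by
    have hsub : Aᶜ ⊆ {z | cdf μ z ≤ 0} ∪ {z | 1 ≤ cdf μ z} := by
      intro z hz
      simp only [hA, mem_compl_iff, mem_setOf_eq, not_and_or, not_lt] at hz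
      rcases hz with h | h
      · exact Or.inl h
      · exact Or.inr h
    refine le_antisymm ?_ (zero_le)
    calc μ Aᶜ ≤ μ ({z | cdf μ z ≤ 0} ∪ {z | 1 ≤ cdf μ z}) := measure_mono hsub
      _ ≤ μ {z | cdf μ z ≤ 0} + μ {z | 1 ≤ cdf μ z} := measure_union_le _ _
      _ = 0 := by rw [measure_cdf_le μ hμ le_rfl one_pos, measure_one_le_cdf μ hμ]; simp
  have hcut : ∀ s : Set ℝ, μ s = μ (s ∩ A) := by
    intro s
    refine le_antisymm ?_ (measure_mono inter_subset_left)
    calc μ s ≤ μ ((s ∩ A) ∪ Aᶜ) := measure_mono (by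
          intro z hz
          by_cases h : z ∈ A
          · exact Or.inl ⟨hz, h⟩
          · exact Or.inr h)
      _ ≤ μ (s ∩ A) + μ Aᶜ := measure_union_le _ _
      _ = μ (s ∩ A) := by rw [hAc, add_zero]
  have hkey : (fun z => quant ν (cdf μ z)) ⁻¹' Iic x ∩ A = {z | cdf μ z ≤ a} ∩ A := by
    ext z
    simp only [mem_inter_iff, mem_preimage, mem_Iic, mem_setOf_eq, hA, and_congr_left_iff]
    intro hz
    rw [quant_le_iff hz.1 hz.2]
  rw [hcut ((fun z => quant ν (cdf μ z)) ⁻¹' Iic x), hkey, ← hcut {z | cdf μ z ≤ a}]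
  have ha0 : 0 ≤ a := cdf_nonneg ν x
  rcases lt_or_eq_of_le (cdf_le_one ν x) with ha1 | ha1
  · rw [measure_cdf_le μ hμ ha0 ha1, ha, ofReal_cdf]
  · have ha1' : a = 1 := ha.trans ha1
    have : {z | cdf μ z ≤ a} = univ := by
      ext z
      simp only [mem_setOf_eq, mem_univ, iff_true, ha1']
      exact cdf_le_one μ z
    rw [this, measure_univ, ← ofReal_cdf ν x, ← ha, ha1', ENNReal.ofReal_one]

end Stmt3Aux

namespace Stmt3Aux

/-- Existence of a transport map between standard Borel probability spaces,
with nonatomic source. -/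
lemma exists_transport {X : Type*} {Y : Type*} [MeasurableSpace X] [StandardBorelSpace X]
    [MeasurableSpace Y] [StandardBorelSpace Y]
    (μ : Measure X) (ν : Measure Y) [IsProbabilityMeasure μ] [IsProbabilityMeasure ν]
    (hμ : ∀ x : X, μ {x} = 0) :
    ∃ φ : X → Y, Measurable φ ∧ μ.map φ = ν := by
  have hY : Nonempty Y := by
    by_contra h
    rw [not_nonempty_iff] at h
    have h1 : ν univ = 1 := measure_univ
    rw [(Set.univ_eq_empty_iff).mpr h, measure_empty] at h1
    exact zero_ne_one h1
  obtain ⟨e, he⟩ := exists_measurableEmbedding_real X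
  obtain ⟨j, hj⟩ := exists_measurableEmbedding_real Y
  set μ' := μ.map e with hμ'
  set ν' := ν.map j with hν'
  haveI : IsProbabilityMeasure μ' := Measure.isProbabilityMeasure_map he.measurable.aemeasurable
  haveI : IsProbabilityMeasure ν' := Measure.isProbabilityMeasure_map hj.measurable.aemeasurable
  have hμ'na : ∀ t : ℝ, μ' {t} = 0 := by
    intro t
    rw [hμ', Measure.map_apply he.measurable (measurableSet_singleton t)]
    have hss : (e ⁻¹' {t}).Subsingleton := fun x hx y hy =>
      he.injective (hx.trans hy.symm)
    rcases hss.eq_empty_or_singleton with h | ⟨x, h⟩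
    · rw [h, measure_empty]
    · rw [h]; exact hμ x
  obtain ⟨g, hg, hgj⟩ := hj.exists_measurable_extend measurable_id (fun _ => hY)
  refine ⟨g ∘ (fun z => quant ν' (cdf μ' z)) ∘ e, (hg.comp ((measurable_quant ν').comp
    (measurable_cdf μ'))).comp he.measurable, ?_⟩
  have hψ : Measurable (fun z => quant ν' (cdf μ' z)) :=
    (measurable_quant ν').comp (measurable_cdf μ')
  calc μ.map (g ∘ (fun z => quant ν' (cdf μ' z)) ∘ e)
      = ((μ.map e).map (fun z => quant ν' (cdf μ' z))).map g := by
        rw [Measure.map_map hψ he.measurable, Measure.map_map hg (hψ.comp he.measurable)]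
    _ = ν'.map g := by rw [← hμ', map_quant_cdf μ' ν' hμ'na]
    _ = ν.map (g ∘ j) := by rw [hν', Measure.map_map hg hj.measurable]
    _ = ν := by rw [hgj, Measure.map_id]

end Stmt3Aux


end Stmt3AuxSection

open Metric Set ProbabilityTheory

/-- Proposition 2.8: if `μ` is nonatomic, the Monge couplings `Π₀(μ,ν)` are weakly dense
in the set `Π(μ,ν)` of all couplings of `(μ,ν)`. -/
theorem stmt3 {X Y : Type*}
    [TopologicalSpace X] [PolishSpace X] [MeasurableSpace X] [BorelSpace X]
    [TopologicalSpace Y] [PolishSpace Y] [MeasurableSpace Y] [BorelSpace Y]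
    (μ : ProbabilityMeasure X) (ν : ProbabilityMeasure Y)
    (hμ : ∀ x : X, (μ : Measure X) {x} = 0)
    (P : ProbabilityMeasure (X × Y))
    (h1 : (P : Measure (X × Y)).map Prod.fst = (μ : Measure X))
    (h2 : (P : Measure (X × Y)).map Prod.snd = (ν : Measure Y)) :
    P ∈ closure {Q : ProbabilityMeasure (X × Y) |
      ∃ φ : X → Y, Measurable φ ∧ (μ : Measure X).map φ = (ν : Measure Y) ∧
        (Q : Measure (X × Y)) = (μ : Measure X).map (fun x => (x, φ x))} := by
  classical
  letI := TopologicalSpace.upgradeIsCompletelyMetrizable X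
  letI := TopologicalSpace.upgradeIsCompletelyMetrizable Y
  set S : Set (ProbabilityMeasure (X × Y)) := {Q : ProbabilityMeasure (X × Y) |
      ∃ φ : X → Y, Measurable φ ∧ (μ : Measure X).map φ = (ν : Measure Y) ∧
        (Q : Measure (X × Y)) = (μ : Measure X).map (fun x => (x, φ x))} with hSdef
  have key : ∀ δ : ℝ, 0 < δ → ∃ Q : ProbabilityMeasure (X × Y), Q ∈ S ∧
      levyProkhorovEDist (P : Measure (X × Y)) (Q : Measure (X × Y)) ≤ ENNReal.ofReal δ := by
    intro δ hδ
    obtain ⟨As, As_mble, As_bdd, As_diam, As_cover, As_disj⟩ :=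
      SeparableSpace.exists_measurable_partition_diam_le X hδ
    set νn : ℕ → Measure Y :=
      fun n => ((P : Measure (X × Y)).restrict (As n ×ˢ Set.univ)).map Prod.snd with hνn
    have hνn_apply : ∀ n (T : Set Y), MeasurableSet T →
        νn n T = (P : Measure (X × Y)) (As n ×ˢ T) := by
      intro n T hT
      rw [hνn, Measure.map_apply measurable_snd hT, Measure.restrict_apply (measurable_snd hT)]
      congr 1
      ext p
      simp [Set.mem_prod, and_comm]
    have hμAs : ∀ n, (P : Measure (X × Y)) (As n ×ˢ Set.univ) = (μ : Measure X) (As n) := by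
      intro n
      rw [← h1, Measure.map_apply measurable_fst (As_mble n)]
      congr 1
      ext p
      simp [Set.mem_prod]
    have hνtot : ∀ n, νn n Set.univ = (μ : Measure X) (As n) := by
      intro n; rw [hνn_apply n _ MeasurableSet.univ, hμAs]
    have hY : Nonempty Y := by
      by_contra h
      rw [not_nonempty_iff] at h
      have h1' : (ν : Measure Y) Set.univ = 1 := measure_univ
      rw [Set.univ_eq_empty_iff.mpr h, measure_empty] at h1'
      exact zero_ne_one h1'
    have hch : ∀ n, ∃ φn : X → Y, Measurable φn ∧
        ((μ : Measure X) (As n) ≠ 0 →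
          ((μ : Measure X).restrict (As n)).map φn = νn n) := by
      intro n
      by_cases hc : (μ : Measure X) (As n) = 0
      · exact ⟨fun _ => Classical.arbitrary Y, measurable_const, fun h => absurd hc h⟩
      · set c := (μ : Measure X) (As n) with hc'
        have hcne : c ≠ 0 := hc
        have hcle : c ≤ 1 := prob_le_one
        have hctop : c ≠ ⊤ := (lt_of_le_of_lt hcle ENNReal.one_lt_top).ne
        set μn : Measure X := c⁻¹ • (μ : Measure X).restrict (As n) with hμn
        set νn' : Measure Y := c⁻¹ • νn n with hνn'
        haveI : IsProbabilityMeasure μn := ⟨by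
          rw [hμn]; simp only [Measure.smul_apply, smul_eq_mul]
          rw [Measure.restrict_apply_univ, ← hc', ENNReal.inv_mul_cancel hcne hctop]⟩
        haveI : IsProbabilityMeasure νn' := ⟨by
          rw [hνn']; simp only [Measure.smul_apply, smul_eq_mul]
          rw [hνtot, ← hc', ENNReal.inv_mul_cancel hcne hctop]⟩
        have hna : ∀ x : X, μn {x} = 0 := by
          intro x
          rw [hμn]; simp only [Measure.smul_apply, smul_eq_mul]
          rw [Measure.restrict_apply (measurableSet_singleton x)]
          have h0 : (μ : Measure X) ({x} ∩ As n) = 0 :=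
            le_antisymm (le_trans (measure_mono Set.inter_subset_left) (hμ x).le) (zero_le)
          rw [h0, mul_zero]
        obtain ⟨φn, hφm, hφmap⟩ := Stmt3Aux.exists_transport μn νn' hna
        refine ⟨φn, hφm, fun _ => ?_⟩
        rw [hμn, Measure.map_smul] at hφmap
        have h2' := congrArg (fun m : Measure Y => c • m) hφmap
        simp only [smul_smul, ENNReal.mul_inv_cancel hcne hctop, one_smul, hνn'] at h2'
        exact h2'
    choose φn hφn_m hφn_map using hch
    have hcov : ∀ x : X, ∃ n, x ∈ As n := by
      intro x
      have hx : x ∈ ⋃ n, As n := As_cover ▸ Set.mem_univ x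
      exact Set.mem_iUnion.mp hx
    set idx : X → ℕ := fun x => Nat.find (hcov x) with hidxdef
    have hidx : ∀ x, x ∈ As (idx x) := fun x => Nat.find_spec (hcov x)
    have hidx_eq : ∀ n, ∀ x ∈ As n, idx x = n := by
      intro n x hx
      by_contra h
      exact Set.disjoint_left.mp (As_disj h) (hidx x) hx
    set φ : X → Y := fun x => φn (idx x) x with hφdef
    have hφpre : ∀ T : Set Y, φ ⁻¹' T = ⋃ n, As n ∩ φn n ⁻¹' T := by
      intro T
      ext x
      simp only [Set.mem_preimage, Set.mem_iUnion, Set.mem_inter_iff]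
      constructor
      · intro h; exact ⟨idx x, hidx x, h⟩
      · rintro ⟨n, hxn, h⟩
        have he : idx x = n := hidx_eq n x hxn
        show φn (idx x) x ∈ T
        rw [he]; exact h
    have hφmeas : Measurable φ := by
      intro T hT
      rw [hφpre]
      exact MeasurableSet.iUnion fun n => (As_mble n).inter (hφn_m n hT)
    have hpiece : ∀ n (T : Set Y), MeasurableSet T →
        (μ : Measure X) (As n ∩ φn n ⁻¹' T) = νn n T := by
      intro n T hT
      by_cases hc : (μ : Measure X) (As n) = 0
      · have ha : (μ : Measure X) (As n ∩ φn n ⁻¹' T) = 0 :=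
          le_antisymm (le_trans (measure_mono Set.inter_subset_left) hc.le) (zero_le)
        have hb : νn n T = 0 := by
          refine le_antisymm ?_ (zero_le)
          rw [← hc, ← hνtot n]
          exact measure_mono (Set.subset_univ T)
        rw [ha, hb]
      · rw [← hφn_map n hc, Measure.map_apply (hφn_m n) hT,
          Measure.restrict_apply (hφn_m n hT), Set.inter_comm]
    have hAsdisj : ∀ (f : ℕ → Set X), Pairwise (Function.onFun Disjoint (fun n => As n ∩ f n)) :=
      fun f i j hij => Set.disjoint_left.mpr fun x hx1 hx2 =>
        Set.disjoint_left.mp (As_disj hij) hx1.1 hx2.1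
    have hprod_disj : ∀ (f : ℕ → Set Y), Pairwise (Function.onFun Disjoint (fun n => As n ×ˢ f n)) :=
      fun f i j hij => Set.disjoint_left.mpr fun p hp1 hp2 =>
        Set.disjoint_left.mp (As_disj hij) hp1.1 hp2.1
    have hAs_univ : (⋃ n, As n ×ˢ (Set.univ : Set Y)) = Set.univ := by
      rw [← Set.iUnion_prod_const, As_cover, Set.univ_prod_univ]
    have hmapφ : (μ : Measure X).map φ = (ν : Measure Y) := by
      refine Measure.ext fun T hT => ?_
      rw [Measure.map_apply hφmeas hT, hφpre,
        measure_iUnion (hAsdisj _) (fun n => (As_mble n).inter (hφn_m n hT))]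
      rw [tsum_congr (fun n => hpiece n T hT), tsum_congr (fun n => hνn_apply n T hT),
        ← measure_iUnion (hprod_disj _) (fun n => (As_mble n).prod hT)]
      rw [show (⋃ n, As n ×ˢ T) = Set.univ ×ˢ T by rw [← Set.iUnion_prod_const, As_cover]]
      rw [← h2, Measure.map_apply measurable_snd hT]
      congr 1
      ext p
      simp [Set.mem_prod]
    have hxφ : Measurable fun x : X => (x, φ x) := measurable_id.prodMk hφmeas
    have hQprob : IsProbabilityMeasure ((μ : Measure X).map (fun x => (x, φ x))) :=
      Measure.isProbabilityMeasure_map hxφ.aemeasurable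
    refine ⟨⟨(μ : Measure X).map (fun x => (x, φ x)), hQprob⟩, ⟨φ, hφmeas, hmapφ, rfl⟩, ?_⟩
    set Qm : Measure (X × Y) := (μ : Measure X).map (fun x => (x, φ x)) with hQm
    have hQA : ∀ n (T : Set Y), MeasurableSet T → Qm (As n ×ˢ T) = νn n T := by
      intro n T hT
      rw [hQm, Measure.map_apply hxφ ((As_mble n).prod hT)]
      have hpre : (fun x => (x, φ x)) ⁻¹' (As n ×ˢ T) = As n ∩ φ ⁻¹' T := by
        ext x; simp [Set.mem_prod]
      rw [hpre]
      have heq : As n ∩ φ ⁻¹' T = As n ∩ φn n ⁻¹' T := by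
        ext x
        simp only [Set.mem_inter_iff, Set.mem_preimage, and_congr_right_iff]
        intro hx
        have he : idx x = n := hidx_eq n x hx
        show φn (idx x) x ∈ T ↔ _
        rw [he]
      rw [heq, hpiece n T hT]
    have hPA : ∀ n (T : Set Y), MeasurableSet T →
        (P : Measure (X × Y)) (As n ×ˢ T) = νn n T := fun n T hT => (hνn_apply n T hT).symm
    apply levyProkhorovEDist_le_of_forall
    intro ε B hδε hεtop hB
    have hδεR : δ < ε.toReal := by
      rw [← ENNReal.ofReal_lt_iff_lt_toReal hδ.le hεtop.ne]
      exact hδε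
    set ε₂ : ℝ := (δ + ε.toReal) / 2 with hε₂
    have hδε₂ : δ < ε₂ := by rw [hε₂]; linarith
    have hε₂ε : ε₂ < ε.toReal := by rw [hε₂]; linarith
    have hDn : ∀ n, ∃ D : Set X, D ⊆ As n ∧ D.Countable ∧ As n ⊆ closure D := fun n =>
      (TopologicalSpace.IsSeparable.of_separableSpace (As n)).exists_countable_dense_subset
    choose D hD_sub hD_cnt hD_dense using hDn
    set R : ℕ → Set Y := fun n => ⋂ x'' ∈ D n, {y | (x'', y) ∈ thickening ε₂ B} with hR
    have hR_meas : ∀ n, MeasurableSet (R n) := by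
      intro n
      apply MeasurableSet.biInter (hD_cnt n)
      intro x'' _
      exact measurable_prodMk_left isOpen_thickening.measurableSet
    have hC1 : ∀ n, B ∩ (As n ×ˢ Set.univ) ⊆ As n ×ˢ R n := by
      rintro n ⟨x, y⟩ ⟨hpB, hx, -⟩
      refine ⟨hx, ?_⟩
      rw [hR]
      refine Set.mem_iInter₂.mpr fun x'' hx'' => ?_
      rw [Set.mem_setOf_eq, mem_thickening_iff]
      refine ⟨(x, y), hpB, ?_⟩
      rw [Prod.dist_eq]
      simp only [dist_self]
      rw [max_eq_left dist_nonneg]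
      have hle : dist x'' x ≤ diam (As n) :=
        dist_le_diam_of_mem (As_bdd n) (hD_sub n hx'') hx
      calc dist x'' x ≤ diam (As n) := hle
        _ ≤ δ := As_diam n
        _ < ε₂ := hδε₂
    have hC2 : ∀ n, (As n ×ˢ R n) ⊆ thickening ε.toReal B := by
      rintro n ⟨x', y⟩ hp
      obtain ⟨hx', hy⟩ := hp
      obtain ⟨x'', hx''D, hdist⟩ :=
        Metric.mem_closure_iff.mp (hD_dense n hx') (ε.toReal - ε₂) (by linarith)
      have hy' : (x'', y) ∈ thickening ε₂ B := Set.mem_iInter₂.mp hy x'' hx''D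
      rw [mem_thickening_iff] at hy' ⊢
      obtain ⟨z, hzB, hz⟩ := hy'
      refine ⟨z, hzB, ?_⟩
      have hd1 : dist ((x' : X), y) (x'', y) < ε.toReal - ε₂ := by
        rw [Prod.dist_eq]
        simp only [dist_self]
        rw [max_eq_left dist_nonneg]
        exact hdist
      calc dist ((x' : X), y) z ≤ dist ((x' : X), y) (x'', y) + dist (x'', y) z :=
            dist_triangle _ _ _
        _ < (ε.toReal - ε₂) + ε₂ := add_lt_add hd1 hz
        _ = ε.toReal := by ring
    have hcomp : ∀ ρ σ : Measure (X × Y),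
        (∀ n (T : Set Y), MeasurableSet T → ρ (As n ×ˢ T) = νn n T) →
        (∀ n (T : Set Y), MeasurableSet T → σ (As n ×ˢ T) = νn n T) →
        ρ B ≤ σ (thickening ε.toReal B) := by
      intro ρ σ hρ hσ
      have hBdecomp : B = ⋃ n, B ∩ (As n ×ˢ Set.univ) := by
        rw [← Set.inter_iUnion, hAs_univ, Set.inter_univ]
      calc ρ B = ∑' n, ρ (B ∩ (As n ×ˢ Set.univ)) := by
            conv_lhs => rw [hBdecomp]
            rw [measure_iUnion
              (fun i j hij => Set.disjoint_left.mpr fun p hp1 hp2 =>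
                Set.disjoint_left.mp (As_disj hij) hp1.2.1 hp2.2.1)
              (fun n => hB.inter ((As_mble n).prod MeasurableSet.univ))]
        _ ≤ ∑' n, σ ((As n ×ˢ Set.univ) ∩ thickening ε.toReal B) := by
            apply ENNReal.tsum_le_tsum
            intro n
            calc ρ (B ∩ (As n ×ˢ Set.univ)) ≤ ρ (As n ×ˢ R n) := measure_mono (hC1 n)
              _ = νn n (R n) := hρ n (R n) (hR_meas n)
              _ = σ (As n ×ˢ R n) := (hσ n (R n) (hR_meas n)).symm
              _ ≤ σ ((As n ×ˢ Set.univ) ∩ thickening ε.toReal B) := by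
                  apply measure_mono
                  intro p hp
                  exact ⟨⟨(Set.mem_prod.mp hp).1, Set.mem_univ _⟩, hC2 n hp⟩
        _ = σ (⋃ n, (As n ×ˢ Set.univ) ∩ thickening ε.toReal B) := by
            rw [measure_iUnion
              (fun i j hij => Set.disjoint_left.mpr fun p hp1 hp2 =>
                Set.disjoint_left.mp (As_disj hij) hp1.1.1 hp2.1.1)
              (fun n => ((As_mble n).prod MeasurableSet.univ).inter
                isOpen_thickening.measurableSet)]
        _ = σ (thickening ε.toReal B) := by
            rw [← Set.iUnion_inter, hAs_univ, Set.univ_inter]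
    have hPB := hcomp (P : Measure (X × Y)) Qm hPA hQA
    have hQB := hcomp Qm (P : Measure (X × Y)) hQA hPA
    exact ⟨le_trans hPB le_self_add, le_trans hQB le_self_add⟩
  let hhom := LevyProkhorov.probabilityMeasureHomeomorph (Ω := X × Y)
  have himg : hhom P ∈ closure (hhom '' S) := by
    rw [Metric.mem_closure_iff]
    intro r hr
    obtain ⟨Q, hQS, hQd⟩ := key (r / 2) (by linarith)
    refine ⟨hhom Q, Set.mem_image_of_mem _ hQS, ?_⟩
    have hdd : dist (hhom P) (hhom Q) =
        (levyProkhorovEDist (P : Measure (X × Y)) (Q : Measure (X × Y))).toReal := rfl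
    rw [hdd]
    calc (levyProkhorovEDist (P : Measure (X × Y)) (Q : Measure (X × Y))).toReal
        ≤ (ENNReal.ofReal (r / 2)).toReal := ENNReal.toReal_mono ENNReal.ofReal_ne_top hQd
      _ = r / 2 := ENNReal.toReal_ofReal (by linarith)
      _ < r := by linarith
  rw [← Homeomorph.image_closure] at himg
  obtain ⟨P', hP', hPP⟩ := himg
  rwa [hhom.injective hPP] at hP'
end

section
/- Let X and Y be Polish spaces with μ a nonatomic Borel probability measure on X. Then the set of measures of the form μ(dx) δ_{φ(x)}(dy) with φ : X → Y Borel measurable is weakly dense in the set Π(μ) of all Borel probability measures on X × Y with first marginal μ. -/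
open MeasureTheory Filter Topology Set Metric
open scoped ENNReal NNReal

theorem contF (ρ : Measure ℝ) [IsFiniteMeasure ρ] [NullSingletonClass ρ] :
    Continuous (fun t => (ρ (Set.Iic t)).toReal) := by
  rw [continuous_iff_continuousAt]
  intro a
  rw [Metric.continuousAt_iff]
  intro ε εpos
  have hinter : (⋂ n : ℕ, Ioo (a - 1/(n+1)) (a + 1/(n+1))) = {a} := by
    apply Subset.antisymm
    · intro x hx
      simp only [mem_iInter, mem_Ioo] at hx
      have hx' : ∀ n : ℕ, |x - a| < 1/(n+1) := by
        intro n
        rw [abs_sub_lt_iff]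
        constructor <;> linarith [(hx n).1, (hx n).2]
      have : |x - a| = 0 := by
        by_contra h
        have hpos : 0 < |x - a| := lt_of_le_of_ne (abs_nonneg _) (Ne.symm h)
        obtain ⟨n, hn⟩ := exists_nat_one_div_lt hpos
        exact absurd (hx' n) (not_lt.mpr hn.le)
      have : x = a := by
        have := abs_eq_zero.mp this; linarith
      simp [this]
    · intro x hx
      simp only [mem_singleton_iff] at hx
      subst hx
      simp only [mem_iInter, mem_Ioo]
      intro n
      have : (0:ℝ) < 1/(n+1) := by positivity
      constructor <;> linarith
  have h0 : Tendsto (fun n : ℕ => ρ (Ioo (a - 1/(n+1)) (a + 1/(n+1)))) atTop (𝓝 0) := by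
    have h1 := tendsto_measure_iInter_atTop (μ := ρ)
      (s := fun n : ℕ => Ioo (a - 1/(n+1)) (a + 1/(n+1)))
      (fun n => measurableSet_Ioo.nullMeasurableSet) ?_ ⟨0, measure_ne_top _ _⟩
    · rw [hinter] at h1
      simpa [measure_singleton, Function.comp_def] using h1
    · intro m n hmn
      have hle : 1/((n:ℝ)+1) ≤ 1/((m:ℝ)+1) := by
        apply one_div_le_one_div_of_le (by positivity)
        exact_mod_cast Nat.succ_le_succ hmn
      apply Ioo_subset_Ioo (by linarith) (by linarith)
  obtain ⟨n, hn⟩ := (ENNReal.tendsto_atTop_zero.mp h0) (ENNReal.ofReal (ε/2))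
    (by simp [εpos])
  have hδpos : (0:ℝ) < 1/(n+1) := by positivity
  refine ⟨1/(n+1), hδpos, ?_⟩
  intro b hb
  rw [Real.dist_eq] at hb ⊢
  have key : ∀ u v : ℝ, u ≤ v → (ρ (Iic v)).toReal - (ρ (Iic u)).toReal = (ρ (Ioc u v)).toReal := by
    intro u v huv
    have : Iic v = Iic u ∪ Ioc u v := (Iic_union_Ioc_eq_Iic huv).symm
    rw [this, measure_union (Iic_disjoint_Ioc le_rfl) measurableSet_Ioc,
      ENNReal.toReal_add (measure_ne_top _ _) (measure_ne_top _ _)]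
    ring
  have hsub : ∀ u v : ℝ, |u - a| < 1/(n+1) → |v - a| < 1/(n+1) →
      Ioc u v ⊆ Ioo (a - 1/(n+1)) (a + 1/(n+1)) := by
    intro u v hu hv
    rw [abs_sub_lt_iff] at hu hv
    intro x hx
    rcases hx with ⟨h1, h2⟩
    constructor <;> [linarith [hu.2]; linarith [hv.1]]
  have habs : |(ρ (Iic b)).toReal - (ρ (Iic a)).toReal| ≤ ε/2 := by
    have hb' : |b - a| < 1/(n+1) := hb
    have ha' : |a - a| < 1/(n+1) := by simpa using hδpos
    rcases le_total a b with h | h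
    · rw [key a b h, abs_of_nonneg ENNReal.toReal_nonneg]
      have : ρ (Ioc a b) ≤ ENNReal.ofReal (ε/2) := le_trans (measure_mono (hsub a b ha' hb')) (hn n le_rfl)
      calc (ρ (Ioc a b)).toReal ≤ (ENNReal.ofReal (ε/2)).toReal := by
            exact ENNReal.toReal_mono ENNReal.ofReal_ne_top this
        _ = ε/2 := ENNReal.toReal_ofReal (by linarith)
    · rw [abs_sub_comm, key b a h, abs_of_nonneg ENNReal.toReal_nonneg]
      have : ρ (Ioc b a) ≤ ENNReal.ofReal (ε/2) := le_trans (measure_mono (hsub b a hb' ha')) (hn n le_rfl)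
      calc (ρ (Ioc b a)).toReal ≤ (ENNReal.ofReal (ε/2)).toReal :=
            ENNReal.toReal_mono ENNReal.ofReal_ne_top this
        _ = ε/2 := ENNReal.toReal_ofReal (by linarith)
  exact lt_of_le_of_lt habs (by linarith)

theorem lemB (ρ : Measure ℝ) [IsFiniteMeasure ρ] [NullSingletonClass ρ] {s : ℝ}
    (hs0 : 0 ≤ s) (hsM : s ≤ (ρ univ).toReal) :
    ρ {t | (ρ (Iic t)).toReal < s} = ENNReal.ofReal s := by
  set F : ℝ → ℝ := fun t => (ρ (Iic t)).toReal with hF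
  have Fmono : Monotone F := fun u v h =>
    ENNReal.toReal_mono (measure_ne_top _ _) (measure_mono (Iic_subset_Iic.mpr h))
  rcases eq_or_lt_of_le hs0 with h0 | hpos
  · have : {t | F t < s} = ∅ := by
      ext t; simp only [mem_setOf_eq, mem_empty_iff_false, iff_false, not_lt, ← h0]
      exact ENNReal.toReal_nonneg
    rw [this, ← h0]; simp
  -- s > 0 : the set is nonempty
  have hex : ∃ t, F t < s := by
    have htend : Tendsto (fun n : ℕ => ρ (Iic (-(n:ℝ)))) atTop (𝓝 0) := by
      have h1 := tendsto_measure_iInter_atTop (μ := ρ) (s := fun n : ℕ => Iic (-(n:ℝ)))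
        (fun n => measurableSet_Iic.nullMeasurableSet)
        (fun m n hmn => Iic_subset_Iic.mpr (by exact_mod_cast neg_le_neg (by exact_mod_cast hmn)))
        ⟨0, measure_ne_top _ _⟩
      have : (⋂ n : ℕ, Iic (-(n:ℝ))) = ∅ := by
        ext x; simp only [mem_iInter, mem_Iic, mem_empty_iff_false, iff_false, not_forall, not_le]
        obtain ⟨n, hn⟩ := exists_nat_gt (-x)
        exact ⟨n, by linarith⟩
      rw [this] at h1; simpa [Function.comp_def] using h1
    obtain ⟨n, hn⟩ := (ENNReal.tendsto_atTop_zero.mp htend) (ENNReal.ofReal s / 2)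
      (by simp [ENNReal.div_pos_iff, hpos, ENNReal.ofReal_pos])
    refine ⟨-(n:ℝ), ?_⟩
    have h2 : ρ (Iic (-(n:ℝ))) < ENNReal.ofReal s := by
      calc ρ (Iic (-(n:ℝ))) ≤ ENNReal.ofReal s / 2 := hn n le_rfl
        _ < ENNReal.ofReal s := by
          apply ENNReal.half_lt_self (by simp [ENNReal.ofReal_pos, hpos]) (by simp)
    have := ENNReal.toReal_strict_mono (by simp) h2
    rwa [ENNReal.toReal_ofReal hpos.le] at this
  by_cases hall : ∀ t, F t < s
  · -- S = univ, and s = M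
    have hM : (ρ univ).toReal ≤ s := by
      have htop : Tendsto (fun x : ℝ => ρ (Iic x)) atTop (𝓝 (ρ univ)) :=
        tendsto_measure_Iic_atTop ρ
      have htop' : Tendsto F atTop (𝓝 ((ρ univ).toReal)) :=
        (ENNReal.tendsto_toReal (measure_ne_top _ _)).comp htop
      exact le_of_tendsto htop' (Eventually.of_forall fun t => (hall t).le)
    have hseq : s = (ρ univ).toReal := le_antisymm hsM hM
    have : {t | F t < s} = univ := eq_univ_of_forall hall
    rw [this, hseq, ENNReal.ofReal_toReal (measure_ne_top _ _)]
  · push_neg at hall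
    obtain ⟨t₀, ht₀⟩ := hall
    set S := {t | F t < s} with hS
    have hbdd : BddAbove S := by
      refine ⟨t₀, fun t ht => ?_⟩
      by_contra h
      push_neg at h
      exact absurd (lt_of_le_of_lt (Fmono h.le) ht) (not_lt.mpr ht₀)
    have hne : S.Nonempty := hex
    set c := sSup S with hc
    have hIio : Iio c ⊆ S := by
      intro t ht
      obtain ⟨t', ht'S, htt'⟩ := exists_lt_of_lt_csSup hne ht
      exact lt_of_le_of_lt (Fmono htt'.le) ht'S
    have hIic : S ⊆ Iic c := fun t ht => le_csSup hbdd ht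
    have hcont := contF ρ
    have hFc_ge : s ≤ F c := by
      have h1 : Tendsto F (𝓝[>] c) (𝓝 (F c)) :=
        ((hcont.continuousAt).continuousWithinAt)
      refine ge_of_tendsto h1 ?_
      filter_upwards [self_mem_nhdsWithin] with t ht
      by_contra h
      push_neg at h
      exact absurd (mem_Iic.mp (hIic h)) (not_le.mpr (mem_Ioi.mp ht))
    have hFc_le : F c ≤ s := by
      have h1 : Tendsto F (𝓝[<] c) (𝓝 (F c)) :=
        ((hcont.continuousAt).continuousWithinAt)
      refine le_of_tendsto h1 ?_
      filter_upwards [self_mem_nhdsWithin] with t ht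
      exact (hIio ht).le
    have hFc : F c = s := le_antisymm hFc_le hFc_ge
    have hiio_iic : ρ (Iio c) = ρ (Iic c) := by
      rw [← Iic_diff_right]
      rw [measure_diff_null (measure_singleton c)]
    have hρS : ρ S = ρ (Iic c) := by
      apply le_antisymm (measure_mono hIic)
      rw [← hiio_iic]; exact measure_mono hIio
    rw [hρS, ← hFc]
    exact (ENNReal.ofReal_toReal (measure_ne_top _ _)).symm

theorem splitLemma {X : Type*} [MeasurableSpace X] (μ : Measure X) [IsFiniteMeasure μ]
    [NullSingletonClass μ] (e : X → ℝ) (he : Measurable e) (hea : ∀ r : ℝ, μ (e ⁻¹' {r}) = 0)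
    (C : Set X) (hC : MeasurableSet C) (c : ℕ → ℝ≥0∞) (hcsum : ∑' k, c k = μ C) :
    ∃ A : ℕ → Set X, (∀ k, MeasurableSet (A k)) ∧ (∀ k, A k ⊆ C) ∧
      (∀ k k', k ≠ k' → Disjoint (A k) (A k')) ∧ (∀ k, μ (A k) = c k) ∧
      (∀ k, c k = 0 → A k = ∅) ∧ μ (C \ ⋃ k, A k) = 0 := by
  set ρ : Measure ℝ := (μ.restrict C).map e with hρ
  haveI : IsFiniteMeasure ρ := by
    constructor
    rw [hρ, Measure.map_apply he MeasurableSet.univ]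
    exact lt_of_le_of_lt (le_trans (Measure.restrict_apply_le _ _) (measure_mono (subset_univ _)))
      (measure_lt_top μ univ)
  haveI : NullSingletonClass ρ := by
    constructor
    intro r
    rw [hρ, Measure.map_apply he (measurableSet_singleton r)]
    refine le_antisymm ?_ zero_le
    calc μ.restrict C (e ⁻¹' {r}) ≤ μ (e ⁻¹' {r}) := Measure.restrict_apply_le _ _
      _ = 0 := hea r
  -- basic notation
  set F : ℝ → ℝ := fun t => (ρ (Iic t)).toReal with hFdef
  have Fcont : Continuous F := contF ρ
  have Fmble : Measurable F := Fcont.measurable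
  set M : ℝ := (μ C).toReal with hM
  have hρuniv : ρ univ = μ C := by
    rw [hρ, Measure.map_apply he MeasurableSet.univ, preimage_univ, Measure.restrict_apply_univ]
  have hck_ne_top : ∀ k, c k ≠ ∞ := by
    intro k
    refine ne_top_of_le_ne_top (measure_ne_top μ C) ?_
    rw [← hcsum]
    exact ENNReal.le_tsum k
  set r : ℕ → ℝ := fun k => (c k).toReal with hr
  have hr_nonneg : ∀ k, 0 ≤ r k := fun k => ENNReal.toReal_nonneg
  set s : ℕ → ℝ := fun k => ∑ l ∈ Finset.range k, r l with hs
  have hs_mono : Monotone s := by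
    intro a b hab
    exact Finset.sum_le_sum_of_subset_of_nonneg (Finset.range_subset_range.mpr hab)
      (fun i _ _ => hr_nonneg i)
  have hs_nonneg : ∀ k, 0 ≤ s k := fun k => Finset.sum_nonneg fun i _ => hr_nonneg i
  have hsum_le : ∀ k, ∑ l ∈ Finset.range k, c l ≤ μ C := by
    intro k
    rw [← hcsum]
    exact ENNReal.sum_le_tsum _
  have hs_eq : ∀ k, ENNReal.ofReal (s k) = ∑ l ∈ Finset.range k, c l := by
    intro k
    rw [hs]
    simp only [hr]
    rw [← ENNReal.toReal_sum (fun l _ => hck_ne_top l)]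
    exact ENNReal.ofReal_toReal (ne_top_of_le_ne_top (measure_ne_top μ C) (hsum_le k))
  have hs_le_M : ∀ k, s k ≤ M := by
    intro k
    rw [hM]
    have := hsum_le k
    have h2 := ENNReal.toReal_mono (measure_ne_top μ C) this
    rwa [← hs_eq k, ENNReal.toReal_ofReal (hs_nonneg k)] at h2
  have hs_succ : ∀ k, s (k + 1) = s k + r k := by
    intro k
    rw [hs]
    simp [Finset.sum_range_succ]
  -- the sets
  set A : ℕ → Set X := fun k => C ∩ (fun x => F (e x)) ⁻¹' (Ico (s k) (s (k+1))) with hA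
  have hmbl : ∀ k, MeasurableSet (A k) := fun k =>
    hC.inter ((Fmble.comp he) measurableSet_Ico)
  have hsub : ∀ k, A k ⊆ C := fun k => inter_subset_left
  have hAdisj : ∀ k k', k ≠ k' → Disjoint (A k) (A k') := by
    intro k k' hkk'
    rcases Nat.lt_or_ge k k' with h | h
    · rw [Set.disjoint_left]
      rintro x ⟨-, hx1⟩ ⟨-, hx2⟩
      have : s (k+1) ≤ s k' := hs_mono h
      exact absurd (lt_of_lt_of_le hx1.2 (this.trans hx2.1)) (lt_irrefl _)
    · have h' : k' < k := lt_of_le_of_ne h (Ne.symm hkk')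
      rw [Set.disjoint_left]
      rintro x ⟨-, hx1⟩ ⟨-, hx2⟩
      have : s (k'+1) ≤ s k := hs_mono h'
      exact absurd (lt_of_lt_of_le hx2.2 (this.trans hx1.1)) (lt_irrefl _)
  -- measure computation
  have hmeasA : ∀ k, μ (A k) = c k := by
    intro k
    have hmeasS : MeasurableSet ((fun x => F (e x)) ⁻¹' (Ico (s k) (s (k+1)))) :=
      Measurable.comp Fmble he measurableSet_Ico
    have h1 : μ (A k) = μ.restrict C ((fun x => F (e x)) ⁻¹' (Ico (s k) (s (k+1)))) := by
      rw [Measure.restrict_apply hmeasS, inter_comm]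
    have h2 : μ.restrict C ((fun x => F (e x)) ⁻¹' (Ico (s k) (s (k+1))))
        = ρ (F ⁻¹' (Ico (s k) (s (k+1)))) := by
      rw [hρ]
      exact (Measure.map_apply he (Fmble measurableSet_Ico)).symm
    have hIco : F ⁻¹' (Ico (s k) (s (k+1))) = {t | F t < s (k+1)} \ {t | F t < s k} := by
      ext t
      simp only [mem_preimage, mem_Ico, mem_diff, mem_setOf_eq, not_lt]
      tauto
    have hSsub : {t | F t < s k} ⊆ {t | F t < s (k+1)} :=
      fun t ht => lt_of_lt_of_le ht (hs_mono (Nat.le_succ k))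
    have hSmbl : MeasurableSet {t | F t < s k} := measurableSet_lt Fmble measurable_const
    have hMeq : (ρ univ).toReal = M := by rw [hρuniv, hM]
    have hB1 : ρ {t | F t < s k} = ENNReal.ofReal (s k) := by
      have := lemB ρ (hs_nonneg k) (by rw [hMeq]; exact hs_le_M k)
      exact this
    have hB2 : ρ {t | F t < s (k+1)} = ENNReal.ofReal (s (k+1)) := by
      have := lemB ρ (hs_nonneg (k+1)) (by rw [hMeq]; exact hs_le_M (k+1))
      exact this
    rw [h1, h2, hIco, measure_diff hSsub hSmbl.nullMeasurableSet
      (ne_top_of_le_ne_top (measure_ne_top ρ _) (measure_mono (subset_univ _))), hB1, hB2,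
      ← ENNReal.ofReal_sub _ (hs_nonneg k), hs_succ]
    · simp only [add_sub_cancel_left]
      rw [hr, ENNReal.ofReal_toReal (hck_ne_top k)]
  have hzero : ∀ k, c k = 0 → A k = ∅ := by
    intro k hk
    have hss : s (k+1) = s k := by simp [hs_succ, hr, hk]
    have hAk : A k = C ∩ (fun x => F (e x)) ⁻¹' (Ico (s k) (s (k+1))) := rfl
    rw [hAk, hss, Ico_self, preimage_empty, inter_empty]
  -- leftover is null
  have hnull : μ (C \ ⋃ k, A k) = 0 := by
    have hU : (⋃ k, A k) ⊆ C := iUnion_subset hsub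
    have hUmbl : MeasurableSet (⋃ k, A k) := MeasurableSet.iUnion hmbl
    have hUmeas : μ (⋃ k, A k) = μ C := by
      rw [measure_iUnion (fun k k' h => hAdisj k k' h) hmbl]
      rw [← hcsum]
      congr 1
      ext k
      exact hmeasA k
    rw [measure_diff hU hUmbl.nullMeasurableSet
      (ne_top_of_le_ne_top (measure_ne_top μ C) (le_of_eq hUmeas)), hUmeas, tsub_self]
  exact ⟨A, hmbl, hsub, hAdisj, hmeasA, hzero, hnull⟩

theorem lpBound {Ω : Type*} [PseudoMetricSpace Ω] [MeasurableSpace Ω] [OpensMeasurableSpace Ω]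
    (μ ν : Measure Ω) [IsFiniteMeasure μ] [IsFiniteMeasure ν] {δ : ℝ} (hδ : 0 ≤ δ)
    (T : ℕ × ℕ → Set Ω) (hTm : ∀ p, MeasurableSet (T p))
    (hTd : ∀ p q, p ≠ q → Disjoint (T p) (T q)) (hTu : (⋃ p, T p) = univ)
    (hdiam : ∀ p, EMetric.diam (T p) ≤ ENNReal.ofReal δ)
    (heq : ∀ p, μ (T p) = ν (T p)) :
    levyProkhorovEDist μ ν ≤ ENNReal.ofReal δ := by
  have side : ∀ (μ' ν' : Measure Ω), (∀ p, μ' (T p) = ν' (T p)) →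
      ∀ (ε : ℝ), δ < ε → ∀ B : Set Ω, μ' B ≤ ν' (thickening ε B) := by
    intro μ' ν' heq' ε hδε B
    set J := {p : ℕ × ℕ | (T p ∩ B).Nonempty} with hJ
    have hBsub : B ⊆ ⋃ p ∈ J, T p := by
      intro x hx
      have hx' : x ∈ ⋃ p, T p := by rw [hTu]; trivial
      obtain ⟨p, hp⟩ := mem_iUnion.mp hx'
      exact mem_biUnion (⟨x, hp, hx⟩ : (T p ∩ B).Nonempty) hp
    have hcnt : J.Countable := J.to_countable
    have hthick : ∀ p ∈ J, T p ⊆ thickening ε B := by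
      rintro p ⟨b, hbT, hbB⟩ x hx
      rw [Metric.mem_thickening_iff]
      refine ⟨b, hbB, ?_⟩
      have h1 : edist x b ≤ ENNReal.ofReal δ := le_trans (EMetric.edist_le_diam_of_mem hx hbT) (hdiam p)
      have h2 : dist x b ≤ δ := by
        rw [dist_edist]
        calc (edist x b).toReal ≤ (ENNReal.ofReal δ).toReal :=
              ENNReal.toReal_mono ENNReal.ofReal_ne_top h1
          _ = δ := ENNReal.toReal_ofReal hδ
      linarith
    calc μ' B ≤ μ' (⋃ p ∈ J, T p) := measure_mono hBsub
      _ = ∑' p : J, μ' (T p) := measure_biUnion hcnt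
            (fun p _ q _ hpq => hTd p q hpq) (fun p _ => hTm p)
      _ = ∑' p : J, ν' (T p) := tsum_congr fun p => heq' p
      _ = ν' (⋃ p ∈ J, T p) := (measure_biUnion hcnt
            (fun p _ q _ hpq => hTd p q hpq) (fun p _ => hTm p)).symm
      _ ≤ ν' (thickening ε B) := measure_mono (iUnion₂_subset hthick)
  apply levyProkhorovEDist_le_of_forall μ ν (ENNReal.ofReal δ)
  intro ε B hε hεtop hB
  have hδε : δ < ε.toReal := by
    have := ENNReal.toReal_strict_mono hεtop.ne hε
    rwa [ENNReal.toReal_ofReal hδ] at this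
  constructor
  · exact le_add_right (side μ ν heq ε.toReal hδε B)
  · exact le_add_right (side ν μ (fun p => (heq p).symm) ε.toReal hδε B)

/-- Proposition 2.3(i): if `μ` is nonatomic, the measures `μ(dx) δ_{φ(x)}(dy)` with `φ`
measurable are weakly dense in the set `Π(μ)` of joint laws with first marginal `μ`. -/
theorem stmt4 {X Y : Type*}
    [TopologicalSpace X] [PolishSpace X] [MeasurableSpace X] [BorelSpace X]
    [TopologicalSpace Y] [PolishSpace Y] [MeasurableSpace Y] [BorelSpace Y]
    (μ : ProbabilityMeasure X)
    (hμ : ∀ x : X, (μ : Measure X) {x} = 0)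
    (P : ProbabilityMeasure (X × Y))
    (h1 : (P : Measure (X × Y)).map Prod.fst = (μ : Measure X)) :
    P ∈ closure {Q : ProbabilityMeasure (X × Y) |
      ∃ φ : X → Y, Measurable φ ∧
        (Q : Measure (X × Y)) = (μ : Measure X).map (fun x => (x, φ x))} := by
  classical
  letI := TopologicalSpace.upgradeIsCompletelyMetrizable X
  letI := TopologicalSpace.upgradeIsCompletelyMetrizable Y
  haveI : NullSingletonClass (μ : Measure X) := ⟨hμ⟩
  haveI : Nonempty Y := P.nonempty.map Prod.snd
  obtain ⟨e, he⟩ := exists_measurableEmbedding_real X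
  have hea : ∀ r : ℝ, (μ : Measure X) (e ⁻¹' {r}) = 0 := by
    intro r
    apply Set.Subsingleton.measure_zero
    intro a ha b hb
    exact he.injective (ha.trans hb.symm)
  set Pm : Measure (X × Y) := (P : Measure (X × Y)) with hPm
  have key : ∀ δ : ℝ, 0 < δ → ∃ Q : ProbabilityMeasure (X × Y),
      (∃ φ : X → Y, Measurable φ ∧
        (Q : Measure (X × Y)) = (μ : Measure X).map (fun x => (x, φ x))) ∧
      levyProkhorovEDist (Q : Measure (X × Y)) Pm ≤ ENNReal.ofReal δ := by
    intro δ δpos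
    obtain ⟨Bs, hBm, hBb, hBd, hBu, hBdisj⟩ :=
      SeparableSpace.exists_measurable_partition_diam_le Y δpos
    obtain ⟨Cs, hCm, hCb, hCd, hCu, hCdisj⟩ :=
      SeparableSpace.exists_measurable_partition_diam_le X δpos
    set y : ℕ → Y := fun k => if h : (Bs k).Nonempty then h.choose else Classical.arbitrary Y
      with hy_def
    have hy : ∀ k, (Bs k).Nonempty → y k ∈ Bs k := by
      intro k h
      simp only [hy_def, dif_pos h]
      exact h.choose_spec
    set c : ℕ → ℕ → ℝ≥0∞ := fun j k => Pm (Cs j ×ˢ Bs k) with hc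
    have hfst : ∀ s : Set X, MeasurableSet s → Pm (s ×ˢ univ) = (μ : Measure X) s := by
      intro s hs
      rw [← h1, Measure.map_apply measurable_fst hs, Set.prod_univ]
    have hcsum : ∀ j, ∑' k, c j k = (μ : Measure X) (Cs j) := by
      intro j
      rw [hc]
      have h2 : (⋃ k, Cs j ×ˢ Bs k) = Cs j ×ˢ univ := by
        rw [← Set.prod_iUnion, hBu]
      rw [← measure_iUnion (fun k k' hkk' => Set.Disjoint.set_prod_right (hBdisj hkk') _ _)
        (fun k => (hCm j).prod (hBm k)), h2, hfst _ (hCm j)]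
    choose A hAm hAsub hAdisj hAmeas hAzero hAnull using fun j =>
      splitLemma (μ : Measure X) e he.measurable hea (Cs j) (hCm j) (c j) (hcsum j)
    have hGlob : ∀ j k j' k', (j, k) ≠ (j', k') → Disjoint (A j k) (A j' k') := by
      intro j k j' k' hne
      rcases eq_or_ne j j' with rfl | hjj'
      · have hkk' : k ≠ k' := by
          intro h; exact hne (by rw [h])
        exact hAdisj j k k' hkk'
      · exact ((hCdisj hjj').mono (hAsub j k) (hAsub j' k'))
    set D : ℕ → Set X := fun k => ⋃ j, A j k with hD
    have hDdisj : ∀ k k', k ≠ k' → Disjoint (D k) (D k') := by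
      intro k k' hkk'
      rw [hD]
      simp only
      rw [Set.disjoint_iUnion_left]
      intro j
      rw [Set.disjoint_iUnion_right]
      intro j'
      exact hGlob j k j' k' (by simp [hkk'])
    set E : Set X := ⋃ k, D k with hE
    set K : X → ℕ := fun x => if h : ∃ k, x ∈ D k then h.choose else 0 with hK_def
    have hK : ∀ {x k}, x ∈ D k → K x = k := by
      intro x k hx
      have hex : ∃ k', x ∈ D k' := ⟨k, hx⟩
      have h2 : x ∈ D hex.choose := hex.choose_spec
      have h3 : K x = hex.choose := by simp only [hK_def, dif_pos hex]
      rw [h3]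
      by_contra hne
      exact Set.disjoint_left.mp (hDdisj _ _ hne) h2 hx
    have hKnot : ∀ {x}, x ∉ E → K x = 0 := by
      intro x hx
      have : ¬ ∃ k, x ∈ D k := by
        intro ⟨k, hk⟩; exact hx (Set.mem_iUnion.mpr ⟨k, hk⟩)
      simp only [hK_def, dif_neg this]
    have hDm : ∀ k, MeasurableSet (D k) := fun k => MeasurableSet.iUnion (fun j => hAm j k)
    have hEm : MeasurableSet E := MeasurableSet.iUnion hDm
    have hKm : Measurable K := by
      apply measurable_to_countable'
      intro k
      have hpre : K ⁻¹' {k} = D k ∪ (if k = 0 then Eᶜ else ∅) := by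
        ext x
        simp only [mem_preimage, mem_singleton_iff, mem_union]
        constructor
        · intro hKx
          by_cases hxE : x ∈ E
          · obtain ⟨k', hk'⟩ := Set.mem_iUnion.mp hxE
            have h5 : k = k' := hKx.symm.trans (hK hk')
            left; rwa [← h5] at hk'
          · right
            have h0 : k = 0 := by rw [← hKx]; exact hKnot hxE
            rw [if_pos h0]; exact hxE
        · intro h
          rcases h with h | h
          · exact hK h
          · rcases eq_or_ne k 0 with rfl | hk0
            · rw [if_pos rfl] at h
              exact hKnot h
            · rw [if_neg hk0] at h
              exact absurd h (notMem_empty x)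
      rw [hpre]
      apply (hDm k).union
      split
      · exact hEm.compl
      · exact MeasurableSet.empty
    set ψ : X → Y := fun x => y (K x) with hψ_def
    have hψ : Measurable ψ := Measurable.comp (measurable_from_nat (f := y)) hKm
    set f : X → X × Y := fun x => (x, ψ x) with hf_def
    have hf : Measurable f := measurable_id.prodMk hψ
    haveI : IsProbabilityMeasure ((μ : Measure X).map f) :=
      Measure.isProbabilityMeasure_map hf.aemeasurable
    refine ⟨⟨(μ : Measure X).map f, inferInstance⟩, ⟨ψ, hψ, rfl⟩, ?_⟩
    -- non-emptiness of Bs k when A j k is nonempty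
    have hBsne : ∀ j k, (A j k).Nonempty → (Bs k).Nonempty := by
      intro j k hne
      rw [Set.nonempty_iff_ne_empty]
      intro hemp
      have : c j k = 0 := by rw [hc]; simp [hemp]
      exact Set.nonempty_iff_ne_empty.mp hne (hAzero j k this)
    have hEc : (μ : Measure X) Eᶜ = 0 := by
      have hsub : Eᶜ ⊆ ⋃ j, (Cs j \ ⋃ k, A j k) := by
        intro x hx
        have hxU : x ∈ ⋃ j, Cs j := by rw [hCu]; trivial
        obtain ⟨j, hj⟩ := Set.mem_iUnion.mp hxU
        refine Set.mem_iUnion.mpr ⟨j, hj, ?_⟩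
        intro hxA
        obtain ⟨k, hk⟩ := Set.mem_iUnion.mp hxA
        exact hx (Set.mem_iUnion.mpr ⟨k, Set.mem_iUnion.mpr ⟨j, hk⟩⟩)
      exact measure_mono_null hsub (measure_iUnion_null fun j => hAnull j)
    -- cell identity
    have hcell : ∀ j k, ((μ : Measure X).map f) (Cs j ×ˢ Bs k) = Pm (Cs j ×ˢ Bs k) := by
      intro j k
      rw [Measure.map_apply hf ((hCm j).prod (hBm k))]
      have hpre : f ⁻¹' (Cs j ×ˢ Bs k) = Cs j ∩ ψ ⁻¹' (Bs k) := by
        ext x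
        simp [hf_def, Set.mem_prod]
      rw [hpre]
      have hsub1 : A j k ⊆ Cs j ∩ ψ ⁻¹' (Bs k) := by
        intro x hx
        refine ⟨hAsub j k hx, ?_⟩
        have hxD : x ∈ D k := Set.mem_iUnion.mpr ⟨j, hx⟩
        have : ψ x = y k := by rw [hψ_def]; simp only; rw [hK hxD]
        rw [Set.mem_preimage, this]
        exact hy k (hBsne j k ⟨x, hx⟩)
      have hsub2 : Cs j ∩ ψ ⁻¹' (Bs k) ⊆ A j k ∪ Eᶜ := by
        rintro x ⟨hxC, hxψ⟩
        by_cases hxE : x ∈ E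
        · obtain ⟨k', hk'⟩ := Set.mem_iUnion.mp hxE
          obtain ⟨j', hj'⟩ := Set.mem_iUnion.mp hk'
          have hψx : ψ x = y k' := by rw [hψ_def]; simp only; rw [hK hk']
          have hyk' : y k' ∈ Bs k' := hy k' (hBsne j' k' ⟨x, hj'⟩)
          have hkk' : k' = k := by
            by_contra hne
            have := hBdisj hne
            rw [Set.mem_preimage, hψx] at hxψ
            exact Set.disjoint_left.mp this hyk' hxψ
          subst hkk'
          have hjj' : j' = j := by
            by_contra hne
            exact Set.disjoint_left.mp (hCdisj hne) (hAsub j' k' hj') hxC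
          subst hjj'
          exact Or.inl hj'
        · exact Or.inr hxE
      apply le_antisymm
      · calc (μ : Measure X) (Cs j ∩ ψ ⁻¹' (Bs k)) ≤ (μ : Measure X) (A j k ∪ Eᶜ) :=
              measure_mono hsub2
          _ ≤ (μ : Measure X) (A j k) + (μ : Measure X) Eᶜ := measure_union_le _ _
          _ = Pm (Cs j ×ˢ Bs k) := by rw [hEc, add_zero, hAmeas j k, hc]
      · calc Pm (Cs j ×ˢ Bs k) = (μ : Measure X) (A j k) := by rw [hAmeas j k, hc]
          _ ≤ (μ : Measure X) (Cs j ∩ ψ ⁻¹' (Bs k)) := measure_mono hsub1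
    -- apply lpBound
    set T : ℕ × ℕ → Set (X × Y) := fun p => Cs p.1 ×ˢ Bs p.2 with hT
    have hTm : ∀ p, MeasurableSet (T p) := fun p => (hCm p.1).prod (hBm p.2)
    have hTd : ∀ p q, p ≠ q → Disjoint (T p) (T q) := by
      intro p q hpq
      rcases eq_or_ne p.1 q.1 with h1' | h1'
      · have h2 : p.2 ≠ q.2 := by
          intro h2; exact hpq (Prod.ext h1' h2)
        exact Set.Disjoint.set_prod_right (hBdisj h2) _ _
      · exact Set.Disjoint.set_prod_left (hCdisj h1') _ _
    have hTu : (⋃ p, T p) = univ := by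
      ext z
      simp only [mem_iUnion, mem_univ, iff_true]
      have hz1 : z.1 ∈ ⋃ j, Cs j := by rw [hCu]; trivial
      have hz2 : z.2 ∈ ⋃ k, Bs k := by rw [hBu]; trivial
      obtain ⟨j, hj⟩ := Set.mem_iUnion.mp hz1
      obtain ⟨k, hk⟩ := Set.mem_iUnion.mp hz2
      exact ⟨(j, k), hj, hk⟩
    have hdiam : ∀ p, EMetric.diam (T p) ≤ ENNReal.ofReal δ := by
      intro p
      apply EMetric.diam_le
      rintro a ⟨ha1, ha2⟩ b ⟨hb1, hb2⟩
      rw [Prod.edist_eq]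
      have hb1' : edist a.1 b.1 ≤ ENNReal.ofReal δ := by
        calc edist a.1 b.1 ≤ Metric.ediam (Cs p.1) := EMetric.edist_le_diam_of_mem ha1 hb1
          _ ≤ ENNReal.ofReal δ := by
              rw [ENNReal.le_ofReal_iff_toReal_le (hCb p.1).ediam_ne_top δpos.le]
              exact hCd p.1
      have hb2' : edist a.2 b.2 ≤ ENNReal.ofReal δ := by
        calc edist a.2 b.2 ≤ Metric.ediam (Bs p.2) := EMetric.edist_le_diam_of_mem ha2 hb2
          _ ≤ ENNReal.ofReal δ := by
              rw [ENNReal.le_ofReal_iff_toReal_le (hBb p.2).ediam_ne_top δpos.le]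
              exact hBd p.2
      exact max_le hb1' hb2'
    exact lpBound ((μ : Measure X).map f) Pm δpos.le T hTm hTd hTu hdiam (fun p => hcell p.1 p.2)
  -- conclude by metrizability of the Lévy-Prokhorov distance
  have seq : ∀ n : ℕ, ∃ Q : ProbabilityMeasure (X × Y),
      (∃ φ : X → Y, Measurable φ ∧
        (Q : Measure (X × Y)) = (μ : Measure X).map (fun x => (x, φ x))) ∧
      levyProkhorovEDist (Q : Measure (X × Y)) Pm ≤ ENNReal.ofReal (1 / (n + 1)) :=
    fun n => key (1 / (n + 1)) (by positivity)
  choose Qn hQn1 hQn2 using seq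
  set h : ProbabilityMeasure (X × Y) ≃ₜ LevyProkhorov (ProbabilityMeasure (X × Y)) :=
    LevyProkhorov.probabilityMeasureHomeomorph (Ω := X × Y) with hh
  have htendLP : Tendsto (fun n => h (Qn n)) atTop (𝓝 (h P)) := by
    rw [tendsto_iff_dist_tendsto_zero]
    apply squeeze_zero (fun n => dist_nonneg) (fun n => ?_)
      tendsto_one_div_add_atTop_nhds_zero_nat
    have hdd : dist (h (Qn n)) (h P) = levyProkhorovDist ((Qn n : Measure (X × Y))) Pm := rfl
    rw [hdd, levyProkhorovDist]
    calc (levyProkhorovEDist ((Qn n : Measure (X × Y))) Pm).toReal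
        ≤ (ENNReal.ofReal (1 / (n + 1))).toReal :=
          ENNReal.toReal_mono ENNReal.ofReal_ne_top (hQn2 n)
      _ = 1 / (n + 1) := ENNReal.toReal_ofReal (by positivity)
  have htend : Tendsto Qn atTop (𝓝 P) := by
    have h2 := (h.symm.continuous.tendsto (h P)).comp htendLP
    simpa [Function.comp_def] using h2
  exact mem_closure_of_tendsto htend (Eventually.of_forall fun n => hQn1 n)
end

section
/- Let (Ω, F, P) be a probability space with filtrations F = (F_t)_{t≥0} and G = (G_t)_{t≥0}, and let H be a sub-σ-field. Let T ⊂ [0,∞) be dense. If for every t ∈ T, F_t is conditionally independent of H given G_t, then for every t ∈ [0,∞), the right-continuous σ-field F_{t+} = ∩_{s>t} F_s is conditionally independent of H given G_{t+} = ∩_{s>t} G_s. -/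
open MeasureTheory Filter Topology
open RealInnerProductSpace

/-- Conditional independence of `m₁` and `m₂` given `m` under `μ`:
`E[1_{A∩B} | m] = E[1_A | m] E[1_B | m]` a.s. for all `A ∈ m₁`, `B ∈ m₂`. -/
def CondIndepGiven {Ω : Type*} {mΩ : MeasurableSpace Ω} (μ : Measure Ω)
    (m₁ m₂ m : MeasurableSpace Ω) : Prop :=
  ∀ A B : Set Ω, MeasurableSet[m₁] A → MeasurableSet[m₂] B →
    μ[(A ∩ B).indicator (fun _ => (1 : ℝ)) | m] =ᵐ[μ]
      μ[A.indicator (fun _ => (1 : ℝ)) | m] * μ[B.indicator (fun _ => (1 : ℝ)) | m]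

section Helpers

variable {Ω : Type*} {m mΩ : MeasurableSpace Ω} {μ : Measure Ω}


lemma myIntegrable_of_bound [IsFiniteMeasure μ] {f : Ω → ℝ}
    (hf : AEStronglyMeasurable f μ) (hbd : ∀ᵐ ω ∂μ, |f ω| ≤ 1) : Integrable f μ :=
  (memLp_top_of_bound hf 1 (by simpa [Real.norm_eq_abs] using hbd)).integrable le_top

lemma myIntegral_mul_condexp [IsProbabilityMeasure μ] {m : MeasurableSpace Ω} (hm : m ≤ mΩ)
    {f g : Ω → ℝ} (hfm : StronglyMeasurable[m] f) (hfb : ∀ᵐ ω ∂μ, |f ω| ≤ 1)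
    (hg : Integrable g μ) :
    ∫ ω, f ω * g ω ∂μ = ∫ ω, f ω * (μ[g|m]) ω ∂μ := by
  have hfg : Integrable (fun ω => f ω * g ω) μ :=
    hg.bdd_mul ((hfm.mono hm).aestronglyMeasurable) (by simpa [Real.norm_eq_abs] using hfb)
  have h := condExp_mul_of_stronglyMeasurable_left hfm hfg hg
  calc ∫ ω, f ω * g ω ∂μ = ∫ ω, (μ[f * g|m]) ω ∂μ := (integral_condExp hm).symm
    _ = ∫ ω, f ω * (μ[g|m]) ω ∂μ := integral_congr_ae h

lemma my_condexp_indicator_bdd [IsProbabilityMeasure μ] {m : MeasurableSpace Ω} (A : Set Ω) :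
    ∀ᵐ ω ∂μ, |(μ[A.indicator (fun _ => (1:ℝ))|m]) ω| ≤ 1 := by
  have := ae_bdd_condExp_of_ae_bdd (μ := μ) (m := m) (R := 1)
    (f := A.indicator (fun _ => (1:ℝ)))
    (Eventually.of_forall fun ω => by
      by_cases h : ω ∈ A <;> simp [Set.indicator_of_mem, Set.indicator_of_notMem, h])
  simpa using this


lemma mySetIntegral_condexp_mul [IsProbabilityMeasure μ] (hm : m ≤ mΩ)
    {A B C : Set Ω} (hA : MeasurableSet A) (hB : MeasurableSet B) (hC : MeasurableSet[m] C) :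
    ∫ ω in C, ((μ[A.indicator (fun _ => (1:ℝ))|m]) ω * (μ[B.indicator (fun _ => (1:ℝ))|m]) ω) ∂μ
      = ∫ ω in B ∩ C, (μ[A.indicator (fun _ => (1:ℝ))|m]) ω ∂μ := by
  set ZA := μ[A.indicator (fun _ => (1:ℝ))|m] with hZA
  set ZB := μ[B.indicator (fun _ => (1:ℝ))|m] with hZB
  have hCm : MeasurableSet C := hm _ hC
  have hfm : StronglyMeasurable[m] (C.indicator ZA) :=
    stronglyMeasurable_condExp.indicator hC
  have hfb : ∀ᵐ ω ∂μ, |C.indicator ZA ω| ≤ 1 := by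
    filter_upwards [my_condexp_indicator_bdd (μ := μ) (m := m) A] with ω hω
    by_cases h : ω ∈ C <;> simp [Set.indicator_of_mem, Set.indicator_of_notMem, h, hω, hZA]
  have hgint : Integrable (B.indicator (fun _ => (1:ℝ))) μ :=
    (integrable_const (1:ℝ)).indicator hB
  calc ∫ ω in C, (ZA ω * ZB ω) ∂μ
      = ∫ ω, C.indicator (fun ω => ZA ω * ZB ω) ω ∂μ := (integral_indicator hCm).symm
    _ = ∫ ω, C.indicator ZA ω * ZB ω ∂μ := by
        refine integral_congr_ae (Eventually.of_forall fun ω => ?_)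
        by_cases h : ω ∈ C <;>
          simp [Set.indicator_of_mem, Set.indicator_of_notMem, h]
    _ = ∫ ω, C.indicator ZA ω * B.indicator (fun _ => (1:ℝ)) ω ∂μ := by
        rw [← myIntegral_mul_condexp hm hfm hfb hgint]
    _ = ∫ ω, B.indicator (C.indicator ZA) ω ∂μ := by
        refine integral_congr_ae (Eventually.of_forall fun ω => ?_)
        by_cases h : ω ∈ B <;>
          simp [Set.indicator_of_mem, Set.indicator_of_notMem, h]
    _ = ∫ ω in B, C.indicator ZA ω ∂μ := integral_indicator hB
    _ = ∫ ω in B ∩ C, ZA ω ∂μ := setIntegral_indicator hCm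

lemma myStep [IsProbabilityMeasure μ] (hm : m ≤ mΩ)
    {A B C : Set Ω} (hA : MeasurableSet A) (hB : MeasurableSet B) (hC : MeasurableSet[m] C)
    (hci : μ[(A ∩ B).indicator (fun _ => (1:ℝ))|m] =ᵐ[μ]
      μ[A.indicator (fun _ => (1:ℝ))|m] * μ[B.indicator (fun _ => (1:ℝ))|m]) :
    ∫ ω in B ∩ C, (μ[A.indicator (fun _ => (1:ℝ))|m]) ω ∂μ = (μ (A ∩ B ∩ C)).toReal := by
  have hint : Integrable ((A ∩ B).indicator (fun _ => (1:ℝ))) μ :=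
    (integrable_const (1:ℝ)).indicator (hA.inter hB)
  rw [← mySetIntegral_condexp_mul hm hA hB hC]
  have h1 : ∫ ω in C, ((μ[A.indicator (fun _ => (1:ℝ))|m]) ω *
      (μ[B.indicator (fun _ => (1:ℝ))|m]) ω) ∂μ
      = ∫ ω in C, (μ[(A ∩ B).indicator (fun _ => (1:ℝ))|m]) ω ∂μ :=
    integral_congr_ae (ae_restrict_of_ae (hci.symm.mono fun ω hω => by simpa using hω))
  rw [h1, setIntegral_condExp hm hint hC, setIntegral_indicator (hA.inter hB),
    setIntegral_const, smul_eq_mul, mul_one, Set.inter_comm C (A ∩ B), measureReal_def]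

lemma myExistsSeq (T : Set NNReal) (hT : Dense T) (t : NNReal) :
    ∃ u : ℕ → NNReal, (∀ n, u n ∈ T) ∧ (∀ n, t < u n) ∧ Antitone u ∧
      ∀ s, t < s → ∃ n, u n ≤ s := by
  obtain ⟨v, hv_anti, hv_mem, hv_tendsto⟩ := exists_seq_strictAnti_tendsto t
  have key : ∀ x : {x : NNReal // t < x}, ∃ y, y ∈ T ∧ y ∈ Set.Ioo t x.1 := by
    intro x
    obtain ⟨y, hyT, hy⟩ := hT.exists_mem_open isOpen_Ioo (Set.nonempty_Ioo.2 x.2)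
    exact ⟨y, hyT, hy⟩
  choose f hfT hfmem using key
  let step : ℕ → {x : NNReal // t < x} → {x : NNReal // t < x} := fun n p =>
    ⟨f ⟨min p.1 (v (n+1)), lt_min p.2 (hv_mem (n+1))⟩, (hfmem _).1⟩
  let w : ℕ → {x : NNReal // t < x} := fun n =>
    Nat.rec ⟨f ⟨v 0, hv_mem 0⟩, (hfmem _).1⟩ step n
  have hw_succ : ∀ n, w (n+1) = step n (w n) := fun n => rfl
  refine ⟨fun n => (w n).1, ?_, fun n => (w n).2, ?_, ?_⟩
  · intro n
    cases n with
    | zero => exact hfT _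
    | succ n => exact hfT _
  · apply antitone_nat_of_succ_le
    intro n
    have := (hfmem ⟨min (w n).1 (v (n+1)), lt_min (w n).2 (hv_mem (n+1))⟩).2
    calc (w (n+1)).1 ≤ min (w n).1 (v (n+1)) := le_of_lt this
      _ ≤ (w n).1 := min_le_left _ _
  · intro s hs
    obtain ⟨n, hn⟩ := (hv_tendsto.eventually_lt_const hs).exists
    refine ⟨n + 1, ?_⟩
    have h1 := (hfmem ⟨min (w n).1 (v (n+1)), lt_min (w n).2 (hv_mem (n+1))⟩).2
    have h2 : v (n+1) ≤ v n := le_of_lt (hv_anti (Nat.lt_succ_self n))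
    calc (w (n+1)).1 ≤ min (w n).1 (v (n+1)) := le_of_lt h1
      _ ≤ v (n+1) := min_le_right _ _
      _ ≤ v n := h2
      _ ≤ s := le_of_lt hn


lemma myLevyDown {Ω : Type*} {mΩ : MeasurableSpace Ω} (μ : Measure Ω) [IsProbabilityMeasure μ]
    (m : ℕ → MeasurableSpace Ω) (hle : ∀ n, m n ≤ mΩ) (hanti : Antitone m)
    {X : Ω → ℝ} (hX : Measurable X) (hbdd : ∀ ω, |X ω| ≤ 1)
    {D : Set Ω} (hD : MeasurableSet D) :
    Tendsto (fun n => ∫ ω in D, (μ[X|m n]) ω ∂μ) atTop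
      (𝓝 (∫ ω in D, (μ[X|⨅ n, m n]) ω ∂μ)) := by
  have hXint : Integrable X μ :=
    (memLp_top_of_bound hX.aestronglyMeasurable 1
      (Eventually.of_forall fun ω => by simpa [Real.norm_eq_abs] using hbdd ω)).integrable le_top
  set Z : ℕ → Ω → ℝ := fun n => μ[X|m n] with hZdef
  have hZm : ∀ n, StronglyMeasurable[m n] (Z n) := fun n => stronglyMeasurable_condExp
  have hZbd : ∀ n, ∀ᵐ ω ∂μ, |Z n ω| ≤ 1 := by
    intro n
    have := ae_bdd_condExp_of_ae_bdd (μ := μ) (m := m n) (R := 1) (f := X)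
      (Eventually.of_forall fun ω => by simpa using hbdd ω)
    simpa using this
  have hZms : ∀ n, AEStronglyMeasurable (Z n) μ := fun n =>
    ((hZm n).mono (hle n)).aestronglyMeasurable
  have hZ2 : ∀ n, MemLp (Z n) 2 μ := fun n =>
    MemLp.of_bound (hZms n) 1 (by simpa [Real.norm_eq_abs] using hZbd n)
  have tower : ∀ {N n : ℕ}, N ≤ n → μ[Z N | m n] =ᵐ[μ] Z n := fun {N n} h =>
    condExp_condExp_of_le (hanti h) (hle N)
  have hprod_int : ∀ i j : ℕ, Integrable (fun ω => Z i ω * Z j ω) μ := fun i j =>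
    integrable_condExp.bdd_mul (hZms i) (by simpa [Real.norm_eq_abs] using hZbd i)
  have hZZ : ∀ {N n : ℕ}, N ≤ n → ∫ ω, Z N ω * Z n ω ∂μ = ∫ ω, Z n ω * Z n ω ∂μ := by
    intro N n h
    calc ∫ ω, Z N ω * Z n ω ∂μ = ∫ ω, Z n ω * Z N ω ∂μ := by simp_rw [mul_comm]
      _ = ∫ ω, Z n ω * (μ[Z N| m n]) ω ∂μ :=
          myIntegral_mul_condexp (hle n) (hZm n) (hZbd n) integrable_condExp
      _ = ∫ ω, Z n ω * Z n ω ∂μ :=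
          integral_congr_ae ((tower h).mono fun ω hω => by dsimp only; rw [hω])
  set a : ℕ → ℝ := fun n => ∫ ω, Z n ω * Z n ω ∂μ with ha
  have hsq : ∀ N n : ℕ, N ≤ n →
      ∫ ω, (Z N ω - Z n ω) * (Z N ω - Z n ω) ∂μ = a N - a n := by
    intro N n h
    have hfun : (fun ω => (Z N ω - Z n ω) * (Z N ω - Z n ω))
        = fun ω => Z N ω * Z N ω - (2 : ℝ) * (Z N ω * Z n ω) + Z n ω * Z n ω := by
      funext ω; ring
    have i2 : Integrable (fun ω => (2 : ℝ) * (Z N ω * Z n ω)) μ := (hprod_int N n).const_mul 2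
    have i1 : Integrable (fun ω => Z N ω * Z N ω - (2 : ℝ) * (Z N ω * Z n ω)) μ :=
      (hprod_int N N).sub i2
    rw [hfun, integral_add i1 (hprod_int n n), integral_sub (hprod_int N N) i2,
      MeasureTheory.integral_const_mul, hZZ h]
    simp only [ha]
    ring
  have ha_nonneg : ∀ n, 0 ≤ a n := fun n => integral_nonneg fun ω => mul_self_nonneg _
  have ha_anti : Antitone a := by
    intro N n h
    have h1 := hsq N n h
    have h2 : 0 ≤ ∫ ω, (Z N ω - Z n ω) * (Z N ω - Z n ω) ∂μ :=
      integral_nonneg fun ω => mul_self_nonneg _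
    linarith
  have hbb : BddBelow (Set.range a) := ⟨0, by rintro x ⟨n, rfl⟩; exact ha_nonneg n⟩
  set L : ℝ := ⨅ n, a n with hL
  have haL : Tendsto a atTop (𝓝 L) := tendsto_atTop_ciInf ha_anti hbb
  have hL_le : ∀ n, L ≤ a n := fun n => ciInf_le hbb n
  set ZL : ℕ → Lp ℝ 2 μ := fun n => (hZ2 n).toLp (Z n) with hZL
  have hnorm : ∀ N n : ℕ, N ≤ n → ‖ZL N - ZL n‖ ^ 2 = a N - a n := by
    intro N n h
    rw [← real_inner_self_eq_norm_sq, L2.inner_def]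
    have hcoe : (⇑(ZL N - ZL n) : Ω → ℝ) =ᵐ[μ] fun ω => Z N ω - Z n ω :=
      (Lp.coeFn_sub _ _).trans (((hZ2 N).coeFn_toLp).sub ((hZ2 n).coeFn_toLp))
    calc ∫ ω, ⟪(ZL N - ZL n) ω, (ZL N - ZL n) ω⟫ ∂μ
        = ∫ ω, (Z N ω - Z n ω) * (Z N ω - Z n ω) ∂μ := by
          refine integral_congr_ae (hcoe.mono fun ω hω => ?_)
          simp only [RCLike.inner_apply, conj_trivial, hω]
      _ = a N - a n := hsq N n h
  have hcauchy : CauchySeq ZL := by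
    apply cauchySeq_of_le_tendsto_0 (fun N => Real.sqrt (a N - L))
    · intro n k N hn hk
      have key : ∀ i j : ℕ, N ≤ i → i ≤ j → dist (ZL i) (ZL j) ≤ Real.sqrt (a N - L) := by
        intro i j hNi hij
        rw [dist_eq_norm]
        have h2 : ‖ZL i - ZL j‖ ^ 2 = a i - a j := hnorm i j hij
        have h3 : ‖ZL i - ZL j‖ = Real.sqrt (a i - a j) := by
          rw [← h2]; exact (Real.sqrt_sq (norm_nonneg _)).symm
        rw [h3]
        refine Real.sqrt_le_sqrt ?_
        have h4 := ha_anti hNi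
        have h5 := hL_le j
        linarith
      rcases le_total n k with h | h
      · exact key n k hn h
      · rw [dist_comm]; exact key k n hk h
    · have h0 : Tendsto (fun N => a N - L) atTop (𝓝 0) := by
        simpa using haL.sub (tendsto_const_nhds (x := L))
      have := (Real.continuous_sqrt.tendsto 0).comp h0
      simpa [Function.comp_def] using this
  obtain ⟨Zlim, hZlim⟩ := cauchySeq_tendsto_of_complete hcauchy
  -- set integrals converge
  have hsetconv : ∀ {s : Set Ω}, MeasurableSet s →
      Tendsto (fun n => ∫ ω in s, Z n ω ∂μ) atTop (𝓝 (∫ ω in s, Zlim ω ∂μ)) := by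
    intro s hs
    have hs2 : MemLp (s.indicator (fun _ => (1:ℝ))) 2 μ :=
      MemLp.of_bound ((stronglyMeasurable_const.indicator hs).aestronglyMeasurable) 1
        (Eventually.of_forall fun ω => by
          by_cases h : ω ∈ s <;>
            simp [Set.indicator_of_mem, Set.indicator_of_notMem, h])
    set IS : Lp ℝ 2 μ := hs2.toLp _ with hIS
    have hinner : ∀ g : Lp ℝ 2 μ, ⟪IS, g⟫ = ∫ ω in s, g ω ∂μ := by
      intro g
      rw [L2.inner_def, ← integral_indicator hs]
      refine integral_congr_ae ?_
      filter_upwards [hs2.coeFn_toLp] with ω hω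
      simp only [RCLike.inner_apply, conj_trivial]
      rw [show IS ω = s.indicator (fun _ => (1:ℝ)) ω from hω]
      by_cases h : ω ∈ s <;>
        simp [Set.indicator_of_mem, Set.indicator_of_notMem, h]
    have h2 : Tendsto (fun n => ⟪IS, ZL n⟫) atTop (𝓝 ⟪IS, Zlim⟫) :=
      (tendsto_const_nhds (x := IS)).inner hZlim
    have h3 : ∀ n, ⟪IS, ZL n⟫ = ∫ ω in s, Z n ω ∂μ := by
      intro n
      rw [hinner]
      exact integral_congr_ae (ae_restrict_of_ae ((hZ2 n).coeFn_toLp))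
    rw [hinner] at h2
    simp only [h3] at h2
    exact h2
  -- identify the limit with the conditional expectation
  have hm_inf : (⨅ n, m n) ≤ mΩ := (iInf_le m 0).trans (hle 0)
  have hmeas_lim : TendstoInMeasure μ (fun n => ⇑(ZL n)) atTop ⇑Zlim :=
    tendstoInMeasure_of_tendsto_Lp hZlim
  obtain ⟨ns, hns_mono, hns_ae⟩ := hmeas_lim.exists_seq_tendsto_ae
  have hns_ae' : ∀ᵐ ω ∂μ, Tendsto (fun k => Z (ns k) ω) atTop (𝓝 (Zlim ω)) := by
    have hae : ∀ᵐ ω ∂μ, ∀ k, (ZL (ns k)) ω = Z (ns k) ω :=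
      ae_all_iff.2 fun k => (hZ2 (ns k)).coeFn_toLp
    filter_upwards [hns_ae, hae] with ω h1 h2
    exact h1.congr fun k => h2 k
  set g0 : Ω → ℝ := fun ω => liminf (fun k => Z (ns k) ω) atTop with hg0
  have hg0_ae : g0 =ᵐ[μ] ⇑Zlim := hns_ae'.mono fun ω hω => hω.liminf_eq
  have hg0_measN : ∀ N, Measurable[m N] g0 := by
    intro N
    have hrw : g0 = fun ω => liminf (fun k => Z (ns (k + N)) ω) atTop := by
      funext ω
      exact (liminf_nat_add (fun k => Z (ns k) ω) N).symm
    rw [hrw]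
    refine Measurable.liminf fun k => ?_
    have hk : N ≤ ns (k + N) := le_trans (Nat.le_add_left N k) (hns_mono.id_le (k + N))
    exact ((hZm (ns (k + N))).measurable).mono (hanti hk) le_rfl
  have hg0_meas : Measurable[⨅ n, m n] g0 := by
    intro u hu
    rw [MeasurableSpace.measurableSet_iInf]
    exact fun n => hg0_measN n hu
  have hZlim_int : Integrable (⇑Zlim) μ := (Lp.memLp Zlim).integrable one_le_two
  have hg0_int : Integrable g0 μ := hZlim_int.congr hg0_ae.symm
  have hset : ∀ s : Set Ω, MeasurableSet[⨅ n, m n] s →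
      ∫ ω in s, g0 ω ∂μ = ∫ ω in s, X ω ∂μ := by
    intro s hs
    have hs' : MeasurableSet s := hm_inf s hs
    have hsn : ∀ n, MeasurableSet[m n] s := fun n =>
      (MeasurableSpace.measurableSet_iInf.1 hs) n
    have hconst : ∀ k, ∫ ω in s, Z (ns k) ω ∂μ = ∫ ω in s, X ω ∂μ := fun k =>
      setIntegral_condExp (hle (ns k)) hXint (hsn (ns k))
    have h1 : Tendsto (fun k => ∫ ω in s, Z (ns k) ω ∂μ) atTop (𝓝 (∫ ω in s, Zlim ω ∂μ)) :=
      (hsetconv hs').comp hns_mono.tendsto_atTop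
    have h2 : Tendsto (fun _ : ℕ => ∫ ω in s, X ω ∂μ) atTop (𝓝 (∫ ω in s, Zlim ω ∂μ)) :=
      h1.congr fun k => hconst k
    have h3 : ∫ ω in s, Zlim ω ∂μ = ∫ ω in s, X ω ∂μ :=
      tendsto_nhds_unique h2 tendsto_const_nhds
    rw [integral_congr_ae (ae_restrict_of_ae hg0_ae), h3]
  have hfinal : g0 =ᵐ[μ] μ[X|⨅ n, m n] :=
    ae_eq_condExp_of_forall_setIntegral_eq hm_inf hXint
      (fun s _ _ => hg0_int.integrableOn)
      (fun s hs _ => hset s hs)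
      ((Measurable.stronglyMeasurable hg0_meas).aestronglyMeasurable)
  have hkey : ∫ ω in D, Zlim ω ∂μ = ∫ ω in D, (μ[X|⨅ n, m n]) ω ∂μ :=
    integral_congr_ae (ae_restrict_of_ae (hg0_ae.symm.trans hfinal))
  rw [← hkey]
  exact hsetconv hD

end Helpers

/-- Lemma 3.6: if `F_t` is conditionally independent of `H` given `G_t` for all `t` in a
dense set `T`, then `F_{t+}` is conditionally independent of `H` given `G_{t+}` for all `t`. -/

theorem stmt8 {Ω : Type*} {mΩ : MeasurableSpace Ω}
    (μ : Measure Ω) [IsProbabilityMeasure μ]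
    (F G : Filtration NNReal mΩ) (H : MeasurableSpace Ω) (hH : H ≤ mΩ)
    (T : Set NNReal) (hT : Dense T)
    (hind : ∀ t ∈ T, CondIndepGiven μ (F t) H (G t)) :
    ∀ t : NNReal,
      CondIndepGiven μ (⨅ s ∈ Set.Ioi t, F s) H (⨅ s ∈ Set.Ioi t, G s) := by
  intro t A B hA hB
  letI : MeasurableSpace Ω := mΩ
  obtain ⟨u, huT, hut, hu_anti, hu_conv⟩ := myExistsSeq T hT t
  have hGp_le_n : ∀ n, (⨅ s ∈ Set.Ioi t, (G s : MeasurableSpace Ω)) ≤ G (u n) := fun n => iInf₂_le (u n) (hut n)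
  have hFp_le_n : ∀ n, (⨅ s ∈ Set.Ioi t, F s) ≤ F (u n) := fun n => iInf₂_le (u n) (hut n)
  have hGple : (⨅ s ∈ Set.Ioi t, (G s : MeasurableSpace Ω)) ≤ mΩ := (hGp_le_n 0).trans (G.le _)
  have hA' : MeasurableSet[mΩ] A := ((hFp_le_n 0).trans (F.le _)) A hA
  have hB' : MeasurableSet[mΩ] B := hH B hB
  have hGp_eq : (⨅ n, (G (u n) : MeasurableSpace Ω)) = (⨅ s ∈ Set.Ioi t, (G s : MeasurableSpace Ω)) := by
    apply le_antisymm
    · refine le_iInf₂ fun s hs => ?_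
      obtain ⟨n, hn⟩ := hu_conv s hs
      exact iInf_le_of_le n (G.mono hn)
    · exact le_iInf fun n => hGp_le_n n
  have hXmeas : Measurable (A.indicator (fun _ => (1:ℝ))) := measurable_const.indicator hA'
  have hXbdd : ∀ ω, |A.indicator (fun _ => (1:ℝ)) ω| ≤ 1 := fun ω => by
    by_cases h : ω ∈ A <;> simp [Set.indicator_of_mem, Set.indicator_of_notMem, h]
  have hprod_bdd : ∀ᵐ ω ∂μ, |(μ[A.indicator (fun _ => (1:ℝ))|(⨅ s ∈ Set.Ioi t, (G s : MeasurableSpace Ω))] *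
      μ[B.indicator (fun _ => (1:ℝ))|(⨅ s ∈ Set.Ioi t, (G s : MeasurableSpace Ω))]) ω| ≤ 1 := by
    filter_upwards [my_condexp_indicator_bdd (μ := μ) (m := (⨅ s ∈ Set.Ioi t, (G s : MeasurableSpace Ω))) A,
      my_condexp_indicator_bdd (μ := μ) (m := (⨅ s ∈ Set.Ioi t, (G s : MeasurableSpace Ω))) B] with ω h1 h2
    calc |(μ[A.indicator (fun _ => (1:ℝ))|(⨅ s ∈ Set.Ioi t, (G s : MeasurableSpace Ω))] * μ[B.indicator (fun _ => (1:ℝ))|(⨅ s ∈ Set.Ioi t, (G s : MeasurableSpace Ω))]) ω|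
        = |(μ[A.indicator (fun _ => (1:ℝ))|(⨅ s ∈ Set.Ioi t, (G s : MeasurableSpace Ω))]) ω| *
          |(μ[B.indicator (fun _ => (1:ℝ))|(⨅ s ∈ Set.Ioi t, (G s : MeasurableSpace Ω))]) ω| := abs_mul _ _
      _ ≤ 1 := mul_le_one₀ h1 (abs_nonneg _) h2
  have hprod_int : Integrable (μ[A.indicator (fun _ => (1:ℝ))|(⨅ s ∈ Set.Ioi t, (G s : MeasurableSpace Ω))] *
      μ[B.indicator (fun _ => (1:ℝ))|(⨅ s ∈ Set.Ioi t, (G s : MeasurableSpace Ω))]) μ :=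
    myIntegrable_of_bound
      (((stronglyMeasurable_condExp.mul stronglyMeasurable_condExp).mono
        hGple).aestronglyMeasurable) hprod_bdd
  refine (ae_eq_condExp_of_forall_setIntegral_eq hGple
    ((integrable_const (1:ℝ)).indicator (hA'.inter hB'))
    (fun s _ _ => hprod_int.integrableOn) ?_
    ((stronglyMeasurable_condExp.mul stronglyMeasurable_condExp).aestronglyMeasurable)).symm
  intro C hC _
  have hCm : MeasurableSet[mΩ] C := hGple C hC
  calc ∫ ω in C, (μ[A.indicator (fun _ => (1:ℝ))|(⨅ s ∈ Set.Ioi t, (G s : MeasurableSpace Ω))] *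
        μ[B.indicator (fun _ => (1:ℝ))|(⨅ s ∈ Set.Ioi t, (G s : MeasurableSpace Ω))]) ω ∂μ
      = ∫ ω in C, ((μ[A.indicator (fun _ => (1:ℝ))|(⨅ s ∈ Set.Ioi t, (G s : MeasurableSpace Ω))]) ω *
        (μ[B.indicator (fun _ => (1:ℝ))|(⨅ s ∈ Set.Ioi t, (G s : MeasurableSpace Ω))]) ω) ∂μ := rfl
    _ = ∫ ω in B ∩ C, (μ[A.indicator (fun _ => (1:ℝ))|(⨅ s ∈ Set.Ioi t, (G s : MeasurableSpace Ω))]) ω ∂μ :=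
        mySetIntegral_condexp_mul hGple hA' hB' hC
    _ = (μ (A ∩ B ∩ C)).toReal := by
        have hstep : ∀ n, ∫ ω in B ∩ C, (μ[A.indicator (fun _ => (1:ℝ))|G (u n)]) ω ∂μ
            = (μ (A ∩ B ∩ C)).toReal := fun n =>
          myStep (G.le (u n)) hA' hB' (hGp_le_n n C hC)
            (hind (u n) (huT n) A B (hFp_le_n n A hA) hB)
        have hlevy := myLevyDown μ (fun n => G (u n)) (fun n => G.le _)
          (fun i j hij => G.mono (hu_anti hij)) hXmeas hXbdd (hB'.inter hCm)
        rw [hGp_eq] at hlevy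
        have h2 : Tendsto (fun _ : ℕ => (μ (A ∩ B ∩ C)).toReal) atTop
            (𝓝 (∫ ω in B ∩ C, (μ[A.indicator (fun _ => (1:ℝ))|(⨅ s ∈ Set.Ioi t, (G s : MeasurableSpace Ω))]) ω ∂μ)) :=
          hlevy.congr fun n => hstep n
        exact tendsto_nhds_unique h2 tendsto_const_nhds
    _ = ∫ ω in C, (A ∩ B).indicator (fun _ => (1:ℝ)) ω ∂μ := by
        rw [setIntegral_indicator (hA'.inter hB'), setIntegral_const, smul_eq_mul, mul_one,
          Set.inter_comm C (A ∩ B), measureReal_def]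
end

section
/- Define Φ : D([0,∞); [0,1]) → [0,∞] on the Skorokhod space of càdlàg functions with values in [0,1] by Φ(h) = inf{t ≥ 0 : h(t) ≥ 1/2}. Then Φ is continuous (with respect to the Skorokhod J₁ topology) at every point h of the form h(·) = 1_{[s,∞)}(·) for some s ≥ 0. -/
open Filter Topology

/-- A càdlàg function on `[0,∞)`: right-continuous with left limits. -/
def Cadlag (h : NNReal → ℝ) : Prop :=
  (∀ t, ContinuousWithinAt h (Set.Ici t) t) ∧
  (∀ t : NNReal, 0 < t → ∃ L, Tendsto h (nhdsWithin t (Set.Iio t)) (𝓝 L))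

/-- Convergence in the Skorokhod J₁ topology on `D([0,∞); ℝ)`: there are continuous,
strictly increasing bijective time changes `λₙ` of `[0,∞)` converging uniformly on compacts
to the identity such that `hₙ ∘ λₙ → h` uniformly on compacts. -/
def SkorokhodTendsto (hn : ℕ → NNReal → ℝ) (h : NNReal → ℝ) : Prop :=
  ∃ lam : ℕ → NNReal → NNReal,
    (∀ n, Continuous (lam n)) ∧ (∀ n, StrictMono (lam n)) ∧
    (∀ n, Function.Bijective (lam n)) ∧
    (∀ T : NNReal,
      Tendsto (fun n => ⨆ t : Set.Icc (0 : NNReal) T, |((lam n t : NNReal) : ℝ) - (t : ℝ)|)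
        atTop (𝓝 0)) ∧
    (∀ T : NNReal,
      Tendsto (fun n => ⨆ t : Set.Icc (0 : NNReal) T, |hn n (lam n t) - h t|)
        atTop (𝓝 0))

/-- The first-passage map `Φ(h) = inf {t ≥ 0 : h(t) ≥ 1/2}`, with values in `[0,∞]`
(equal to `∞` if the set is empty). -/
noncomputable def Phi (h : NNReal → ℝ) : ENNReal :=
  ⨅ (t : NNReal) (_ : (1 : ℝ) / 2 ≤ h t), (t : ENNReal)

lemma phi_ind (s : NNReal) : Phi (fun t => if s ≤ t then (1 : ℝ) else 0) = s := by
  apply le_antisymm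
  · exact iInf₂_le s (by norm_num)
  · refine le_iInf₂ fun t ht => ?_
    by_cases h : s ≤ t
    · exact ENNReal.coe_le_coe.mpr h
    · simp only [if_neg h] at ht; norm_num at ht

/-- Lemma 4.2: `Φ` is continuous (in the Skorokhod J₁ sense) at every indicator
`h = 1_{[s,∞)}`: if càdlàg `[0,1]`-valued `hₙ` converge to `1_{[s,∞)}` in the J₁ sense,
then `Φ(hₙ) → Φ(1_{[s,∞)}) = s`. -/
theorem stmt9 (s : NNReal) (hn : ℕ → NNReal → ℝ)
    (hcad : ∀ n, Cadlag (hn n))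
    (hrange : ∀ n t, hn n t ∈ Set.Icc (0 : ℝ) 1)
    (hconv : SkorokhodTendsto hn (fun t => if s ≤ t then (1 : ℝ) else 0)) :
    Tendsto (fun n => Phi (hn n)) atTop (𝓝 (Phi fun t => if s ≤ t then (1 : ℝ) else 0)) := by
  obtain ⟨lam, hlc, hlm, hlb, hltime, hlval⟩ := hconv
  rw [phi_ind s, ENNReal.tendsto_nhds ENNReal.coe_ne_top]
  intro ε hε
  set δ : NNReal := (min ε 1).toNNReal with hδdef
  have hmin_ne : min ε 1 ≠ ⊤ := ne_top_of_le_ne_top ENNReal.one_ne_top (min_le_right _ _)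
  have hδpos : 0 < δ := ENNReal.toNNReal_pos (lt_min hε zero_lt_one).ne' hmin_ne
  have hδle : (δ : ENNReal) ≤ ε := by
    rw [hδdef, ENNReal.coe_toNNReal hmin_ne]; exact min_le_left _ _
  set T : NNReal := s + 1 with hTdef
  have hs_le_T : s ≤ T := le_self_add
  have hδR : (0 : ℝ) < δ := hδpos
  have ev1 : ∀ᶠ n in atTop,
      (⨆ t : Set.Icc (0 : NNReal) T, |((lam n t : NNReal) : ℝ) - (t : ℝ)|) < (δ : ℝ) :=
    Tendsto.eventually_lt_const hδR (hltime T)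
  have ev2 : ∀ᶠ n in atTop,
      (⨆ t : Set.Icc (0 : NNReal) T,
        |hn n (lam n t) - (if s ≤ t then (1 : ℝ) else 0)|) < (1 : ℝ) / 4 :=
    Tendsto.eventually_lt_const (by norm_num) (hlval T)
  filter_upwards [ev1, ev2] with n h1 h2
  have hbd1 : BddAbove (Set.range fun t : Set.Icc (0 : NNReal) T =>
      |((lam n t : NNReal) : ℝ) - (t : ℝ)|) := by
    refine ⟨(lam n T : ℝ) + T, ?_⟩
    rintro x ⟨⟨t, ht⟩, rfl⟩
    have ha : ((lam n t : NNReal) : ℝ) ≤ lam n T := NNReal.coe_le_coe.mpr ((hlm n).monotone ht.2)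
    have hb : (t : ℝ) ≤ T := ht.2
    have hc : (0 : ℝ) ≤ lam n t := (lam n t).coe_nonneg
    have hd : (0 : ℝ) ≤ t := t.coe_nonneg
    rw [abs_le]; constructor <;> simp only [neg_add] <;> linarith
  have hbd2 : BddAbove (Set.range fun t : Set.Icc (0 : NNReal) T =>
      |hn n (lam n t) - (if s ≤ t then (1 : ℝ) else 0)|) := by
    refine ⟨2, ?_⟩
    rintro x ⟨⟨t, ht⟩, rfl⟩
    have hr := hrange n (lam n t)
    rw [abs_le]
    by_cases hst : s ≤ t <;> simp only [if_pos, if_neg, hst, if_true, if_false] <;>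
      constructor <;> linarith [hr.1, hr.2]
  have key1 : ∀ t : NNReal, t ≤ T → |((lam n t : NNReal) : ℝ) - (t : ℝ)| < δ := fun t ht =>
    lt_of_le_of_lt (le_ciSup hbd1 ⟨t, ⟨zero_le, ht⟩⟩) h1
  have key2 : ∀ t : NNReal, t ≤ T →
      |hn n (lam n t) - (if s ≤ t then (1 : ℝ) else 0)| < (1 : ℝ) / 4 := fun t ht =>
    lt_of_le_of_lt (le_ciSup hbd2 ⟨t, ⟨zero_le, ht⟩⟩) h2
  have hup : Phi (hn n) ≤ (s : ENNReal) + δ := by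
    have hval : (1 : ℝ) / 2 ≤ hn n (lam n s) := by
      have hk := key2 s hs_le_T
      rw [if_pos le_rfl] at hk
      have hk' := (abs_lt.mp hk).1
      linarith
    calc Phi (hn n) ≤ ((lam n s : NNReal) : ENNReal) := by unfold Phi; exact iInf₂_le (lam n s) hval
      _ ≤ (s : ENNReal) + δ := by
          rw [← ENNReal.coe_add]
          refine ENNReal.coe_le_coe.mpr ?_
          have hk := (abs_lt.mp (key1 s hs_le_T)).2
          rw [← NNReal.coe_le_coe]; push_cast; linarith
  have hlo : (s : ENNReal) - δ ≤ Phi (hn n) := by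
    refine le_iInf₂ fun u hu => ?_
    obtain ⟨t, rfl⟩ := (hlb n).2 u
    have hst : s ≤ t := by
      by_contra hst
      push_neg at hst
      have htT : t ≤ T := le_trans hst.le hs_le_T
      have hk := key2 t htT
      rw [if_neg (not_le.mpr hst)] at hk
      have hk' := (abs_lt.mp hk).2
      simp only [sub_zero] at hk'
      linarith
    have hls : ((lam n s : NNReal) : ℝ) ≤ ((lam n t : NNReal) : ℝ) :=
      NNReal.coe_le_coe.mpr ((hlm n).monotone hst)
    have hk := (abs_lt.mp (key1 s hs_le_T)).1
    rw [← ENNReal.coe_sub]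
    refine ENNReal.coe_le_coe.mpr ?_
    rw [tsub_le_iff_right, ← NNReal.coe_le_coe]
    push_cast; linarith
  exact Set.mem_Icc.mpr ⟨le_trans (tsub_le_tsub_left hδle _) hlo,
    le_trans hup (add_le_add le_rfl hδle)⟩
end

section
/- Let X and Y be Polish spaces and μ a Borel probability measure on X. Then every P ∈ Π(μ) (Borel probability measure on X × Y with first marginal μ) admits a representation P(·) = ∫₀¹ P_u(·) du where, for each u ∈ [0,1], P_u(dx,dy) = μ(dx) δ_{f(x,u)}(dy) for a jointly measurable function f : X × [0,1] → Y. In particular, P is a mixture of measures concentrated on graphs of measurable functions. -/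
open MeasureTheory Filter Topology ProbabilityTheory

private lemma quantile_spec (F : StieltjesFunction ℝ) (h0 : Tendsto F atBot (𝓝 0))
    (h1 : Tendsto F atTop (𝓝 1)) {v : ℝ} (hv0 : 0 < v) (hv1 : v < 1) :
    (∀ t, sInf {s | v ≤ F s} ≤ t ↔ v ≤ F t) ∧
      (∀ c, sInf {s | v ≤ F s} < c ↔ ∃ s, s < c ∧ v ≤ F s) := by
  set S := {s | v ≤ F s} with hS
  have hne : S.Nonempty := by
    obtain ⟨s, hs⟩ := (h1.eventually (eventually_ge_nhds hv1)).exists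
    exact ⟨s, hs⟩
  have hbdd : BddBelow S := by
    obtain ⟨s0, hs0⟩ := (h0.eventually (eventually_lt_nhds hv0)).exists
    refine ⟨s0, fun s hs => ?_⟩
    by_contra hcon
    push_neg at hcon
    exact absurd (le_trans hs (F.mono hcon.le)) (not_le.mpr hs0)
  have hmem : sInf S ∈ S := by
    have h2 : Tendsto F (𝓝[>] sInf S) (𝓝 (F (sInf S))) :=
      (F.right_continuous _).tendsto.mono_left (nhdsWithin_mono _ Set.Ioi_subset_Ici_self)
    refine ge_of_tendsto h2 ?_
    filter_upwards [self_mem_nhdsWithin] with t' ht'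
    obtain ⟨s, hsS, hst⟩ := (csInf_lt_iff hbdd hne).mp ht'
    exact le_trans hsS (F.mono hst.le)
  constructor
  · intro t
    exact ⟨fun h => le_trans hmem (F.mono h), fun h => csInf_le hbdd h⟩
  · intro c
    constructor
    · intro h
      obtain ⟨s, hsS, hsc⟩ := (csInf_lt_iff hbdd hne).mp h
      exact ⟨s, hsc, hsS⟩
    · rintro ⟨s, hsc, hsv⟩
      exact lt_of_le_of_lt (csInf_le hbdd hsv) hsc

private lemma volume_Iic_inter_Ioo {c : ℝ} (h0 : 0 ≤ c) (h1 : c ≤ 1) :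
    (volume : Measure ℝ) (Set.Iic c ∩ Set.Ioo 0 1) = ENNReal.ofReal c := by
  apply le_antisymm
  · calc (volume : Measure ℝ) (Set.Iic c ∩ Set.Ioo 0 1) ≤ volume (Set.Ioc 0 c) := by
          apply measure_mono
          rintro u ⟨h1', h2'⟩
          exact ⟨h2'.1, h1'⟩
      _ = ENNReal.ofReal c := by rw [Real.volume_Ioc, sub_zero]
  · have hsub : Set.Ioo (0 : ℝ) c ⊆ Set.Iic c ∩ Set.Ioo 0 1 := by
      rintro u ⟨hu1, hu2⟩
      exact ⟨hu2.le, hu1, lt_of_lt_of_le hu2 h1⟩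
    calc ENNReal.ofReal c = volume (Set.Ioo 0 c) := by rw [Real.volume_Ioo, sub_zero]
      _ ≤ _ := measure_mono hsub

set_option maxHeartbeats 1000000 in
/-- Proposition 5.5: every `P ∈ Π(μ)` is a mixture `P = ∫₀¹ P_u du` of graph measures
`P_u(dx,dy) = μ(dx) δ_{f(x,u)}(dy)` for a jointly measurable `f : X × [0,1] → Y`. -/
theorem stmt12 {X Y : Type*}
    [TopologicalSpace X] [PolishSpace X] [MeasurableSpace X] [BorelSpace X]
    [TopologicalSpace Y] [PolishSpace Y] [MeasurableSpace Y] [BorelSpace Y]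
    (μ : ProbabilityMeasure X) (P : ProbabilityMeasure (X × Y))
    (hP : (P : Measure (X × Y)).map Prod.fst = (μ : Measure X)) :
    ∃ f : X → ℝ → Y,
      Measurable (fun p : X × ℝ => f p.1 p.2) ∧
      ∀ s : Set (X × Y), MeasurableSet s →
        (P : Measure (X × Y)) s
          = ∫⁻ u in Set.Icc (0 : ℝ) 1,
              ((μ : Measure X).map fun x => (x, f x u)) s := by
  classical
  set Pm : Measure (X × Y) := (P : Measure (X × Y)) with hPmdef
  haveI hPp : IsProbabilityMeasure Pm := P.2
  -- Y is nonempty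
  have hYne : Nonempty Y := by
    by_contra hY
    haveI : IsEmpty (X × Y) := ⟨fun p => (not_nonempty_iff.mp hY).false p.2⟩
    have h1 : Pm Set.univ = 1 := measure_univ
    rw [Set.univ_eq_empty_iff.mpr inferInstance, measure_empty] at h1
    exact zero_ne_one h1
  -- embed Y into ℝ and get a measurable retraction
  obtain ⟨e, he⟩ := MeasureTheory.exists_measurableEmbedding_real Y
  obtain ⟨r, hr, hre⟩ := he.exists_measurable_extend measurable_id fun _ => hYne
  have hemb : Measurable e := he.measurable
  -- conditional kernel
  set κ : Kernel X Y := Pm.condKernel with hκdef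
  set ν : X → Measure ℝ := fun x => (κ x).map e with hνdef
  haveI hνp : ∀ x, IsProbabilityMeasure (ν x) := fun x =>
    Measure.isProbabilityMeasure_map hemb.aemeasurable
  set F : X → ℝ → ℝ := fun x t => cdf (ν x) t with hFdef
  have hFmeas : ∀ t, Measurable fun x => F x t := by
    intro t
    have heq : (fun x => F x t) = fun x => ((κ x) (e ⁻¹' Set.Iic t)).toReal := by
      funext x
      simp only [hFdef]
      rw [cdf_eq_real, measureReal_def, hνdef, Measure.map_apply hemb measurableSet_Iic]
    rw [heq]
    exact (Kernel.measurable_coe κ (hemb measurableSet_Iic)).ennreal_toReal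
  -- truncation into (0,1)
  set trunc : ℝ → ℝ := fun u => if u ∈ Set.Ioo (0 : ℝ) 1 then u else 1/2 with htrdef
  have htrunc_meas : Measurable trunc :=
    Measurable.ite measurableSet_Ioo measurable_id measurable_const
  have htrunc_mem : ∀ u, trunc u ∈ Set.Ioo (0 : ℝ) 1 := by
    intro u
    by_cases h : u ∈ Set.Ioo (0 : ℝ) 1
    · simp only [htrdef]
      rw [if_pos h]
      exact h
    · simp only [htrdef]
      rw [if_neg h]
      norm_num [Set.mem_Ioo]
  -- the quantile function
  set q : X → ℝ → ℝ := fun x u => sInf {t | trunc u ≤ F x t} with hqdef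
  have hspec : ∀ x u,
      (∀ t, q x u ≤ t ↔ trunc u ≤ F x t) ∧
        (∀ c, q x u < c ↔ ∃ t, t < c ∧ trunc u ≤ F x t) := fun x u =>
    quantile_spec (cdf (ν x)) (tendsto_cdf_atBot _) (tendsto_cdf_atTop _)
      (htrunc_mem u).1 (htrunc_mem u).2
  -- joint measurability of q
  have hqmeas : Measurable fun p : X × ℝ => q p.1 p.2 := by
    apply measurable_of_Iio
    intro c
    have hunion : (fun p : X × ℝ => q p.1 p.2) ⁻¹' Set.Iio c
        = ⋃ rr : ℚ, {p : X × ℝ | (rr : ℝ) < c ∧ trunc p.2 ≤ F p.1 rr} := by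
      ext p
      simp only [Set.mem_preimage, Set.mem_Iio, Set.mem_iUnion, Set.mem_setOf_eq]
      constructor
      · intro h
        obtain ⟨t, htc, htv⟩ := ((hspec p.1 p.2).2 c).mp h
        obtain ⟨rr, h1', h2'⟩ := exists_rat_btwn htc
        exact ⟨rr, h2', le_trans htv ((cdf (ν p.1)).mono h1'.le)⟩
      · rintro ⟨rr, h1', h2'⟩
        exact lt_of_le_of_lt (((hspec p.1 p.2).1 rr).mpr h2') h1'
    rw [hunion]
    apply MeasurableSet.iUnion
    intro rr
    by_cases hc : (rr : ℝ) < c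
    · simp only [hc, true_and]
      exact measurableSet_le (htrunc_meas.comp measurable_snd)
        ((hFmeas rr).comp measurable_fst)
    · simp only [hc, false_and, Set.setOf_false]
      exact MeasurableSet.empty
  have hqsec : ∀ x, Measurable (q x) := fun x =>
    hqmeas.comp (measurable_prodMk_left)
  -- the function f
  set f : X → ℝ → Y := fun x u => r (q x u) with hfdef
  have hfmeas : Measurable fun p : X × ℝ => f p.1 p.2 := hr.comp hqmeas
  have hfsec : ∀ x, Measurable (f x) := fun x => hr.comp (hqsec x)
  -- pushforward of the uniform measure under q x is ν x
  haveI : IsProbabilityMeasure (volume.restrict (Set.Ioo (0 : ℝ) 1)) := by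
    constructor
    rw [Measure.restrict_apply MeasurableSet.univ, Set.univ_inter, Real.volume_Ioo]
    norm_num
  have hmapq : ∀ x, (volume.restrict (Set.Ioo (0 : ℝ) 1)).map (q x) = ν x := by
    intro x
    refine Measure.ext_of_Iic _ _ fun t => ?_
    rw [Measure.map_apply (hqsec x) measurableSet_Iic,
      Measure.restrict_apply (hqsec x measurableSet_Iic)]
    have hset : q x ⁻¹' Set.Iic t ∩ Set.Ioo 0 1 = Set.Iic (F x t) ∩ Set.Ioo 0 1 := by
      ext u
      simp only [Set.mem_inter_iff, Set.mem_preimage, Set.mem_Iic]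
      constructor
      · rintro ⟨h1', h2'⟩
        have htu : trunc u = u := if_pos h2'
        have := ((hspec x u).1 t).mp h1'
        rw [htu] at this
        exact ⟨this, h2'⟩
      · rintro ⟨h1', h2'⟩
        have htu : trunc u = u := if_pos h2'
        refine ⟨((hspec x u).1 t).mpr ?_, h2'⟩
        rw [htu]
        exact h1'
    rw [hset, volume_Iic_inter_Ioo (cdf_nonneg _ t) (cdf_le_one _ t)]
    exact ofReal_cdf (ν x) t
  -- pushforward under f x is κ x
  have hmapf : ∀ x, (volume.restrict (Set.Ioo (0 : ℝ) 1)).map (f x) = κ x := by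
    intro x
    have hcomp : f x = r ∘ q x := rfl
    rw [hcomp, ← Measure.map_map hr (hqsec x), hmapq x, hνdef,
      Measure.map_map hr hemb, hre, Measure.map_id]
  refine ⟨f, hfmeas, fun s hs => ?_⟩
  -- disintegration of P
  have hfst : Pm.fst = (μ : Measure X) := hP
  have hdis : Pm.fst ⊗ₘ κ = Pm := Pm.disintegrate Pm.condKernel
  have hL : Pm s = ∫⁻ x, κ x (Prod.mk x ⁻¹' s) ∂(μ : Measure X) := by
    conv_lhs => rw [← hdis]
    rw [Measure.compProd_apply hs, hfst]
  -- rewrite the right-hand side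
  have hsec : ∀ u : ℝ, Measurable fun x => (x, f x u) := fun u =>
    measurable_id.prodMk (hfmeas.comp (measurable_id.prodMk measurable_const))
  have hR1 : ∀ u : ℝ, ((μ : Measure X).map fun x => (x, f x u)) s
      = ∫⁻ x, Set.indicator s (fun _ => (1 : ENNReal)) (x, f x u) ∂(μ : Measure X) := by
    intro u
    rw [Measure.map_apply (hsec u) hs,
      ← lintegral_indicator_one ((hsec u) hs)]
    refine lintegral_congr fun x => ?_
    by_cases h : (x, f x u) ∈ s <;> simp [h]
  have hmeasH : Measurable fun p : ℝ × X =>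
      Set.indicator s (fun _ => (1 : ENNReal)) (p.2, f p.2 p.1) := by
    have hm1 : Measurable fun p : ℝ × X => (p.2, f p.2 p.1) :=
      measurable_snd.prodMk (hfmeas.comp (measurable_snd.prodMk measurable_fst))
    exact (measurable_one.indicator hs).comp hm1
  have hswap : ∫⁻ u in Set.Icc (0 : ℝ) 1, ((μ : Measure X).map fun x => (x, f x u)) s
      = ∫⁻ x, ∫⁻ u in Set.Ioo (0 : ℝ) 1,
          Set.indicator s (fun _ => (1 : ENNReal)) (x, f x u) ∂volume ∂(μ : Measure X) := by
    rw [← Measure.restrict_congr_set Ioo_ae_eq_Icc]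
    simp_rw [hR1]
    exact lintegral_lintegral_swap hmeasH.aemeasurable
  have hinner : ∀ x, ∫⁻ u in Set.Ioo (0 : ℝ) 1,
      Set.indicator s (fun _ => (1 : ENNReal)) (x, f x u) ∂volume
      = κ x (Prod.mk x ⁻¹' s) := by
    intro x
    have hgeq : (fun y => Set.indicator s (fun _ => (1 : ENNReal)) (x, y))
        = Set.indicator (Prod.mk x ⁻¹' s) (fun _ => (1 : ENNReal)) := by
      funext y
      by_cases h : (x, y) ∈ s <;> simp [Set.indicator, h]
    have hgm : Measurable fun y => Set.indicator s (fun _ => (1 : ENNReal)) (x, y) := by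
      rw [hgeq]
      exact measurable_const.indicator (measurable_prodMk_left hs)
    calc ∫⁻ u in Set.Ioo (0 : ℝ) 1,
          Set.indicator s (fun _ => (1 : ENNReal)) (x, f x u) ∂volume
        = ∫⁻ y, Set.indicator s (fun _ => (1 : ENNReal)) (x, y)
            ∂((volume.restrict (Set.Ioo (0 : ℝ) 1)).map (f x)) :=
          (lintegral_map hgm (hfsec x)).symm
      _ = ∫⁻ y, Set.indicator s (fun _ => (1 : ENNReal)) (x, y) ∂(κ x) := by rw [hmapf x]
      _ = κ x (Prod.mk x ⁻¹' s) := by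
          rw [hgeq]
          exact lintegral_indicator_one (measurable_prodMk_left hs)
  rw [hswap, hL]
  exact lintegral_congr fun x => (hinner x).symm
end

section
/- On a probability space with two filtrations G and F satisfying F_t ⊂ G_t for all t, the following are equivalent: (i) for every t, G_t is conditionally independent of F_∞ given F_t; (ii) for every t and every integrable F_∞-measurable random variable X, E[X | F_t] = E[X | G_t] a.s.; (iii) for every t and every integrable G_t-measurable random variable X, E[X | F_t] = E[X | F_∞] a.s. -/
open MeasureTheory Filter Topology Set

namespace Aux15

variable {Ω : Type*} {m₁ m₂ mInf mI : MeasurableSpace Ω} {mΩ : MeasurableSpace Ω} {μ : Measure Ω}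
  [IsProbabilityMeasure μ]


lemma integrable_ind {A : Set Ω} (hA : MeasurableSet[mΩ] A) :
    Integrable (A.indicator fun _ => (1 : ℝ)) μ :=
  (integrable_const (1 : ℝ)).indicator hA

lemma norm_condexp_ind_le (hm : m₁ ≤ mΩ) {B : Set Ω}
    (hB : MeasurableSet[mΩ] B) :
    ∀ᵐ x ∂μ, ‖(μ[B.indicator (fun _ => (1 : ℝ))|m₁]) x‖ ≤ 1 := by
  have h0 : (0 : Ω → ℝ) ≤ᵐ[μ] μ[B.indicator (fun _ => (1 : ℝ))|m₁] :=
    condExp_nonneg (Eventually.of_forall fun x => Set.indicator_nonneg (fun _ _ => zero_le_one) x)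
  have h1 : μ[B.indicator (fun _ => (1 : ℝ))|m₁] ≤ᵐ[μ] μ[(fun _ => (1 : ℝ))|m₁] :=
    condExp_mono (integrable_ind hB) (integrable_const 1)
      (Eventually.of_forall fun x => Set.indicator_le_self' (fun _ _ => zero_le_one) x)
  have h2 : μ[(fun _ : Ω => (1 : ℝ))|m₁] = fun _ => (1 : ℝ) := condExp_const hm 1
  rw [h2] at h1
  filter_upwards [h0, h1] with x hx0 hx1
  have hx0' : (0 : ℝ) ≤ (μ[B.indicator (fun _ => (1 : ℝ))|m₁]) x := hx0
  rw [Real.norm_eq_abs, abs_le]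
  exact ⟨by linarith, hx1⟩

lemma key (hm₁ : m₁ ≤ mΩ) {A B : Set Ω}
    (hA : MeasurableSet[mΩ] A) (hB : MeasurableSet[mΩ] B)
    (h : μ[(A ∩ B).indicator (fun _ => (1 : ℝ))|m₁] =ᵐ[μ]
      μ[A.indicator (fun _ => (1 : ℝ))|m₁] * μ[B.indicator (fun _ => (1 : ℝ))|m₁]) :
    ∫ x in B, (μ[A.indicator (fun _ => (1 : ℝ))|m₁]) x ∂μ = (μ (A ∩ B)).toReal := by
  set f := μ[A.indicator (fun _ => (1 : ℝ))|m₁] with hf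
  have hiB : Integrable (B.indicator fun _ => (1 : ℝ)) μ := integrable_ind hB
  have hprod : Integrable (f * B.indicator fun _ => (1 : ℝ)) μ :=
    hiB.bdd_mul (stronglyMeasurable_condExp.mono hm₁).aestronglyMeasurable
      (norm_condexp_ind_le hm₁ hA)
  have h3 : μ[f * B.indicator (fun _ => (1 : ℝ))|m₁] =ᵐ[μ]
      f * μ[B.indicator (fun _ => (1 : ℝ))|m₁] :=
    condExp_mul_of_stronglyMeasurable_left stronglyMeasurable_condExp hprod hiB
  calc ∫ x in B, f x ∂μ
      = ∫ x, B.indicator f x ∂μ := (integral_indicator hB).symm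
    _ = ∫ x, (f * B.indicator fun _ => (1 : ℝ)) x ∂μ := by
        refine integral_congr_ae (Eventually.of_forall fun x => ?_)
        by_cases hx : x ∈ B <;> simp [hx]
    _ = ∫ x, (μ[f * B.indicator (fun _ => (1 : ℝ))|m₁]) x ∂μ := (integral_condExp hm₁).symm
    _ = ∫ x, (f * μ[B.indicator (fun _ => (1 : ℝ))|m₁]) x ∂μ := integral_congr_ae h3
    _ = ∫ x, (μ[(A ∩ B).indicator (fun _ => (1 : ℝ))|m₁]) x ∂μ := integral_congr_ae h.symm
    _ = ∫ x, (A ∩ B).indicator (fun _ => (1 : ℝ)) x ∂μ := integral_condExp hm₁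
    _ = (μ (A ∩ B)).toReal := by
        rw [integral_indicator (hA.inter hB)]; simp; rfl


omit [IsProbabilityMeasure μ] in
lemma abs_setIntegral_le {h : Ω → ℝ} (hh : Integrable h μ) (s : Set Ω) :
    |∫ x in s, h x ∂μ| ≤ ∫ x, |h x| ∂μ := by
  rw [← Real.norm_eq_abs]
  refine (norm_integral_le_integral_norm _).trans ?_
  simp_rw [Real.norm_eq_abs]
  exact integral_mono_measure Measure.restrict_le_self
    (Eventually.of_forall fun x => abs_nonneg _) hh.abs

lemma setIntegral_condexp_eq_of_ind (hm₁ : m₁ ≤ mΩ) (hmI : mI ≤ mΩ)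
    {s : Set Ω} (hs : MeasurableSet[mΩ] s)
    (hbase : ∀ B : Set Ω, MeasurableSet[mI] B →
      ∫ x in s, (μ[B.indicator (fun _ => (1 : ℝ))|m₁]) x ∂μ
        = ∫ x in s, B.indicator (fun _ => (1 : ℝ)) x ∂μ)
    {X : Ω → ℝ} (hXi : Integrable X μ) (hXm : StronglyMeasurable[mI] X) :
    ∫ x in s, (μ[X|m₁]) x ∂μ = ∫ x in s, X x ∂μ := by
  have main : ∀ ⦃f : Ω → ℝ⦄, Integrable f (μ.trim hmI) →
      ∫ x in s, (μ[f|m₁]) x ∂μ = ∫ x in s, f x ∂μ := by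
    refine fun f hf => @Integrable.induction Ω ℝ mI _ (μ.trim hmI)
      (fun f => ∫ x in s, (μ[f|m₁]) x ∂μ = ∫ x in s, f x ∂μ) ?_ ?_ ?_ ?_ f hf
    · -- indicator case
      intro c B hB _
      have e : B.indicator (fun _ => c) = c • (B.indicator fun _ => (1 : ℝ)) := by
        ext x; by_cases hx : x ∈ B <;> simp [hx]
      rw [e]
      have h1 : μ[c • (B.indicator fun _ => (1 : ℝ))|m₁]
          =ᵐ[μ] c • μ[(B.indicator fun _ => (1 : ℝ))|m₁] := condExp_smul c _ _
      rw [setIntegral_congr_ae hs (h1.mono fun x hx _ => hx)]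
      simp_rw [Pi.smul_apply, smul_eq_mul]
      rw [integral_const_mul, integral_const_mul, hbase B hB]
    · -- additivity
      intro f g _ hf hg hPf hPg
      have hf' : Integrable f μ := integrable_of_integrable_trim hmI hf
      have hg' : Integrable g μ := integrable_of_integrable_trim hmI hg
      have h1 : μ[f + g|m₁] =ᵐ[μ] μ[f|m₁] + μ[g|m₁] := condExp_add hf' hg' m₁
      rw [setIntegral_congr_ae hs (h1.mono fun x hx _ => hx)]
      simp_rw [Pi.add_apply]
      rw [integral_add integrable_condExp.integrableOn integrable_condExp.integrableOn,
        integral_add hf'.integrableOn hg'.integrableOn, hPf, hPg]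
    · -- closedness in L¹(μ.trim)
      set μ' := μ.trim hmI with hμ'
      have hlip : LipschitzWith 2
          (fun f : Ω →₁[μ'] ℝ =>
            (∫ x in s, (μ[(f : Ω → ℝ)|m₁]) x ∂μ) - ∫ x in s, (f : Ω → ℝ) x ∂μ) := by
        refine LipschitzWith.of_dist_le_mul ?_
        intro f g
        have hf' : Integrable (f : Ω → ℝ) μ := integrable_of_integrable_trim hmI (L1.integrable_coeFn f)
        have hg' : Integrable (g : Ω → ℝ) μ := integrable_of_integrable_trim hmI (L1.integrable_coeFn g)
        have hsub : Integrable ((f : Ω → ℝ) - (g : Ω → ℝ)) μ := hf'.sub hg'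
        have hc : μ[(f : Ω → ℝ)|m₁] - μ[(g : Ω → ℝ)|m₁] =ᵐ[μ]
            μ[(f : Ω → ℝ) - (g : Ω → ℝ)|m₁] := (condExp_sub hf' hg' m₁).symm
        have e1 : (∫ x in s, (μ[(f : Ω → ℝ)|m₁]) x ∂μ) - ∫ x in s, (μ[(g : Ω → ℝ)|m₁]) x ∂μ
            = ∫ x in s, (μ[(f : Ω → ℝ) - (g : Ω → ℝ)|m₁]) x ∂μ := by
          rw [← integral_sub integrable_condExp.integrableOn integrable_condExp.integrableOn]
          exact setIntegral_congr_ae hs (hc.mono fun x hx _ => hx)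
        have e2 : (∫ x in s, (f : Ω → ℝ) x ∂μ) - ∫ x in s, (g : Ω → ℝ) x ∂μ
            = ∫ x in s, ((f : Ω → ℝ) - (g : Ω → ℝ)) x ∂μ := by
          rw [← integral_sub hf'.integrableOn hg'.integrableOn]; rfl
        have hb1 : |∫ x in s, (μ[(f : Ω → ℝ) - (g : Ω → ℝ)|m₁]) x ∂μ|
            ≤ ∫ x, |((f : Ω → ℝ) - (g : Ω → ℝ)) x| ∂μ :=
          (abs_setIntegral_le integrable_condExp s).trans (integral_abs_condExp_le _)
        have hb2 : |∫ x in s, ((f : Ω → ℝ) - (g : Ω → ℝ)) x ∂μ|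
            ≤ ∫ x, |((f : Ω → ℝ) - (g : Ω → ℝ)) x| ∂μ := abs_setIntegral_le hsub s
        have hdist : ∫ x, |((f : Ω → ℝ) - (g : Ω → ℝ)) x| ∂μ = dist f g := by
          have hmeas : AEStronglyMeasurable[mI] (fun y => |((f : Ω → ℝ) - (g : Ω → ℝ)) y|) μ' := by
            simpa [Real.norm_eq_abs] using
              ((Lp.aestronglyMeasurable f).sub (Lp.aestronglyMeasurable g)).norm
          rw [L1.dist_eq_integral_dist]
          have e3 : ∫ a, dist ((f : Ω → ℝ) a) ((g : Ω → ℝ) a) ∂μ'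
              = ∫ x, (fun y => |((f : Ω → ℝ) - (g : Ω → ℝ)) y|) x ∂μ' := by
            simp_rw [Real.dist_eq, Pi.sub_apply]
          rw [e3, ← integral_trim_ae hmI hmeas]
        rw [dist_eq_norm, Real.norm_eq_abs]
        calc |((∫ x in s, (μ[(f : Ω → ℝ)|m₁]) x ∂μ) - ∫ x in s, (f : Ω → ℝ) x ∂μ) -
              ((∫ x in s, (μ[(g : Ω → ℝ)|m₁]) x ∂μ) - ∫ x in s, (g : Ω → ℝ) x ∂μ)|
            = |(∫ x in s, (μ[(f : Ω → ℝ) - (g : Ω → ℝ)|m₁]) x ∂μ)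
                - ∫ x in s, ((f : Ω → ℝ) - (g : Ω → ℝ)) x ∂μ| := by
              rw [← e1, ← e2]; ring_nf
          _ ≤ |∫ x in s, (μ[(f : Ω → ℝ) - (g : Ω → ℝ)|m₁]) x ∂μ|
                + |∫ x in s, ((f : Ω → ℝ) - (g : Ω → ℝ)) x ∂μ| := abs_sub _ _
          _ ≤ 2 * dist f g := by rw [← hdist]; push_cast; linarith
      have : IsClosed ((fun f : Ω →₁[μ'] ℝ =>
          (∫ x in s, (μ[(f : Ω → ℝ)|m₁]) x ∂μ) - ∫ x in s, (f : Ω → ℝ) x ∂μ) ⁻¹' {0}) :=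
        IsClosed.preimage hlip.continuous isClosed_singleton
      convert this using 1
      ext f
      simp [sub_eq_zero]
    · -- ae congruence
      intro f g hfg hf hPf
      have hfg' : f =ᵐ[μ] g := ae_eq_of_ae_eq_trim hfg
      calc ∫ x in s, (μ[g|m₁]) x ∂μ
          = ∫ x in s, (μ[f|m₁]) x ∂μ :=
            setIntegral_congr_ae hs ((condExp_congr_ae hfg'.symm).mono fun x hx _ => hx)
        _ = ∫ x in s, f x ∂μ := hPf
        _ = ∫ x in s, g x ∂μ := setIntegral_congr_ae hs (hfg'.mono fun x hx _ => hx)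
  exact main (hXi.trim hmI hXm)

lemma setIntegral_ind {B : Set Ω} (hB : MeasurableSet[mΩ] B) (t : Set Ω) :
    ∫ x in t, B.indicator (fun _ => (1 : ℝ)) x ∂μ = (μ (B ∩ t)).toReal := by
  rw [integral_indicator_const (1 : ℝ) hB, Measure.real, Measure.restrict_apply hB]
  simp

lemma ind_inter {A B : Set Ω} :
    (A ∩ B).indicator (fun _ => (1 : ℝ)) =
      A.indicator (fun _ => (1 : ℝ)) * B.indicator (fun _ => (1 : ℝ)) := by
  ext x
  by_cases hx1 : x ∈ A <;> by_cases hx2 : x ∈ B <;> simp [hx1, hx2]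

/-- (i) → (ii) -/
lemma i_to_ii (hm₁₂ : m₁ ≤ m₂) (hm₂ : m₂ ≤ mΩ) (hmInf : mInf ≤ mΩ)
    (hCI : CondIndepGiven μ m₂ mInf m₁)
    {X : Ω → ℝ} (hXi : Integrable X μ) (hXm : Measurable[mInf] X) :
    μ[X|m₁] =ᵐ[μ] μ[X|m₂] := by
  have hm₁ : m₁ ≤ mΩ := hm₁₂.trans hm₂
  refine (ae_eq_condExp_of_forall_setIntegral_eq hm₂ hXi
    (fun t _ _ => integrable_condExp.integrableOn) (fun t ht _ => ?_)
    ((stronglyMeasurable_condExp.mono hm₁₂).aestronglyMeasurable))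
  refine setIntegral_condexp_eq_of_ind hm₁ hmInf (hm₂ t ht) (fun B hB => ?_) hXi
    hXm.stronglyMeasurable
  have h := (hCI t B ht hB).trans (Eventually.of_forall fun x => mul_comm _ _)
  rw [Set.inter_comm] at h
  rw [key hm₁ (hmInf B hB) (hm₂ t ht) h, setIntegral_ind (hmInf B hB) t]

/-- (i) → (iii) -/
lemma i_to_iii (hm₁₂ : m₁ ≤ m₂) (hm₂ : m₂ ≤ mΩ) (hm1Inf : m₁ ≤ mInf) (hmInf : mInf ≤ mΩ)
    (hCI : CondIndepGiven μ m₂ mInf m₁)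
    {X : Ω → ℝ} (hXi : Integrable X μ) (hXm : Measurable[m₂] X) :
    μ[X|m₁] =ᵐ[μ] μ[X|mInf] := by
  have hm₁ : m₁ ≤ mΩ := hm₁₂.trans hm₂
  refine (ae_eq_condExp_of_forall_setIntegral_eq hmInf hXi
    (fun t _ _ => integrable_condExp.integrableOn) (fun t ht _ => ?_)
    ((stronglyMeasurable_condExp.mono hm1Inf).aestronglyMeasurable))
  refine setIntegral_condexp_eq_of_ind hm₁ hm₂ (hmInf t ht) (fun A hA => ?_) hXi
    hXm.stronglyMeasurable
  rw [key hm₁ (hm₂ A hA) (hmInf t ht) (hCI A t hA ht), setIntegral_ind (hm₂ A hA) t,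
    Set.inter_comm]

/-- (ii) → (i) -/
lemma ii_to_i (hm₁₂ : m₁ ≤ m₂) (hm₂ : m₂ ≤ mΩ) (hmInf : mInf ≤ mΩ)
    (h2 : ∀ X : Ω → ℝ, Integrable X μ → Measurable[mInf] X → μ[X|m₁] =ᵐ[μ] μ[X|m₂]) :
    CondIndepGiven μ m₂ mInf m₁ := by
  intro A B hA hB
  have hm₁ : m₁ ≤ mΩ := hm₁₂.trans hm₂
  have hA' : MeasurableSet[mΩ] A := hm₂ A hA
  have hB' : MeasurableSet[mΩ] B := hmInf B hB
  set iA := A.indicator (fun _ => (1 : ℝ)) with hiA_def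
  set iB := B.indicator (fun _ => (1 : ℝ)) with hiB_def
  have hiA : Integrable iA μ := integrable_ind hA'
  have hiB : Integrable iB μ := integrable_ind hB'
  have hiAB : Integrable (iA * iB) μ := by
    rw [← ind_inter]; exact integrable_ind (hA'.inter hB')
  have hsmA : StronglyMeasurable[m₂] iA := stronglyMeasurable_const.indicator hA
  rw [ind_inter]
  calc μ[iA * iB|m₁]
      =ᵐ[μ] μ[μ[iA * iB|m₂]|m₁] := (condExp_condExp_of_le hm₁₂ hm₂).symm
    _ =ᵐ[μ] μ[iA * μ[iB|m₂]|m₁] :=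
        condExp_congr_ae (condExp_mul_of_stronglyMeasurable_left hsmA hiAB hiB)
    _ =ᵐ[μ] μ[μ[iB|m₁] * iA|m₁] := by
        refine condExp_congr_ae ?_
        filter_upwards [h2 iB hiB (measurable_const.indicator hB)] with x hx
        simp only [Pi.mul_apply]
        rw [← hx, mul_comm]
    _ =ᵐ[μ] μ[iB|m₁] * μ[iA|m₁] :=
        condExp_mul_of_stronglyMeasurable_left stronglyMeasurable_condExp
          (hiA.bdd_mul (stronglyMeasurable_condExp.mono hm₁).aestronglyMeasurable
            (norm_condexp_ind_le hm₁ hB')) hiA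
    _ =ᵐ[μ] μ[iA|m₁] * μ[iB|m₁] := Eventually.of_forall fun x => mul_comm _ _

/-- (iii) → (i) -/
lemma iii_to_i (hm₁₂ : m₁ ≤ m₂) (hm₂ : m₂ ≤ mΩ) (hm1Inf : m₁ ≤ mInf) (hmInf : mInf ≤ mΩ)
    (h3 : ∀ X : Ω → ℝ, Integrable X μ → Measurable[m₂] X → μ[X|m₁] =ᵐ[μ] μ[X|mInf]) :
    CondIndepGiven μ m₂ mInf m₁ := by
  intro A B hA hB
  have hm₁ : m₁ ≤ mΩ := hm₁₂.trans hm₂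
  have hA' : MeasurableSet[mΩ] A := hm₂ A hA
  have hB' : MeasurableSet[mΩ] B := hmInf B hB
  set iA := A.indicator (fun _ => (1 : ℝ)) with hiA_def
  set iB := B.indicator (fun _ => (1 : ℝ)) with hiB_def
  have hiA : Integrable iA μ := integrable_ind hA'
  have hiB : Integrable iB μ := integrable_ind hB'
  have hiBA : Integrable (iB * iA) μ := by
    rw [← ind_inter]; exact integrable_ind (hB'.inter hA')
  have hsmB : StronglyMeasurable[mInf] iB := stronglyMeasurable_const.indicator hB
  have e0 : (A ∩ B).indicator (fun _ => (1 : ℝ)) = iB * iA := by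
    rw [Set.inter_comm]; exact ind_inter
  rw [e0]
  calc μ[iB * iA|m₁]
      =ᵐ[μ] μ[μ[iB * iA|mInf]|m₁] := (condExp_condExp_of_le hm1Inf hmInf).symm
    _ =ᵐ[μ] μ[iB * μ[iA|mInf]|m₁] :=
        condExp_congr_ae (condExp_mul_of_stronglyMeasurable_left hsmB hiBA hiA)
    _ =ᵐ[μ] μ[μ[iA|m₁] * iB|m₁] := by
        refine condExp_congr_ae ?_
        filter_upwards [h3 iA hiA (measurable_const.indicator hA)] with x hx
        simp only [Pi.mul_apply]
        rw [← hx, mul_comm]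
    _ =ᵐ[μ] μ[iA|m₁] * μ[iB|m₁] :=
        condExp_mul_of_stronglyMeasurable_left stronglyMeasurable_condExp
          (hiB.bdd_mul (stronglyMeasurable_condExp.mono hm₁).aestronglyMeasurable
            (norm_condexp_ind_le hm₁ hA')) hiB

end Aux15

/-- Theorem 3.10 (parts (i), (iv), (v)): for filtrations `F ⊂ G`, the immersion property
`G_t ⟂ F_∞ | F_t` is equivalent to (ii) `E[X|F_t] = E[X|G_t]` for all integrable
`F_∞`-measurable `X`, and to (iii) `E[X|F_t] = E[X|F_∞]` for all integrable
`G_t`-measurable `X`. -/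
theorem stmt15 {Ω : Type*} {mΩ : MeasurableSpace Ω}
    (μ : Measure Ω) [IsProbabilityMeasure μ]
    (F G : Filtration NNReal mΩ) (hFG : ∀ t, F t ≤ G t) :
    ((∀ t, CondIndepGiven μ (G t) (⨆ s : NNReal, (F s : MeasurableSpace Ω)) (F t)) ↔
      (∀ t, ∀ X : Ω → ℝ, Integrable X μ →
        Measurable[⨆ s : NNReal, (F s : MeasurableSpace Ω)] X →
        μ[X | F t] =ᵐ[μ] μ[X | G t])) ∧
    ((∀ t, CondIndepGiven μ (G t) (⨆ s : NNReal, (F s : MeasurableSpace Ω)) (F t)) ↔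
      (∀ t, ∀ X : Ω → ℝ, Integrable X μ → Measurable[G t] X →
        μ[X | F t] =ᵐ[μ] μ[X | ⨆ s : NNReal, (F s : MeasurableSpace Ω)])) := by
  have hmInf : (⨆ s : NNReal, (F s : MeasurableSpace Ω)) ≤ mΩ := iSup_le fun s => F.le s
  refine ⟨⟨fun h t X hXi hXm => Aux15.i_to_ii (hFG t) (G.le t) hmInf (h t) hXi hXm,
    fun h t => Aux15.ii_to_i (hFG t) (G.le t) hmInf (fun X hXi hXm => h t X hXi hXm)⟩,
    ⟨fun h t X hXi hXm => Aux15.i_to_iii (hFG t) (G.le t)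
      (le_iSup (fun s => (F s : MeasurableSpace Ω)) t) hmInf (h t) hXi hXm,
    fun h t => Aux15.iii_to_i (hFG t) (G.le t)
      (le_iSup (fun s => (F s : MeasurableSpace Ω)) t) hmInf
      (fun X hXi hXm => h t X hXi hXm)⟩⟩
end

section
/- On a probability space with filtrations F ⊂ G, suppose that for every t, G_t is conditionally independent of F_∞ given F_t. Then every bounded F-martingale is a G-martingale. -/
open MeasureTheory Filter Topology

/-- Auxiliary: the basic set-integral identity from conditional independence,
for indicators. -/
lemma aux_indicator {Ω : Type*} {m mΩ : MeasurableSpace Ω} (hm : m ≤ mΩ)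
    {μ : Measure Ω} [IsProbabilityMeasure μ]
    {A B : Set Ω} (hA : MeasurableSet[mΩ] A) (hB : MeasurableSet[mΩ] B)
    (h : μ[(A ∩ B).indicator (fun _ => (1 : ℝ)) | m] =ᵐ[μ]
      μ[A.indicator (fun _ => (1 : ℝ)) | m] * μ[B.indicator (fun _ => (1 : ℝ)) | m]) :
    ∫ x in B, A.indicator (fun _ => (1 : ℝ)) x ∂μ
      = ∫ x in B, (μ[A.indicator (fun _ => (1 : ℝ)) | m]) x ∂μ := by
  haveI : SigmaFinite (μ.trim hm) := by
    exact @IsFiniteMeasure.toSigmaFinite _ _ _ (isFiniteMeasure_trim hm)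
  have hiA : Integrable (A.indicator fun _ => (1 : ℝ)) μ := (integrable_const 1).indicator hA
  have hiB : Integrable (B.indicator fun _ => (1 : ℝ)) μ := (integrable_const 1).indicator hB
  have hiAB : Integrable ((A ∩ B).indicator fun _ => (1 : ℝ)) μ :=
    (integrable_const 1).indicator (hA.inter hB)
  -- name the condexp of the indicator of A
  set g := μ[A.indicator (fun _ => (1 : ℝ)) | m] with hg
  have hmul_eq : (fun x => g x * B.indicator (fun _ => (1 : ℝ)) x) = B.indicator g := by
    funext x
    by_cases hx : x ∈ B <;> simp [Set.indicator_apply, hx]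
  have hmul_eq' : (g * B.indicator (fun _ => (1 : ℝ))) = B.indicator g := hmul_eq
  have hmul_int : Integrable (g * B.indicator (fun _ => (1 : ℝ))) μ := by
    rw [hmul_eq']
    exact integrable_condExp.indicator hB
  have e3 : μ[g * B.indicator (fun _ => (1 : ℝ)) | m]
      =ᵐ[μ] g * μ[B.indicator (fun _ => (1 : ℝ)) | m] :=
    condExp_mul_of_stronglyMeasurable_left stronglyMeasurable_condExp hmul_int hiB
  have lhs1 : ∫ x, (μ[(A ∩ B).indicator (fun _ => (1 : ℝ)) | m]) x ∂μ
      = ∫ x, (A ∩ B).indicator (fun _ => (1 : ℝ)) x ∂μ := integral_condExp hm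
  have lhs2 : ∫ x, (A ∩ B).indicator (fun _ => (1 : ℝ)) x ∂μ
      = ∫ x in B, A.indicator (fun _ => (1 : ℝ)) x ∂μ := by
    rw [integral_indicator (hA.inter hB), setIntegral_indicator hA]
    simp [Set.inter_comm]
  have rhs1 : ∫ x, (g * μ[B.indicator (fun _ => (1 : ℝ)) | m]) x ∂μ
      = ∫ x, (g * B.indicator (fun _ => (1 : ℝ))) x ∂μ := by
    rw [← integral_congr_ae e3]
    exact integral_condExp hm
  have rhs2 : ∫ x, (g * B.indicator (fun _ => (1 : ℝ))) x ∂μ = ∫ x in B, g x ∂μ := by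
    rw [hmul_eq', integral_indicator hB]
  have := integral_congr_ae h
  rw [lhs1, lhs2, rhs1, rhs2] at this
  exact this

/-- Auxiliary: extend the set-integral identity from indicators to bounded
strongly measurable functions. -/
lemma aux_fun {Ω : Type*} {m mt mΩ : MeasurableSpace Ω} (hm : m ≤ mΩ) (hmt : mt ≤ mΩ)
    {μ : Measure Ω} [IsProbabilityMeasure μ]
    {B : Set Ω} (hB : MeasurableSet[mΩ] B)
    (hind : ∀ A : Set Ω, MeasurableSet[mt] A →
      ∫ x in B, A.indicator (fun _ => (1 : ℝ)) x ∂μ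
        = ∫ x in B, (μ[A.indicator (fun _ => (1 : ℝ)) | m]) x ∂μ)
    {f : Ω → ℝ} (hf : StronglyMeasurable[mt] f) {C : ℝ} (hC : ∀ ω, |f ω| ≤ C) :
    ∫ x in B, f x ∂μ = ∫ x in B, (μ[f | m]) x ∂μ := by
  haveI : SigmaFinite (μ.trim hm) := by
    exact @IsFiniteMeasure.toSigmaFinite _ _ _ (isFiniteMeasure_trim hm)
  -- step 1: the result for simple functions measurable w.r.t. mt
  have hP : ∀ g : @SimpleFunc Ω mt ℝ, Integrable g μ ∧
      ∫ x in B, g x ∂μ = ∫ x in B, (μ[⇑g | m]) x ∂μ := by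
    intro g
    refine @SimpleFunc.induction Ω ℝ mt _
      (fun g => Integrable (⇑g) μ ∧ ∫ x in B, g x ∂μ = ∫ x in B, (μ[⇑g | m]) x ∂μ) ?_ ?_ g
    · intro c s hs
      have hcoe : ⇑(@SimpleFunc.piecewise Ω ℝ mt s hs (@SimpleFunc.const Ω ℝ mt c)
          (@SimpleFunc.const Ω ℝ mt (0 : ℝ))) = s.indicator fun _ => c := by
        funext x
        by_cases hx : x ∈ s <;>
          simp [SimpleFunc.piecewise_apply, Set.indicator_apply, hx]
      have hsmul : (s.indicator fun _ => c) = c • s.indicator (fun _ => (1 : ℝ)) := by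
        funext x
        by_cases hx : x ∈ s <;> simp [Set.indicator_apply, hx]
      have hsm : MeasurableSet s := hmt _ hs
      have hint : Integrable (s.indicator fun _ => c) μ := (integrable_const c).indicator hsm
      constructor
      · rw [hcoe]; exact hint
      · rw [hcoe, hsmul]
        have hcond : μ[c • s.indicator (fun _ => (1 : ℝ)) | m]
            =ᵐ[μ] c • μ[s.indicator (fun _ => (1 : ℝ)) | m] := condExp_smul c _ _
        rw [setIntegral_congr_ae hB
          (hcond.mono fun x hx _ => hx)]
        have h1 : ∫ x in B, (c • s.indicator (fun _ => (1 : ℝ))) x ∂μ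
            = c * ∫ x in B, s.indicator (fun _ => (1 : ℝ)) x ∂μ := by
          simp [integral_smul, integral_const_mul]
        have h2 : ∫ x in B, (c • μ[s.indicator (fun _ => (1 : ℝ)) | m]) x ∂μ
            = c * ∫ x in B, (μ[s.indicator (fun _ => (1 : ℝ)) | m]) x ∂μ := by
          simp [integral_smul, integral_const_mul]
        rw [h1, h2, hind s hs]
    · intro g₁ g₂ _ h₁ h₂
      obtain ⟨hi₁, he₁⟩ := h₁
      obtain ⟨hi₂, he₂⟩ := h₂
      have hcoe : ⇑(g₁ + g₂) = ⇑g₁ + ⇑g₂ := rfl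
      constructor
      · rw [hcoe]; exact hi₁.add hi₂
      · rw [hcoe]
        have hcond : μ[⇑g₁ + ⇑g₂ | m] =ᵐ[μ] μ[⇑g₁ | m] + μ[⇑g₂ | m] := condExp_add hi₁ hi₂ _
        rw [setIntegral_congr_ae hB (hcond.mono fun x hx _ => hx)]
        simp only [Pi.add_apply]
        rw [integral_add hi₁.integrableOn hi₂.integrableOn,
          integral_add integrable_condExp.integrableOn integrable_condExp.integrableOn,
          he₁, he₂]
  -- step 2: approximation
  haveI : Nonempty Ω := MeasureTheory.Measure.nonempty_of_neZero μ
  have hC0 : 0 ≤ C := le_trans (abs_nonneg _) (hC Classical.ofNonempty)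
  set fn := fun n => hf.approxBounded C n with hfn
  have hfn_sm : ∀ n, StronglyMeasurable[mΩ] (fn n) := fun n =>
    ((hf.approxBounded C n).stronglyMeasurable).mono hmt
  have hfn_le : ∀ n x, ‖fn n x‖ ≤ C := fun n x => hf.norm_approxBounded_le hC0 n x
  have hfn_tendsto : ∀ x, Tendsto (fun n => fn n x) atTop (𝓝 (f x)) := fun x =>
    hf.tendsto_approxBounded_of_norm_le (by simpa using hC x)
  have hfsm : StronglyMeasurable[mΩ] f := hf.mono hmt
  have hfint : Integrable f μ :=
    Integrable.mono' (integrable_const C) hfsm.aestronglyMeasurable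
      (Filter.Eventually.of_forall fun x => by simpa using hC x)
  have hfnint : ∀ n, Integrable (fn n) μ := fun n =>
    Integrable.mono' (integrable_const C) (hfn_sm n).aestronglyMeasurable
      (Filter.Eventually.of_forall fun x => hfn_le n x)
  -- convergence of left-hand sides
  have hL : Tendsto (fun n => ∫ x in B, fn n x ∂μ) atTop (𝓝 (∫ x in B, f x ∂μ)) := by
    refine tendsto_integral_of_dominated_convergence (fun _ => C)
      (fun n => (hfn_sm n).aestronglyMeasurable.restrict)
      ((integrable_const C).restrict)
      (fun n => Filter.Eventually.of_forall fun x => hfn_le n x)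
      (Filter.Eventually.of_forall fun x => hfn_tendsto x)
  -- L¹ convergence of fn to f
  have hL1 : Tendsto (fun n => ∫ x, |fn n x - f x| ∂μ) atTop (𝓝 0) := by
    have h0 : (0 : ℝ) = ∫ _ : Ω, (0 : ℝ) ∂μ := by simp
    rw [h0]
    refine tendsto_integral_of_dominated_convergence (fun _ => C + C)
      (fun n => ((hfn_sm n).sub hfsm).aestronglyMeasurable.norm)
      (integrable_const (C + C))
      (fun n => Filter.Eventually.of_forall fun x => ?_)
      (Filter.Eventually.of_forall fun x => ?_)
    · have := hfn_le n x
      have h2 := hC x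
      simp only [Real.norm_eq_abs, abs_abs]
      calc |fn n x - f x| ≤ |fn n x| + |f x| := abs_sub _ _
        _ ≤ C + C := add_le_add (by simpa using this) h2
    · have : Tendsto (fun n => fn n x - f x) atTop (𝓝 (f x - f x)) :=
        (hfn_tendsto x).sub tendsto_const_nhds
      simpa using this.abs
  -- convergence of right-hand sides
  have hR : Tendsto (fun n => ∫ x in B, (μ[⇑(fn n) | m]) x ∂μ) atTop
      (𝓝 (∫ x in B, (μ[f | m]) x ∂μ)) := by
    rw [tendsto_iff_norm_sub_tendsto_zero]
    refine squeeze_zero (fun n => norm_nonneg _) (fun n => ?_) hL1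
    have hsub : ∫ x in B, (μ[⇑(fn n) | m]) x ∂μ - ∫ x in B, (μ[f | m]) x ∂μ
        = ∫ x in B, ((μ[⇑(fn n) | m]) x - (μ[f | m]) x) ∂μ :=
      (integral_sub integrable_condExp.integrableOn integrable_condExp.integrableOn).symm
    rw [Real.norm_eq_abs, hsub]
    have hcsub : (fun x => (μ[⇑(fn n) | m]) x - (μ[f | m]) x)
        =ᵐ[μ] μ[⇑(fn n) - f | m] := (condExp_sub (hfnint n) hfint _).symm
    calc |∫ x in B, ((μ[⇑(fn n) | m]) x - (μ[f | m]) x) ∂μ|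
        ≤ ∫ x in B, |(μ[⇑(fn n) | m]) x - (μ[f | m]) x| ∂μ := by simpa [Real.norm_eq_abs] using norm_integral_le_integral_norm (μ := μ.restrict B) fun x => (μ[⇑(fn n) | m]) x - (μ[f | m]) x
      _ ≤ ∫ x, |(μ[⇑(fn n) | m]) x - (μ[f | m]) x| ∂μ := by
          refine setIntegral_le_integral (integrable_condExp.sub integrable_condExp).abs
            (Filter.Eventually.of_forall fun x => abs_nonneg _)
      _ = ∫ x, |(μ[⇑(fn n) - f | m]) x| ∂μ := by
          refine integral_congr_ae (hcsub.mono fun x hx => by dsimp only at hx ⊢; rw [hx])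
      _ ≤ ∫ x, |(⇑(fn n) - f) x| ∂μ := integral_abs_condExp_le _
      _ = ∫ x, |fn n x - f x| ∂μ := rfl
  -- combine
  have heq : ∀ n, ∫ x in B, fn n x ∂μ = ∫ x in B, (μ[⇑(fn n) | m]) x ∂μ := fun n =>
    (hP (hf.approxBounded C n)).2
  exact tendsto_nhds_unique (by simpa only [heq] using hL) hR

/-- Theorem 3.10 ((i) ⇒ (ii)): under the immersion property (`G_t` conditionally
independent of `F_∞` given `F_t` for all `t`), every bounded `F`-martingale is a
`G`-martingale. -/
theorem stmt16 {Ω : Type*} {mΩ : MeasurableSpace Ω}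
    {μ : Measure Ω} [IsProbabilityMeasure μ]
    (F G : Filtration NNReal mΩ) (hFG : ∀ t, F t ≤ G t)
    (himm : ∀ t, CondIndepGiven μ (G t) (⨆ s : NNReal, (F s : MeasurableSpace Ω)) (F t))
    (M : NNReal → Ω → ℝ) (hM : Martingale M F μ)
    (C : ℝ) (hbdd : ∀ t ω, |M t ω| ≤ C) :
    Martingale M G μ := by
  refine ⟨fun i => (hM.stronglyMeasurable i).mono (hFG i), fun i j hij => ?_⟩
  haveI : SigmaFinite (μ.trim (G.le i)) :=
    @IsFiniteMeasure.toSigmaFinite _ _ _ (isFiniteMeasure_trim (G.le i))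
  have hkey : ∀ B : Set Ω, MeasurableSet[G i] B →
      ∫ x in B, M j x ∂μ = ∫ x in B, M i x ∂μ := by
    intro B hBGi
    have hBΩ : MeasurableSet[mΩ] B := (G.le i) _ hBGi
    have hind : ∀ A : Set Ω, MeasurableSet[F j] A →
        ∫ x in B, A.indicator (fun _ => (1 : ℝ)) x ∂μ
          = ∫ x in B, (μ[A.indicator (fun _ => (1 : ℝ)) | F i]) x ∂μ := by
      intro A hA
      have hAsup : MeasurableSet[⨆ s : NNReal, (F s : MeasurableSpace Ω)] A :=
        (le_iSup (fun s : NNReal => (F s : MeasurableSpace Ω)) j) _ hA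
      have h := himm i B A hBGi hAsup
      have h' : μ[(A ∩ B).indicator (fun _ => (1 : ℝ)) | F i] =ᵐ[μ]
          μ[A.indicator (fun _ => (1 : ℝ)) | F i] * μ[B.indicator (fun _ => (1 : ℝ)) | F i] := by
        rw [Set.inter_comm]
        exact h.trans (Filter.Eventually.of_forall fun x => mul_comm _ _)
      have hAΩ : MeasurableSet[mΩ] A := (F.le j) A hA
      exact aux_indicator (F.le i) hAΩ hBΩ h'
    have h1 : ∫ x in B, M j x ∂μ = ∫ x in B, (μ[M j | F i]) x ∂μ :=
      aux_fun (F.le i) (F.le j) hBΩ hind (hM.stronglyMeasurable j) (hbdd j)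
    have h2 : (μ[M j | F i]) =ᵐ[μ] M i := hM.condExp_ae_eq hij
    rw [h1]
    exact setIntegral_congr_ae hBΩ (h2.mono fun x hx _ => hx)
  have := ae_eq_condExp_of_forall_setIntegral_eq (G.le i) (hM.integrable j)
    (fun s _ _ => (hM.integrable i).integrableOn)
    (fun s hs _ => (hkey s hs).symm)
    (StronglyMeasurable.aestronglyMeasurable
      ((hM.stronglyMeasurable i).mono (hFG i)))
  exact this.symm
end

section
/- Let Y be a càdlàg process with values in a separable Fréchet space, with independent increments, and let F^Y be its natural filtration. Let G be a filtration with F^Y_t ⊂ G_t for all t. Then the following are equivalent: (i) for every t, G_t is conditionally independent of F^Y_∞ given F^Y_t; (ii) for every s ≥ 0, the increment process (Y_t − Y_s)_{t ≥ s} is independent of G_s. -/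
open MeasureTheory Filter Topology ProbabilityTheory
open scoped ENNReal

section Aux

variable {Ω : Type*}

private lemma sup_eq_generateFrom_inter (m₁ m₂ : MeasurableSpace Ω) :
    m₁ ⊔ m₂ = MeasurableSpace.generateFrom
      {s | ∃ a, MeasurableSet[m₁] a ∧ ∃ b, MeasurableSet[m₂] b ∧ s = a ∩ b} := by
  refine le_antisymm (sup_le ?_ ?_) (MeasurableSpace.generateFrom_le ?_)
  · intro a ha
    exact MeasurableSpace.measurableSet_generateFrom
      ⟨a, ha, Set.univ, MeasurableSet.univ, (Set.inter_univ a).symm⟩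
  · intro b hb
    exact MeasurableSpace.measurableSet_generateFrom
      ⟨Set.univ, MeasurableSet.univ, b, hb, (Set.univ_inter b).symm⟩
  · rintro s ⟨a, ha, b, hb, rfl⟩
    exact ((le_sup_left : m₁ ≤ m₁ ⊔ m₂) a ha).inter ((le_sup_right : m₂ ≤ m₁ ⊔ m₂) b hb)

private lemma isPiSystem_inter_sets (m₁ m₂ : MeasurableSpace Ω) :
    IsPiSystem {s : Set Ω | ∃ a, MeasurableSet[m₁] a ∧ ∃ b, MeasurableSet[m₂] b ∧ s = a ∩ b} := by
  rintro s ⟨a₁, ha₁, b₁, hb₁, rfl⟩ t ⟨a₂, ha₂, b₂, hb₂, rfl⟩ -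
  refine ⟨a₁ ∩ a₂, ha₁.inter ha₂, b₁ ∩ b₂, hb₁.inter hb₂, ?_⟩
  ext x; simp only [Set.mem_inter_iff]; tauto

private lemma indep_sup_left {mΩ : MeasurableSpace Ω} {μ : Measure Ω}
    [IsProbabilityMeasure μ] {m₁ m₂ m₃ : MeasurableSpace Ω}
    (h₁ : m₁ ≤ mΩ) (h₂ : m₂ ≤ mΩ) (h₃ : m₃ ≤ mΩ)
    (h : Indep m₂ (m₁ ⊔ m₃) μ) (h' : Indep m₁ m₃ μ) :
    Indep (m₁ ⊔ m₂) m₃ μ := by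
  refine IndepSets.indep (sup_le h₁ h₂) h₃ (isPiSystem_inter_sets m₁ m₂)
    MeasurableSpace.isPiSystem_measurableSet (sup_eq_generateFrom_inter m₁ m₂)
    (@MeasurableSpace.generateFrom_measurableSet Ω m₃).symm ?_
  rintro s t ⟨a, ha, b, hb, rfl⟩ ht
  rw [Indep_iff] at h h'
  have h1 : μ (a ∩ b ∩ t) = μ b * (μ a * μ t) := by
    rw [show a ∩ b ∩ t = b ∩ (a ∩ t) by ext x; simp only [Set.mem_inter_iff]; tauto]
    rw [h b (a ∩ t) hb (((le_sup_left : m₁ ≤ m₁ ⊔ m₃) a ha).inter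
      ((le_sup_right : m₃ ≤ m₁ ⊔ m₃) t ht)), h' a t ha ht]
  have h2 : μ (a ∩ b) = μ b * μ a := by
    rw [Set.inter_comm, h b a hb ((le_sup_left : m₁ ≤ m₁ ⊔ m₃) a ha)]
  refine Eventually.of_forall fun _ => ?_
  simp only [Kernel.const_apply]
  rw [h1, h2, mul_assoc]

variable {E : Type*} {mE : MeasurableSpace E}

private lemma comap_sub_le [Sub E] [MeasurableSub₂ E] (f g : Ω → E) :
    MeasurableSpace.comap (fun ω => f ω - g ω) mE
      ≤ MeasurableSpace.comap f mE ⊔ MeasurableSpace.comap g mE := by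
  rw [← measurable_iff_comap_le]
  exact Measurable.sub (measurable_iff_comap_le.mpr le_sup_left)
    (measurable_iff_comap_le.mpr le_sup_right)

private lemma comap_add_le [Add E] [MeasurableAdd₂ E] (f g : Ω → E) :
    MeasurableSpace.comap (fun ω => f ω + g ω) mE
      ≤ MeasurableSpace.comap f mE ⊔ MeasurableSpace.comap g mE := by
  rw [← measurable_iff_comap_le]
  exact Measurable.add (measurable_iff_comap_le.mpr le_sup_left)
    (measurable_iff_comap_le.mpr le_sup_right)

private lemma condexp_indicator_mem_Icc {m : MeasurableSpace Ω} {mΩ : MeasurableSpace Ω}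
    {μ : Measure Ω} [IsProbabilityMeasure μ] (hm : m ≤ mΩ) {B : Set Ω}
    (hB : MeasurableSet[mΩ] B) :
    ∀ᵐ x ∂μ, (μ[B.indicator (fun _ => (1:ℝ))|m]) x ∈ Set.Icc (0:ℝ) 1 := by
  have h0 : 0 ≤ᵐ[μ] μ[B.indicator (fun _ => (1:ℝ))|m] :=
    condExp_nonneg (Eventually.of_forall fun x =>
      Set.indicator_nonneg (fun _ _ => zero_le_one) x)
  have h1 : μ[B.indicator (fun _ => (1:ℝ))|m] ≤ᵐ[μ] μ[(fun _ => (1:ℝ))|m] :=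
    condExp_mono (Integrable.indicator (μ := μ) (integrable_const (1:ℝ)) hB) (integrable_const (1:ℝ))
      (Eventually.of_forall fun x => Set.indicator_le_self' (fun _ _ => zero_le_one) x)
  rw [condExp_const hm] at h1
  filter_upwards [h0, h1] with x hx0 hx1
  exact ⟨hx0, hx1⟩

private lemma norm_condexp_indicator_le_one {m : MeasurableSpace Ω} {mΩ : MeasurableSpace Ω}
    {μ : Measure Ω} [IsProbabilityMeasure μ] (hm : m ≤ mΩ) {B : Set Ω}
    (hB : MeasurableSet[mΩ] B) :
    ∀ᵐ x ∂μ, ‖(μ[B.indicator (fun _ => (1:ℝ))|m]) x‖ ≤ 1 := by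
  filter_upwards [condexp_indicator_mem_Icc hm hB] with x hx
  rw [Real.norm_eq_abs]
  exact abs_le.mpr ⟨by linarith [hx.1], hx.2⟩

private lemma setIntegral_condexp_symm {m : MeasurableSpace Ω} {mΩ : MeasurableSpace Ω}
    {μ : Measure Ω} [IsProbabilityMeasure μ] (hm : m ≤ mΩ)
    {B C : Set Ω} (hB : MeasurableSet[mΩ] B) (hC : MeasurableSet[mΩ] C) :
    ∫ x in C, (μ[B.indicator (fun _ => (1:ℝ))|m]) x ∂μ
      = ∫ x in B, (μ[C.indicator (fun _ => (1:ℝ))|m]) x ∂μ := by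
  have key : ∀ {D D' : Set Ω}, MeasurableSet[mΩ] D → MeasurableSet[mΩ] D' →
      ∫ x in D', (μ[D.indicator (fun _ => (1:ℝ))|m]) x ∂μ
        = ∫ x, (μ[D.indicator (fun _ => (1:ℝ))|m]) x
            * (μ[D'.indicator (fun _ => (1:ℝ))|m]) x ∂μ := by
    intro D D' hD hD'
    set g := μ[D.indicator (fun _ => (1:ℝ))|m] with hg
    have hgind : (g * D'.indicator (fun _ => (1:ℝ))) = D'.indicator g := by
      funext x; by_cases hx : x ∈ D' <;>
        simp [Set.indicator_apply, hx]
    have hInt : Integrable (g * D'.indicator (fun _ => (1:ℝ))) μ := by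
      rw [hgind]; exact Integrable.indicator (μ := μ) integrable_condExp hD'
    have := hInt
    have hmul := condExp_stronglyMeasurable_mul_of_bound hm stronglyMeasurable_condExp
      (Integrable.indicator (μ := μ) (integrable_const (1:ℝ)) hD') 1 (norm_condexp_indicator_le_one hm hD)
    calc ∫ x in D', g x ∂μ
        = ∫ x, (g * D'.indicator (fun _ => (1:ℝ))) x ∂μ := by
          rw [hgind, integral_indicator (μ := μ) hD']
      _ = ∫ x, (μ[g * D'.indicator (fun _ => (1:ℝ))|m]) x ∂μ :=
          (integral_condExp (f := g * D'.indicator (fun _ => (1:ℝ))) hm).symm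
      _ = ∫ x, (g * μ[D'.indicator (fun _ => (1:ℝ))|m]) x ∂μ := integral_congr_ae hmul
      _ = ∫ x, g x * (μ[D'.indicator (fun _ => (1:ℝ))|m]) x ∂μ := rfl
  rw [key hB hC, key hC hB]
  simp_rw [mul_comm]

end Aux

/-- Characterization (vi) of compatibility: for a càdlàg process `Y` with independent
increments taking values in a separable Fréchet space (a Polish locally convex space) and
a filtration `G ⊇ F^Y`, immersion of `F^Y` in `G` is equivalent to the increments
`(Y_t − Y_s)_{t ≥ s}` being independent of `G_s` for every `s`. -/
theorem stmt17 {Ω E : Type*} {mΩ : MeasurableSpace Ω}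
    [AddCommGroup E] [Module ℝ E] [TopologicalSpace E] [IsTopologicalAddGroup E]
    [ContinuousSMul ℝ E] [LocallyConvexSpace ℝ E] [PolishSpace E]
    [mE : MeasurableSpace E] [BorelSpace E]
    (μ : Measure Ω) [IsProbabilityMeasure μ]
    (Y : NNReal → Ω → E) (hYm : ∀ t, Measurable (Y t))
    (hcadlag : ∀ ω,
      (∀ t, ContinuousWithinAt (fun s => Y s ω) (Set.Ici t) t) ∧
      (∀ t : NNReal, 0 < t → ∃ L, Tendsto (fun s => Y s ω) (nhdsWithin t (Set.Iio t)) (𝓝 L)))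
    (hindep : ∀ s t : NNReal, s ≤ t →
      ProbabilityTheory.Indep
        (MeasurableSpace.comap (fun ω => Y t ω - Y s ω) mE)
        (⨆ u : NNReal, ⨆ _ : u ≤ s, MeasurableSpace.comap (Y u) mE) μ)
    (G : Filtration NNReal mΩ)
    (hFG : ∀ t, (⨆ u : NNReal, ⨆ _ : u ≤ t, MeasurableSpace.comap (Y u) mE) ≤ G t) :
    (∀ t, CondIndepGiven μ (G t)
        (⨆ u : NNReal, MeasurableSpace.comap (Y u) mE)
        (⨆ u : NNReal, ⨆ _ : u ≤ t, MeasurableSpace.comap (Y u) mE)) ↔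
    (∀ s : NNReal,
      ProbabilityTheory.Indep
        (⨆ t : NNReal, ⨆ _ : s ≤ t, MeasurableSpace.comap (fun ω => Y t ω - Y s ω) mE)
        (G s) μ) := by
  classical
  set F : NNReal → MeasurableSpace Ω :=
    fun t => ⨆ u : NNReal, ⨆ _ : u ≤ t, MeasurableSpace.comap (Y u) mE with hF_def
  set I : NNReal → MeasurableSpace Ω :=
    fun s => ⨆ t : NNReal, ⨆ _ : s ≤ t,
      MeasurableSpace.comap (fun ω => Y t ω - Y s ω) mE with hI_def
  have hYsub : ∀ s t : NNReal, Measurable fun ω => Y t ω - Y s ω :=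
    fun s t => (hYm t).sub (hYm s)
  have hF_le : ∀ t, F t ≤ mΩ := fun t => iSup₂_le fun u _ => (hYm u).comap_le
  have hFinfLe : (⨆ u : NNReal, MeasurableSpace.comap (Y u) mE) ≤ mΩ := iSup_le fun u => (hYm u).comap_le
  have hI_le : ∀ s, I s ≤ mΩ := fun s => iSup₂_le fun t _ => (hYsub s t).comap_le
  have hcomapF : ∀ {u t : NNReal}, u ≤ t → MeasurableSpace.comap (Y u) mE ≤ F t :=
    fun {u t} h => le_iSup₂ (f := fun u (_ : u ≤ t) => MeasurableSpace.comap (Y u) mE) u h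
  have hincrF : ∀ {u v t : NNReal}, u ≤ t → v ≤ t →
      MeasurableSpace.comap (fun ω => Y u ω - Y v ω) mE ≤ F t :=
    fun {u v t} hu hv => (comap_sub_le _ _).trans (sup_le (hcomapF hu) (hcomapF hv))
  have hF_mono : ∀ {s t : NNReal}, s ≤ t → F s ≤ F t :=
    fun {s t} h => iSup₂_le fun u hu => hcomapF (hu.trans h)
  have hFLeFinf : ∀ t, F t ≤ (⨆ u : NNReal, MeasurableSpace.comap (Y u) mE) :=
    fun t => iSup₂_le fun u _ => le_iSup (fun u => MeasurableSpace.comap (Y u) mE) u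
  have hILeFinf : ∀ s, I s ≤ (⨆ u : NNReal, MeasurableSpace.comap (Y u) mE) := fun s => iSup₂_le fun t _ =>
    (comap_sub_le _ _).trans (sup_le
      (le_iSup (fun u => MeasurableSpace.comap (Y u) mE) t)
      (le_iSup (fun u => MeasurableSpace.comap (Y u) mE) s))
  have hcomapI : ∀ {s t : NNReal}, s ≤ t →
      MeasurableSpace.comap (fun ω => Y t ω - Y s ω) mE ≤ I s :=
    fun {s t} h => le_iSup₂
      (f := fun t (_ : s ≤ t) => MeasurableSpace.comap (fun ω => Y t ω - Y s ω) mE) t h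
  have hFinfEq : ∀ t, (⨆ u : NNReal, MeasurableSpace.comap (Y u) mE) = F t ⊔ I t := by
    intro t
    refine le_antisymm (iSup_le fun u => ?_) (sup_le (hFLeFinf t) (hILeFinf t))
    rcases le_total u t with h | h
    · exact (hcomapF h).trans le_sup_left
    · have heq : MeasurableSpace.comap (Y u) mE
          = MeasurableSpace.comap (fun ω => (Y u ω - Y t ω) + Y t ω) mE := by
        congr 1; funext ω; rw [sub_add_cancel]
      rw [heq]
      exact (comap_add_le _ _).trans (sup_le ((hcomapI h).trans le_sup_right)
        ((hcomapF le_rfl).trans le_sup_left))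
  -- Independence of the increment σ-algebra from the past
  have key1 : ∀ s, ProbabilityTheory.Indep (I s) (F s) μ := by
    intro s
    set m : Finset {t : NNReal // s ≤ t} → MeasurableSpace Ω :=
      fun S => ⨆ t ∈ S, MeasurableSpace.comap (fun ω => Y (t : NNReal) ω - Y s ω) mE
      with hm_def
    have hm_le : ∀ S, m S ≤ mΩ := fun S => iSup₂_le fun t _ => (hYsub s t).comap_le
    have hm_mono : ∀ {S T}, S ⊆ T → m S ≤ m T := fun {S T} hST =>
      iSup₂_le fun t ht => le_iSup₂
        (f := fun t (_ : t ∈ T) =>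
          MeasurableSpace.comap (fun ω => Y (t : NNReal) ω - Y s ω) mE) t (hST ht)
    have hm_indep : ∀ S, ProbabilityTheory.Indep (m S) (F s) μ := by
      intro S
      induction S using Finset.induction_on_max with
      | empty =>
        have hbot : m ∅ = ⊥ := by simp [hm_def]
        rw [hbot, ProbabilityTheory.Indep_iff]
        intro t1 t2 h1 h2
        rcases MeasurableSpace.measurableSet_bot_iff.mp h1 with rfl | rfl
        · simp
        · simp [Set.univ_inter, measure_univ, one_mul]
      | insert a S hlt IH =>
        rcases S.eq_empty_or_nonempty with rfl | hne
        · refine ProbabilityTheory.indep_of_indep_of_le_left (hindep s a a.2) ?_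
          refine iSup₂_le fun t ht => ?_
          obtain rfl : t = a := by simpa using ht
          exact le_rfl
        · set b := S.max' hne with hb_def
          have hb_mem : b ∈ S := S.max'_mem hne
          have hba : (b : NNReal) ≤ (a : NNReal) := le_of_lt (hlt b hb_mem)
          have hcomapb : MeasurableSpace.comap (fun ω => Y (b : NNReal) ω - Y s ω) mE ≤ m S :=
            le_iSup₂ (f := fun t (_ : t ∈ S) =>
              MeasurableSpace.comap (fun ω => Y (t : NNReal) ω - Y s ω) mE) b hb_mem
          have hmS_le_Fb : m S ≤ F (b : NNReal) := iSup₂_le fun t ht =>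
            hincrF (Subtype.coe_le_coe.mpr (S.le_max' t ht)) b.2
          have hsup_le : m S ⊔ F s ≤ F (b : NNReal) := sup_le hmS_le_Fb (hF_mono b.2)
          have hind2 : ProbabilityTheory.Indep
              (MeasurableSpace.comap (fun ω => Y (a : NNReal) ω - Y (b : NNReal) ω) mE)
              (m S ⊔ F s) μ :=
            ProbabilityTheory.indep_of_indep_of_le_right (hindep b a hba) hsup_le
          have main := indep_sup_left (hm_le S) ((hYsub b a).comap_le) (hF_le s) hind2 IH
          refine ProbabilityTheory.indep_of_indep_of_le_left main ?_
          refine iSup₂_le fun t ht => ?_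
          rcases Finset.mem_insert.mp ht with rfl | htS
          · have heq : MeasurableSpace.comap (fun ω => Y (t : NNReal) ω - Y s ω) mE
                = MeasurableSpace.comap
                  (fun ω => (Y (t : NNReal) ω - Y (b : NNReal) ω)
                    + (Y (b : NNReal) ω - Y s ω)) mE := by
              congr 1; funext ω; rw [sub_add_sub_cancel]
            rw [heq]
            exact (comap_add_le _ _).trans
              (sup_le le_sup_right (hcomapb.trans le_sup_left))
          · exact (le_iSup₂ (f := fun t (_ : t ∈ S) =>
              MeasurableSpace.comap (fun ω => Y (t : NNReal) ω - Y s ω) mE) t htS).trans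
              le_sup_left
    have hIs_eq : I s = ⨆ S, m S := by
      apply le_antisymm
      · refine iSup₂_le fun t ht => ?_
        refine le_trans ?_ (le_iSup m {⟨t, ht⟩})
        exact le_iSup₂ (f := fun u (_ : u ∈ ({⟨t, ht⟩} : Finset {t : NNReal // s ≤ t})) =>
          MeasurableSpace.comap (fun ω => Y (u : NNReal) ω - Y s ω) mE) ⟨t, ht⟩
          (Finset.mem_singleton_self _)
      · exact iSup_le fun S => iSup₂_le fun t _ => hcomapI t.2
    rw [hIs_eq]
    exact ProbabilityTheory.indep_iSup_of_directed_le hm_indep hm_le (hF_le s)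
      (fun S T => ⟨S ∪ T, hm_mono Finset.subset_union_left, hm_mono Finset.subset_union_right⟩)
  constructor
  · -- (i) → (ii)
    intro hi s
    rw [ProbabilityTheory.Indep_iff]
    intro t1 t2 h1 h2
    have hB : MeasurableSet[mΩ] t1 := hI_le s _ h1
    have hA : MeasurableSet[mΩ] t2 := G.le s _ h2
    have hBf : MeasurableSet[⨆ u : NNReal, MeasurableSpace.comap (Y u) mE] t1 :=
      hILeFinf s _ h1
    have hcd := hi s t2 t1 h2 hBf
    have hconst : μ[t1.indicator (fun _ => (1:ℝ))|F s] =ᵐ[μ] fun _ => (μ t1).toReal := by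
      have h := condExp_indep_eq (hI_le s) (hF_le s)
        (f := t1.indicator fun _ => (1:ℝ))
        (stronglyMeasurable_const.indicator h1) (key1 s)
      have hμ : ∫ x, t1.indicator (fun _ => (1:ℝ)) x ∂μ = (μ t1).toReal := by
        rw [integral_indicator_const (μ := μ) (1:ℝ) hB, smul_eq_mul, mul_one, measureReal_def]
      rw [hμ] at h
      exact h
    have hlhs : ∫ x, (μ[(t2 ∩ t1).indicator (fun _ => (1:ℝ))|F s]) x ∂μ
        = (μ (t2 ∩ t1)).toReal := by
      rw [integral_condExp (hF_le s),
        integral_indicator_const (μ := μ) (1:ℝ) (hA.inter hB), smul_eq_mul, mul_one, measureReal_def]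
    have hrhs : ∫ x, (μ[t2.indicator (fun _ => (1:ℝ))|F s]
        * μ[t1.indicator (fun _ => (1:ℝ))|F s]) x ∂μ = (μ t2).toReal * (μ t1).toReal := by
      have hcongr : (μ[t2.indicator (fun _ => (1:ℝ))|F s]
          * μ[t1.indicator (fun _ => (1:ℝ))|F s]) =ᵐ[μ]
          fun x => (μ[t2.indicator (fun _ => (1:ℝ))|F s]) x * (μ t1).toReal :=
        hconst.mono fun x hx => by simp only [Pi.mul_apply, hx]
      rw [integral_congr_ae hcongr, integral_mul_const,
        integral_condExp (hF_le s), integral_indicator_const (μ := μ) (1:ℝ) hA,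
        smul_eq_mul, mul_one, measureReal_def]
    have heq := integral_congr_ae hcd
    rw [hlhs, hrhs] at heq
    have hfin : (μ (t1 ∩ t2)).toReal = (μ t1 * μ t2).toReal := by
      rw [Set.inter_comm, ENNReal.toReal_mul, heq, mul_comm]
    exact (ENNReal.toReal_eq_toReal_iff' (measure_ne_top μ _)
      (ENNReal.mul_ne_top (measure_ne_top μ _) (measure_ne_top μ _))).mp hfin
  · -- (ii) → (i)
    intro hii t A B hA hB
    have hGle := G.le t
    have hAamb : MeasurableSet[mΩ] A := hGle _ hA
    have hBamb : MeasurableSet[mΩ] B := hFinfLe _ hB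
    -- Key: conditional expectations w.r.t. `G t` and `F t` agree on `F_∞`-measurable sets
    have hK : ∀ D : Set Ω, MeasurableSet[⨆ u : NNReal, MeasurableSpace.comap (Y u) mE] D →
        μ[D.indicator (fun _ => (1:ℝ))|G t] =ᵐ[μ] μ[D.indicator (fun _ => (1:ℝ))|F t] := by
      intro D hD
      have hDamb : MeasurableSet[mΩ] D := hFinfLe _ hD
      refine (ae_eq_condExp_of_forall_setIntegral_eq (G.le t)
        (Integrable.indicator (μ := μ) (integrable_const (1:ℝ)) hDamb)
        (fun s _ _ => integrable_condExp.integrableOn)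
        (fun C hC _ => ?_)
        (StronglyMeasurable.aestronglyMeasurable
          (stronglyMeasurable_condExp.mono (hFG t)))).symm
      have hCamb : MeasurableSet[mΩ] C := hGle _ hC
      rw [setIntegral_condexp_symm (hF_le t) hDamb hCamb]
      have hh_nonneg : 0 ≤ᵐ[μ] μ[C.indicator (fun _ => (1:ℝ))|F t] :=
        condExp_nonneg (Eventually.of_forall fun x =>
          Set.indicator_nonneg (fun _ _ => zero_le_one) x)
      have hh_int : Integrable (μ[C.indicator (fun _ => (1:ℝ))|F t]) μ := integrable_condExp
      have hint_univ : ∫ x, (μ[C.indicator (fun _ => (1:ℝ))|F t]) x ∂μ = (μ C).toReal := by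
        rw [integral_condExp (hF_le t), integral_indicator_const (μ := μ) (1:ℝ) hCamb,
          smul_eq_mul, mul_one, measureReal_def]
      have hlint_univ : ∫⁻ x, ENNReal.ofReal ((μ[C.indicator (fun _ => (1:ℝ))|F t]) x) ∂μ
          = μ C := by
        rw [← ofReal_integral_eq_lintegral_ofReal hh_int hh_nonneg, hint_univ,
          ENNReal.ofReal_toReal (measure_ne_top μ _)]
      haveI hfin1 : IsFiniteMeasure
          (μ.withDensity fun x => ENNReal.ofReal ((μ[C.indicator (fun _ => (1:ℝ))|F t]) x)) :=
        isFiniteMeasure_withDensity (by rw [hlint_univ]; exact measure_ne_top μ _)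
      have hsetint : ∀ {a : Set Ω}, MeasurableSet[F t] a →
          ∫⁻ x in a, ENNReal.ofReal ((μ[C.indicator (fun _ => (1:ℝ))|F t]) x) ∂μ
            = μ (a ∩ C) := by
        intro a ha
        have haamb : MeasurableSet[mΩ] a := hF_le t _ ha
        have h1 : ∫ x in a, (μ[C.indicator (fun _ => (1:ℝ))|F t]) x ∂μ
            = (μ (a ∩ C)).toReal := by
          rw [setIntegral_condExp (hF_le t)
            (Integrable.indicator (μ := μ) (integrable_const (1:ℝ)) hCamb) ha,
            setIntegral_indicator (μ := μ) hCamb, setIntegral_const, smul_eq_mul, mul_one, measureReal_def]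
        rw [← ofReal_integral_eq_lintegral_ofReal hh_int.restrict
          (ae_restrict_of_ae hh_nonneg), h1, ENNReal.ofReal_toReal (measure_ne_top μ _)]
      have hmeasext : (μ.restrict C).trim hFinfLe
          = ((μ.withDensity fun x =>
              ENNReal.ofReal ((μ[C.indicator (fun _ => (1:ℝ))|F t]) x)).trim hFinfLe) := by
        refine ext_of_generate_finite
          {s | ∃ a, MeasurableSet[F t] a ∧ ∃ b, MeasurableSet[I t] b ∧ s = a ∩ b}
          (by rw [hFinfEq t]; exact sup_eq_generateFrom_inter (F t) (I t))
          (isPiSystem_inter_sets (F t) (I t)) ?_ ?_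
        · rintro u ⟨a, ha, b, hb, rfl⟩
          have haamb : MeasurableSet[mΩ] a := hF_le t _ ha
          have hbamb2 : MeasurableSet[mΩ] b := hI_le t _ hb
          have habF : MeasurableSet[⨆ u : NNReal, MeasurableSpace.comap (Y u) mE] (a ∩ b) :=
            ((hFLeFinf t) _ ha).inter ((hILeFinf t) _ hb)
          rw [trim_measurableSet_eq hFinfLe habF, trim_measurableSet_eq hFinfLe habF,
            Measure.restrict_apply (haamb.inter hbamb2),
            withDensity_apply _ (haamb.inter hbamb2)]
          have hIndep := (ProbabilityTheory.Indep_iff _ _ _).mp (hii t)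
          have hLHS : μ (a ∩ b ∩ C) = μ b * μ (a ∩ C) := by
            rw [show a ∩ b ∩ C = b ∩ (a ∩ C) by ext x; simp only [Set.mem_inter_iff]; tauto]
            exact hIndep b (a ∩ C) hb (((hFG t) _ ha).inter hC)
          have hfuneq : (fun x => (a ∩ b).indicator
                (fun x => ENNReal.ofReal ((μ[C.indicator (fun _ => (1:ℝ))|F t]) x)) x)
              = fun x => b.indicator (1 : Ω → ℝ≥0∞) x
                * a.indicator (fun x =>
                    ENNReal.ofReal ((μ[C.indicator (fun _ => (1:ℝ))|F t]) x)) x := by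
            funext x
            by_cases hxa : x ∈ a <;> by_cases hxb : x ∈ b <;>
              simp [Set.indicator_apply, hxa, hxb]
          have hRHS : ∫⁻ x in a ∩ b,
              ENNReal.ofReal ((μ[C.indicator (fun _ => (1:ℝ))|F t]) x) ∂μ
              = μ b * μ (a ∩ C) := by
            rw [← lintegral_indicator (haamb.inter hbamb2)]
            calc ∫⁻ x, (a ∩ b).indicator
                  (fun x => ENNReal.ofReal ((μ[C.indicator (fun _ => (1:ℝ))|F t]) x)) x ∂μ
                = ∫⁻ x, b.indicator (1 : Ω → ℝ≥0∞) x
                    * a.indicator (fun x =>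
                        ENNReal.ofReal ((μ[C.indicator (fun _ => (1:ℝ))|F t]) x)) x ∂μ := by
                  rw [lintegral_congr fun x => congrFun hfuneq x]
              _ = (∫⁻ x, b.indicator (1 : Ω → ℝ≥0∞) x ∂μ)
                    * ∫⁻ x, a.indicator (fun x =>
                        ENNReal.ofReal ((μ[C.indicator (fun _ => (1:ℝ))|F t]) x)) x ∂μ :=
                  ProbabilityTheory.lintegral_mul_eq_lintegral_mul_lintegral_of_independent_measurableSpace
                    (hI_le t) (G.le t) (hii t)
                    (measurable_const.indicator hb)
                    ((ENNReal.measurable_ofReal.comp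
                      (stronglyMeasurable_condExp.mono (hFG t)).measurable).indicator
                      ((hFG t) _ ha))
              _ = μ b * μ (a ∩ C) := by
                  rw [lintegral_indicator_one hbamb2, lintegral_indicator haamb, hsetint ha]
          rw [hLHS, hRHS]
        · rw [trim_measurableSet_eq hFinfLe MeasurableSet.univ,
            trim_measurableSet_eq hFinfLe MeasurableSet.univ,
            Measure.restrict_apply_univ,
            withDensity_apply _ MeasurableSet.univ, Measure.restrict_univ, hlint_univ]
      -- apply the measure equality on `D`
      have happ : μ (D ∩ C)
          = ∫⁻ x in D, ENNReal.ofReal ((μ[C.indicator (fun _ => (1:ℝ))|F t]) x) ∂μ := by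
        calc μ (D ∩ C) = μ.restrict C D := (Measure.restrict_apply hDamb).symm
          _ = (μ.restrict C).trim hFinfLe D := (trim_measurableSet_eq hFinfLe hD).symm
          _ = ((μ.withDensity fun x =>
                ENNReal.ofReal ((μ[C.indicator (fun _ => (1:ℝ))|F t]) x)).trim hFinfLe) D := by
              rw [hmeasext]
          _ = (μ.withDensity fun x =>
                ENNReal.ofReal ((μ[C.indicator (fun _ => (1:ℝ))|F t]) x)) D :=
              trim_measurableSet_eq hFinfLe hD
          _ = ∫⁻ x in D, ENNReal.ofReal ((μ[C.indicator (fun _ => (1:ℝ))|F t]) x) ∂μ :=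
              withDensity_apply _ hDamb
      have hDint : ∫ x in D, (μ[C.indicator (fun _ => (1:ℝ))|F t]) x ∂μ
          = (μ (D ∩ C)).toReal := by
        rw [integral_eq_lintegral_of_nonneg_ae (ae_restrict_of_ae hh_nonneg)
          hh_int.aestronglyMeasurable.restrict, ← happ]
      rw [hDint, setIntegral_indicator (μ := μ) hDamb, setIntegral_const, smul_eq_mul,
        mul_one, measureReal_def, Set.inter_comm]
    -- conclude conditional independence
    have hprodind : (A ∩ B).indicator (fun _ => (1:ℝ))
        = A.indicator (fun _ => (1:ℝ)) * B.indicator (fun _ => (1:ℝ)) := by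
      funext x
      by_cases hxa : x ∈ A <;> by_cases hxb : x ∈ B <;>
        simp [Set.indicator_apply, hxa, hxb]
    have hboundA : ∀ᵐ x ∂μ, ‖A.indicator (fun _ => (1:ℝ)) x‖ ≤ 1 :=
      Eventually.of_forall fun x => by
        by_cases hxa : x ∈ A <;> simp [Set.indicator_apply, hxa]
    have hmul1 : μ[A.indicator (fun _ => (1:ℝ)) * B.indicator (fun _ => (1:ℝ))|G t]
        =ᵐ[μ] A.indicator (fun _ => (1:ℝ)) * μ[B.indicator (fun _ => (1:ℝ))|G t] :=
      condExp_stronglyMeasurable_mul_of_bound (G.le t)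
        (stronglyMeasurable_const.indicator hA)
        (Integrable.indicator (μ := μ) (integrable_const (1:ℝ)) hBamb) 1 hboundA
    have hstep2 : A.indicator (fun _ => (1:ℝ)) * μ[B.indicator (fun _ => (1:ℝ))|G t]
        =ᵐ[μ] μ[B.indicator (fun _ => (1:ℝ))|F t] * A.indicator (fun _ => (1:ℝ)) :=
      (hK B hB).mono fun x hx => by simp only [Pi.mul_apply, hx, mul_comm]
    have hmul2 : μ[μ[B.indicator (fun _ => (1:ℝ))|F t] * A.indicator (fun _ => (1:ℝ))|F t]
        =ᵐ[μ] μ[B.indicator (fun _ => (1:ℝ))|F t] * μ[A.indicator (fun _ => (1:ℝ))|F t] :=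
      condExp_stronglyMeasurable_mul_of_bound (hF_le t) stronglyMeasurable_condExp
        (Integrable.indicator (μ := μ) (integrable_const (1:ℝ)) hAamb) 1
        (norm_condexp_indicator_le_one (hF_le t) hBamb)
    calc μ[(A ∩ B).indicator (fun _ => (1:ℝ))|F t]
        = μ[A.indicator (fun _ => (1:ℝ)) * B.indicator (fun _ => (1:ℝ))|F t] := by
          rw [hprodind]
      _ =ᵐ[μ] μ[μ[A.indicator (fun _ => (1:ℝ)) * B.indicator (fun _ => (1:ℝ))|G t]|F t] :=
          (condExp_condExp_of_le (hFG t) (G.le t)).symm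
      _ =ᵐ[μ] μ[μ[B.indicator (fun _ => (1:ℝ))|F t] * A.indicator (fun _ => (1:ℝ))|F t] :=
          condExp_congr_ae (hmul1.trans hstep2)
      _ =ᵐ[μ] μ[B.indicator (fun _ => (1:ℝ))|F t] * μ[A.indicator (fun _ => (1:ℝ))|F t] :=
          hmul2
      _ = μ[A.indicator (fun _ => (1:ℝ))|F t] * μ[B.indicator (fun _ => (1:ℝ))|F t] :=
          mul_comm _ _
end
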